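/- arXiv:1012.3235 — 7 statements merged into one kernel-verified Lean document; each statement's English description precedes it below -/
import Mathlib

section
/- The quotient space of the d-fold Cartesian product (S²)^d by the action of the symmetric group S_d permuting coordinates is homeomorphic to the d-dimensional complex projective space ℂP^d. -/
/-- The unit 2-sphere, as a subset of Euclidean 3-space. -/
def S2 : Set (EuclideanSpace ℝ (Fin 3)) := Metric.sphere 0 1

/-- The relation on `(S²)^d` identifying tuples that differ by a coordinate permutation. -/
def permRel (d : ℕ) (x y : Fin d → S2) : Prop :=
  ∃ π : Equiv.Perm (Fin d), x ∘ π = y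

/-- Complex projective `n`-space, as the quotient of the nonzero vectors of `ℂ^{n+1}` by the
scalar action of `ℂˣ`. -/
abbrev CP (n : ℕ) : Type :=
  Quot (fun v w : {v : Fin (n + 1) → ℂ // v ≠ 0} => ∃ c : ℂˣ, (c : ℂ) • v.val = w.val)

noncomputable section
namespace SPCP
open Polynomial

/-- height (third coordinate) -/
def ht (x : S2) : ℝ := x.1 2
/-- first two coordinates, as a complex number -/
def cx (x : S2) : ℂ := ⟨x.1 0, x.1 1⟩

lemma norm1 (x : S2) : (x.1 0)^2 + (x.1 1)^2 + (x.1 2)^2 = 1 := by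
  have hx := x.2
  simp only [S2, Metric.mem_sphere, EuclideanSpace.dist_eq] at hx
  rw [Real.sqrt_eq_one] at hx
  simpa [Fin.sum_univ_three, PiLp.zero_apply, Real.dist_eq, sub_zero, sq_abs] using hx

lemma normSq_cx (x : S2) : Complex.normSq (cx x) = 1 - (ht x)^2 := by
  have := norm1 x
  simp only [Complex.normSq_mk, cx, ht] at *
  nlinarith

lemma ht_le_one (x : S2) : ht x ≤ 1 := by
  have := norm1 x; unfold ht; nlinarith
lemma neg_one_le_ht (x : S2) : -1 ≤ ht x := by
  have := norm1 x; unfold ht; nlinarith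

def north : S2 := ⟨WithLp.toLp 2 (![0,0,1] : Fin 3 → ℝ), by
  simp only [S2, Metric.mem_sphere, EuclideanSpace.dist_eq]
  rw [Real.sqrt_eq_one]
  simp [Fin.sum_univ_three, PiLp.zero_apply, PiLp.toLp_apply, Real.dist_eq, sub_zero, sq_abs]⟩

lemma ht_north : ht north = 1 := rfl

lemma eq_north (x : S2) (h : ht x = 1) : x = north := by
  have h1 := norm1 x
  apply Subtype.ext; ext i
  unfold ht at h
  fin_cases i
  · show x.1 0 = 0; nlinarith
  · show x.1 1 = 0; nlinarith
  · exact h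

/-- the stereographic coordinate -/
def zf (x : S2) : ℂ := cx x / ((1 - ht x : ℝ) : ℂ)

/-- The classifying map to `Option ℂ`. -/
def t (x : S2) : Option ℂ := if ht x = 1 then none else some (zf x)

/-- inverse stereographic projection -/
def pt (z : ℂ) : S2 := ⟨WithLp.toLp 2 (![2*z.re/(Complex.normSq z + 1), 2*z.im/(Complex.normSq z + 1),
    (Complex.normSq z - 1)/(Complex.normSq z + 1)] : Fin 3 → ℝ), by
  have hn : Complex.normSq z + 1 > 0 := by have := Complex.normSq_nonneg z; linarith
  have hq : z.re*z.re + z.im*z.im = Complex.normSq z := by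
    rw [Complex.normSq_apply]
  simp only [S2, Metric.mem_sphere, EuclideanSpace.dist_eq]
  rw [Real.sqrt_eq_one]
  simp only [Fin.sum_univ_three, Matrix.cons_val_zero, Matrix.cons_val_one, Matrix.head_cons,
    Matrix.cons_val_two, Matrix.tail_cons, PiLp.zero_apply, PiLp.toLp_apply, Real.dist_eq, sub_zero, sq_abs]
  have : (2*z.re/(Complex.normSq z + 1))^2 + (2*z.im/(Complex.normSq z + 1))^2
      + ((Complex.normSq z - 1)/(Complex.normSq z + 1))^2 = 1 := by
    field_simp
    nlinarith
  exact this⟩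

lemma ht_pt (z : ℂ) : ht (pt z) = (Complex.normSq z - 1)/(Complex.normSq z + 1) := rfl

lemma ht_pt_ne (z : ℂ) : ht (pt z) ≠ 1 := by
  have hn : Complex.normSq z + 1 > 0 := by have := Complex.normSq_nonneg z; linarith
  rw [ht_pt]
  intro h
  rw [div_eq_one_iff_eq hn.ne'] at h
  linarith

lemma t_pt (z : ℂ) : t (pt z) = some z := by
  have hn : Complex.normSq z + 1 > 0 := by have := Complex.normSq_nonneg z; linarith
  rw [t, if_neg (ht_pt_ne z)]
  congr 1
  rw [zf]
  have h1 : (1 - ht (pt z) : ℝ) = 2/(Complex.normSq z + 1) := by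
    rw [ht_pt]; field_simp; ring
  rw [h1, div_eq_iff (Complex.ofReal_ne_zero.2 (by positivity))]
  apply Complex.ext
  · show 2*z.re/(Complex.normSq z + 1) = (z * ((2/(Complex.normSq z + 1):ℝ):ℂ)).re
    rw [Complex.mul_re, Complex.ofReal_re, Complex.ofReal_im]
    ring
  · show 2*z.im/(Complex.normSq z + 1) = (z * ((2/(Complex.normSq z + 1):ℝ):ℂ)).im
    rw [Complex.mul_im, Complex.ofReal_re, Complex.ofReal_im]
    ring

lemma t_injective : Function.Injective t := by
  intro x y hxy
  unfold t at hxy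
  by_cases hx : ht x = 1 <;> by_cases hy : ht y = 1
  · rw [eq_north x hx, eq_north y hy]
  · simp [hx, hy] at hxy
  · simp [hx, hy] at hxy
  · rw [if_neg hx, if_neg hy] at hxy
    have hxy := Option.some_injective _ hxy
    have hx1 : (1:ℝ) - ht x ≠ 0 := sub_ne_zero.2 (Ne.symm hx)
    have hy1 : (1:ℝ) - ht y ≠ 0 := sub_ne_zero.2 (Ne.symm hy)
    unfold zf at hxy
    rw [div_eq_div_iff (Complex.ofReal_ne_zero.2 hx1) (Complex.ofReal_ne_zero.2 hy1)] at hxy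
    -- take normSq of both sides
    have hns := congrArg Complex.normSq hxy
    rw [map_mul, map_mul, normSq_cx, normSq_cx, Complex.normSq_ofReal, Complex.normSq_ofReal] at hns
    have hxle := ht_le_one x; have hyle := ht_le_one y
    have hxge := neg_one_le_ht x; have hyge := neg_one_le_ht y
    have key : (1-ht x)*(1-ht y)*(2*ht x - 2*ht y) = 0 := by linear_combination hns
    have hht : ht x = ht y := by
      rcases mul_eq_zero.1 key with h | h
      · exact absurd h (mul_ne_zero hx1 hy1)
      · linarith
    have hcx : cx x = cx y := by
      rw [hht] at hxy
      exact mul_right_cancel₀ (Complex.ofReal_ne_zero.2 hy1) hxy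
    apply Subtype.ext; ext i
    fin_cases i
    · show x.1 0 = y.1 0; exact congrArg Complex.re hcx
    · show x.1 1 = y.1 1; exact congrArg Complex.im hcx
    · exact hht


/-! ### sections into ℂ² and linear factors -/

/-- local section valid away from the north pole -/
def g1 (x : S2) : ℂ × ℂ := (cx x, ((1 - ht x : ℝ) : ℂ))
/-- local section valid away from the south pole -/
def g2 (x : S2) : ℂ × ℂ := (((1 + ht x : ℝ) : ℂ), (starRingEnd ℂ) (cx x))
/-- the canonical (discontinuous) section -/
def s (x : S2) : ℂ × ℂ := if ht x = 1 then ((1:ℂ), (0:ℂ)) else g1 x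

lemma s_ne_zero (x : S2) : s x ≠ 0 := by
  unfold s
  split_ifs with h
  · intro hc; exact one_ne_zero (congrArg Prod.fst hc)
  · intro hc
    have : ((1 - ht x : ℝ) : ℂ) = 0 := congrArg Prod.snd hc
    rw [Complex.ofReal_eq_zero, sub_eq_zero] at this
    exact h this.symm

lemma g1_ne_zero {x : S2} (h : ht x ≠ 1) : g1 x ≠ 0 := by
  intro hc
  have : ((1 - ht x : ℝ) : ℂ) = 0 := congrArg Prod.snd hc
  rw [Complex.ofReal_eq_zero, sub_eq_zero] at this
  exact h this.symm

lemma g2_ne_zero {x : S2} (h : ht x ≠ -1) : g2 x ≠ 0 := by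
  intro hc
  have : ((1 + ht x : ℝ) : ℂ) = 0 := congrArg Prod.fst hc
  rw [Complex.ofReal_eq_zero] at this
  apply h; linarith

/-- the cross identity between the two local sections -/
lemma cross_g1_g2 (x : S2) : (g1 x).1 * (g2 x).2 = (g2 x).1 * (g1 x).2 := by
  have h := normSq_cx x
  show cx x * (starRingEnd ℂ) (cx x) = _
  rw [Complex.mul_conj, h]
  rw [g1, g2]
  push_cast
  ring

lemma cross_s_g1 (x : S2) (h : ht x ≠ 1) : (s x).1 * (g1 x).2 = (g1 x).1 * (s x).2 := by
  rw [s, if_neg h]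

lemma cross_s_g2 (x : S2) : (s x).1 * (g2 x).2 = (g2 x).1 * (s x).2 := by
  rw [s]
  split_ifs with h
  · show 1 * (starRingEnd ℂ) (cx x) = ((1 + ht x : ℝ) : ℂ) * 0
    have hx : x = north := eq_north x h
    have : cx x = 0 := by rw [hx]; apply Complex.ext <;> simp [cx, north]
    simp [this]
  · exact cross_g1_g2 x

/-- pairs that are nonzero and have vanishing cross-determinant are proportional -/
lemma pair_prop {v w : ℂ × ℂ} (hv : v ≠ 0) (hw : w ≠ 0) (h : v.1 * w.2 = w.1 * v.2) :
    ∃ c : ℂˣ, (c : ℂ) • v = w := by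
  by_cases h2 : v.2 = 0
  · have h1 : v.1 ≠ 0 := fun hc => hv (Prod.ext hc h2)
    have hw2 : w.2 = 0 := by
      have h0 : v.1 * w.2 = 0 := by rw [h, h2, mul_zero]
      exact (mul_eq_zero.1 h0).resolve_left h1
    have hw1 : w.1 ≠ 0 := fun hc => hw (Prod.ext hc hw2)
    refine ⟨Units.mk0 (w.1 / v.1) (div_ne_zero hw1 h1), Prod.ext ?_ ?_⟩
    · show w.1 / v.1 * v.1 = w.1
      field_simp
    · show w.1 / v.1 * v.2 = w.2
      rw [h2, hw2, mul_zero]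
  · have hw2 : w.2 ≠ 0 := by
      intro hc
      have h0 : w.1 * v.2 = 0 := by rw [← h, hc, mul_zero]
      exact hw (Prod.ext ((mul_eq_zero.1 h0).resolve_right h2) hc)
    refine ⟨Units.mk0 (w.2 / v.2) (div_ne_zero hw2 h2), Prod.ext ?_ ?_⟩
    · show w.2 / v.2 * v.1 = w.1
      rw [div_mul_eq_mul_div, mul_comm, h, mul_div_assoc, div_self h2, mul_one]
    · show w.2 / v.2 * v.2 = w.2
      field_simp


/-! ### linear factors and the product polynomial -/

/-- the homogeneous linear factor attached to a pair -/
def fac (v : ℂ × ℂ) : Polynomial ℂ := C v.2 * X - C v.1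

lemma fac_eq_linear (v : ℂ × ℂ) : fac v = C v.2 * X + C (-v.1) := by
  rw [fac, map_neg, sub_eq_add_neg]

lemma fac_ne_zero {v : ℂ × ℂ} (hv : v ≠ 0) : fac v ≠ 0 := by
  by_cases h2 : v.2 = 0
  · have h1 : v.1 ≠ 0 := fun hc => hv (Prod.ext hc h2)
    rw [fac, h2, map_zero, zero_mul, zero_sub, neg_ne_zero, Ne, ← C_0]
    exact fun hc => h1 (C_injective hc)
  · intro hc
    have := natDegree_linear (b := -v.1) h2
    rw [← fac_eq_linear, hc, natDegree_zero] at this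
    exact one_ne_zero this.symm

lemma natDegree_fac_le (v : ℂ × ℂ) : (fac v).natDegree ≤ 1 :=
  fac_eq_linear v ▸ natDegree_linear_le

lemma natDegree_fac {v : ℂ × ℂ} (h2 : v.2 ≠ 0) : (fac v).natDegree = 1 :=
  fac_eq_linear v ▸ natDegree_linear h2

lemma natDegree_fac0 {v : ℂ × ℂ} (h2 : v.2 = 0) : (fac v).natDegree = 0 := by
  rw [fac, h2, map_zero, zero_mul, zero_sub, natDegree_neg, natDegree_C]

lemma roots_fac {v : ℂ × ℂ} (h2 : v.2 ≠ 0) : (fac v).roots = {v.1 / v.2} := by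
  have : fac v = C v.2 * (X - C (v.1 / v.2)) := by
    rw [fac, mul_sub, ← map_mul, mul_div_cancel₀ _ h2]
  rw [this, roots_C_mul _ h2, roots_X_sub_C]

lemma roots_fac0 {v : ℂ × ℂ} (h2 : v.2 = 0) : (fac v).roots = 0 := by
  rw [fac, h2, map_zero, zero_mul, zero_sub, ← map_neg, roots_C]

lemma fac_smul (c : ℂ) (v : ℂ × ℂ) : fac (c • v) = C c * fac v := by
  show C (c * v.2) * X - C (c * v.1) = _
  rw [fac]
  rw [map_mul, map_mul]
  ring

/-- the product polynomial of a tuple of sections -/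
def Pol {d : ℕ} (w : Fin d → ℂ × ℂ) : Polynomial ℂ := ∏ i, fac (w i)

lemma Pol_ne_zero {d : ℕ} {w : Fin d → ℂ × ℂ} (hw : ∀ i, w i ≠ 0) : Pol w ≠ 0 := by
  rw [Pol, Finset.prod_ne_zero_iff]
  exact fun i _ => fac_ne_zero (hw i)

lemma natDegree_Pol_le {d : ℕ} (w : Fin d → ℂ × ℂ) : (Pol w).natDegree ≤ d := by
  rw [Pol]
  refine le_trans (natDegree_prod_le Finset.univ fun i => fac (w i)) ?_
  calc ∑ i, (fac (w i)).natDegree ≤ ∑ _i : Fin d, 1 :=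
        Finset.sum_le_sum fun i _ => natDegree_fac_le (w i)
    _ = d := by simp

/-- the section applied coordinatewise -/
def sp {d : ℕ} (p : Fin d → S2) : Fin d → ℂ × ℂ := fun i => s (p i)

lemma sp_ne_zero {d : ℕ} (p : Fin d → S2) : ∀ i, sp p i ≠ 0 := fun i => s_ne_zero (p i)

/-- the coefficient vector -/
def vec {d : ℕ} (w : Fin d → ℂ × ℂ) : Fin (d + 1) → ℂ := fun k => (Pol w).coeff k

lemma vec_ne_zero {d : ℕ} {w : Fin d → ℂ × ℂ} (hw : ∀ i, w i ≠ 0) : vec w ≠ 0 := by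
  intro hc
  have hd := natDegree_Pol_le w
  have : vec w ⟨(Pol w).natDegree, Nat.lt_succ_of_le hd⟩ = 0 := by rw [hc]; rfl
  rw [vec] at this
  exact leadingCoeff_ne_zero.2 (Pol_ne_zero hw) this


/-! ### the key root-multiset computation -/

lemma t_eq_none {x : S2} (h : ht x = 1) : t x = none := if_pos h
lemma t_eq_some {x : S2} (h : ht x ≠ 1) : t x = some (zf x) := if_neg h

lemma s_north {x : S2} (h : ht x = 1) : s x = ((1:ℂ), (0:ℂ)) := if_pos h
lemma s_not_north {x : S2} (h : ht x ≠ 1) : s x = g1 x := if_neg h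

lemma roots_s_fac {x : S2} (h : ht x ≠ 1) : (fac (s x)).roots = {zf x} := by
  rw [s_not_north h]
  have h2 : (g1 x).2 ≠ 0 := by
    rw [g1, Ne, Complex.ofReal_eq_zero, sub_eq_zero]
    exact fun hc => h hc.symm
  rw [roots_fac h2]
  rfl

lemma key : ∀ {d : ℕ} (p : Fin d → S2),
    Multiset.map t ↑(List.ofFn p)
      = (Pol (sp p)).roots.map some
        + Multiset.replicate (d - (Pol (sp p)).natDegree) none := by
  intro d
  induction d with
  | zero =>
    intro p
    simp [Pol, List.ofFn_zero]
  | succ d ih =>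
    intro p
    have hP : Pol (sp p) = fac (s (p 0)) * Pol (sp (fun i => p i.succ)) := by
      rw [Pol, Fin.prod_univ_succ]; rfl
    have hf0 : fac (s (p 0)) ≠ 0 := fac_ne_zero (s_ne_zero (p 0))
    have hPr : Pol (sp (fun i => p i.succ)) ≠ 0 := Pol_ne_zero (sp_ne_zero _)
    have hmul : fac (s (p 0)) * Pol (sp (fun i => p i.succ)) ≠ 0 := mul_ne_zero hf0 hPr
    have hroots : (Pol (sp p)).roots
        = (fac (s (p 0))).roots + (Pol (sp (fun i => p i.succ))).roots := by
      rw [hP, Polynomial.roots_mul hmul]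
    have hdeg : (Pol (sp p)).natDegree
        = (fac (s (p 0))).natDegree + (Pol (sp (fun i => p i.succ))).natDegree := by
      rw [hP, Polynomial.natDegree_mul hf0 hPr]
    have hdr : (Pol (sp (fun i => p i.succ))).natDegree ≤ d := natDegree_Pol_le _
    have hofn : Multiset.map t ↑(List.ofFn p)
        = t (p 0) ::ₘ Multiset.map t ↑(List.ofFn (fun i => p i.succ)) := by
      rw [List.ofFn_succ]
      rfl
    rw [hofn, ih]
    by_cases h0 : ht (p 0) = 1
    · have hs : s (p 0) = ((1:ℂ), (0:ℂ)) := s_north h0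
      have hfr : (fac (s (p 0))).roots = 0 := roots_fac0 (by rw [hs])
      have hfd : (fac (s (p 0))).natDegree = 0 := natDegree_fac0 (by rw [hs])
      rw [t_eq_none h0, hroots, hfr, zero_add, hdeg, hfd, zero_add,
        Nat.succ_sub hdr, Multiset.replicate_succ]
      rw [← Multiset.singleton_add, ← Multiset.singleton_add, add_left_comm]
    · have h2 : (s (p 0)).2 ≠ 0 := by
        rw [s_not_north h0, g1, Ne, Complex.ofReal_eq_zero, sub_eq_zero]
        exact fun hc => h0 hc.symm
      have hfr : (fac (s (p 0))).roots = {zf (p 0)} := roots_s_fac h0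
      have hfd : (fac (s (p 0))).natDegree = 1 := natDegree_fac h2
      rw [t_eq_some h0, hroots, hfr, hdeg, hfd]
      have harith : d + 1 - (1 + (Pol (sp (fun i => p i.succ))).natDegree)
          = d - (Pol (sp (fun i => p i.succ))).natDegree := by omega
      rw [harith, Multiset.singleton_add, Multiset.map_cons, Multiset.cons_add]


/-! ### extracting a permutation from a list permutation -/

lemma exists_perm_of_ofFn_perm {α : Type*} :
    ∀ {d : ℕ} {x y : Fin d → α}, (List.ofFn x).Perm (List.ofFn y) →
      ∃ σ : Equiv.Perm (Fin d), x ∘ σ = y := by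
  intro d
  induction d with
  | zero =>
    intro x y _
    exact ⟨1, funext fun i => i.elim0⟩
  | succ d ih =>
    intro x y hp
    have hy0 : y 0 ∈ List.ofFn x := by
      rw [List.Perm.mem_iff hp, List.mem_ofFn]
      exact ⟨0, rfl⟩
    rw [List.mem_ofFn] at hy0
    obtain ⟨j, hj⟩ := hy0
    set τ : Equiv.Perm (Fin (d+1)) := Equiv.swap 0 j with hτ
    have hx0 : (x ∘ τ) 0 = y 0 := by
      simp [hτ, Equiv.swap_apply_left, hj]
    have hperm : (List.ofFn (x ∘ τ)).Perm (List.ofFn y) :=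
      (Equiv.Perm.ofFn_comp_perm τ x).trans hp
    rw [List.ofFn_succ, List.ofFn_succ, hx0] at hperm
    have htail := hperm.cons_inv
    obtain ⟨σ', hσ'⟩ := ih htail
    refine ⟨(Equiv.Perm.decomposeFin.symm (0, σ')).trans τ, funext fun i => ?_⟩
    induction i using Fin.cases with
    | zero =>
      show x (τ (Equiv.Perm.decomposeFin.symm (0, σ') 0)) = y 0
      rw [Equiv.Perm.decomposeFin_symm_apply_zero]
      exact hx0
    | succ i =>
      show x (τ (Equiv.Perm.decomposeFin.symm (0, σ') i.succ)) = y i.succ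
      rw [Equiv.Perm.decomposeFin_symm_apply_succ]
      have := congrFun hσ' i
      simpa using this


/-! ### the map to projective space -/

def relCP (n : ℕ) (v w : {v : Fin (n + 1) → ℂ // v ≠ 0}) : Prop :=
  ∃ c : ℂˣ, (c : ℂ) • v.val = w.val

lemma relCP_equivalence (n : ℕ) : Equivalence (relCP n) where
  refl v := ⟨1, by simp⟩
  symm {v w} := by
    rintro ⟨c, hc⟩
    exact ⟨c⁻¹, by rw [← hc, smul_smul]; simp⟩
  trans {u v w} := by
    rintro ⟨c, hc⟩ ⟨c', hc'⟩
    exact ⟨c' * c, by rw [← hc', ← hc, smul_smul]; norm_cast⟩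

lemma permRel_equivalence (d : ℕ) : Equivalence (permRel d) where
  refl x := ⟨1, by funext i; simp⟩
  symm {x y} := by
    rintro ⟨π, hπ⟩
    exact ⟨π⁻¹, by funext i; rw [← hπ]; simp⟩
  trans {x y z} := by
    rintro ⟨π, hπ⟩ ⟨ρ, hρ⟩
    refine ⟨ρ.trans π, ?_⟩
    funext i
    rw [← hρ, ← hπ]
    rfl

def Phi {d : ℕ} (p : Fin d → S2) : CP d :=
  Quot.mk (relCP d) ⟨vec (sp p), vec_ne_zero (sp_ne_zero p)⟩

lemma Pol_perm {d : ℕ} {p q : Fin d → S2} (h : permRel d p q) : Pol (sp q) = Pol (sp p) := by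
  obtain ⟨π, hπ⟩ := h
  rw [← hπ, Pol, Pol]
  exact Equiv.prod_comp π (fun i => fac (s (p i)))

lemma Phi_sound {d : ℕ} {p q : Fin d → S2} (h : permRel d p q) : Phi p = Phi q := by
  unfold Phi
  congr 1
  apply Subtype.ext
  show vec (sp p) = vec (sp q)
  funext k
  rw [vec, vec, Pol_perm h]

lemma Phi_inj {d : ℕ} {p q : Fin d → S2} (h : Phi p = Phi q) : permRel d p q := by
  have hrel : relCP d ⟨vec (sp p), vec_ne_zero (sp_ne_zero p)⟩
      ⟨vec (sp q), vec_ne_zero (sp_ne_zero q)⟩ :=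
    ((relCP_equivalence d).eqvGen_iff).1 (Quot.eq.1 h)
  obtain ⟨c, hc⟩ := hrel
  have hPol : (c : ℂ) • Pol (sp p) = Pol (sp q) := by
    apply Polynomial.ext; intro k
    rw [Polynomial.coeff_smul, smul_eq_mul]
    by_cases hk : k < d + 1
    · have := congrFun hc ⟨k, hk⟩
      simpa [vec] using this
    · push_neg at hk
      have h1 : (Pol (sp p)).coeff k = 0 :=
        Polynomial.coeff_eq_zero_of_natDegree_lt (lt_of_le_of_lt (natDegree_Pol_le _) (by omega))
      have h2 : (Pol (sp q)).coeff k = 0 :=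
        Polynomial.coeff_eq_zero_of_natDegree_lt (lt_of_le_of_lt (natDegree_Pol_le _) (by omega))
      rw [h1, h2, mul_zero]
  have hroots : (Pol (sp p)).roots = (Pol (sp q)).roots := by
    rw [← hPol, Polynomial.roots_smul_nonzero _ c.ne_zero]
  have hdeg : (Pol (sp p)).natDegree = (Pol (sp q)).natDegree := by
    rw [← hPol, Polynomial.smul_eq_C_mul, Polynomial.natDegree_C_mul c.ne_zero]
  have hmaps : Multiset.map t ↑(List.ofFn p) = Multiset.map t ↑(List.ofFn q) := by
    rw [key p, key q, hroots, hdeg]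
  have hlists : (List.ofFn p : Multiset S2) = ↑(List.ofFn q) :=
    Multiset.map_injective t_injective hmaps
  exact exists_perm_of_ofFn_perm (Multiset.coe_eq_coe.1 hlists)


/-! ### surjectivity -/

lemma count_none_map_some {α : Type*} [DecidableEq α] (M : Multiset α) :
    Multiset.count (none : Option α) (M.map some) = 0 := by
  rw [Multiset.count_eq_zero]
  simp

lemma list_ofFn_dite {α β : Type*} {d : ℕ} (L : List β) (hm : L.length ≤ d) (A : β → α) (b : α) :
    List.ofFn (fun i : Fin d => if h : (i:ℕ) < L.length then A (L.get ⟨i, h⟩) else b)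
      = L.map A ++ List.replicate (d - L.length) b := by
  apply List.ext_getElem
  · simp; omega
  · intro n h1 h2
    rw [List.getElem_ofFn]
    by_cases hn : n < L.length
    · rw [List.getElem_append_left (by simpa using hn)]
      simp [hn]
    · rw [List.getElem_append_right (by simpa using hn)]
      simp [hn]

lemma Phi_surj {d : ℕ} (w : {v : Fin (d + 1) → ℂ // v ≠ 0}) :
    ∃ p : Fin d → S2, Phi p = Quot.mk (relCP d) w := by
  classical
  set Q : Polynomial ℂ := ∑ k : Fin (d + 1), C (w.1 k) * X ^ (k : ℕ) with hQdef
  have hQcoeff : ∀ k : Fin (d + 1), Q.coeff k = w.1 k := by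
    intro k
    rw [hQdef, Polynomial.finset_sum_coeff]
    simp only [Polynomial.coeff_C_mul, Polynomial.coeff_X_pow, mul_ite, mul_one, mul_zero]
    simp only [Fin.val_eq_val]
    rw [Finset.sum_ite_eq]
    simp
  have hQd : Q.natDegree ≤ d := by
    rw [Polynomial.natDegree_le_iff_coeff_eq_zero]
    intro N hN
    rw [hQdef, Polynomial.finset_sum_coeff]
    apply Finset.sum_eq_zero
    intro i _
    rw [Polynomial.coeff_C_mul, Polynomial.coeff_X_pow, if_neg (by omega), mul_zero]
  have hQ0 : Q ≠ 0 := by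
    obtain ⟨k, hk⟩ := Function.ne_iff.1 w.2
    intro hc
    apply hk
    rw [← hQcoeff k, hc, Polynomial.coeff_zero]
    simp
  have hQcard : Q.roots.card = Q.natDegree :=
    (Polynomial.splits_iff_card_roots).1 (IsAlgClosed.splits Q)
  set L : List ℂ := Q.roots.toList with hLdef
  have hLlen : L.length = Q.natDegree := by
    rw [hLdef, Multiset.length_toList, hQcard]
  have hLd : L.length ≤ d := hLlen ▸ hQd
  set p : Fin d → S2 :=
    fun i => if h : (i : ℕ) < L.length then pt (L.get ⟨i, h⟩) else north with hpdef
  -- the list of classifying values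
  have htp : (fun i => t (p i))
      = fun i : Fin d => if h : (i : ℕ) < L.length then some (L.get ⟨i, h⟩) else none := by
    funext i
    simp only [hpdef]
    by_cases h : (i : ℕ) < L.length
    · rw [dif_pos h, dif_pos h, t_pt]
    · rw [dif_neg h, dif_neg h, t_eq_none ht_north]
  have hms : Multiset.map t ↑(List.ofFn p)
      = Multiset.map some Q.roots + Multiset.replicate (d - Q.natDegree) none := by
    rw [Multiset.map_coe, List.map_ofFn]
    have : t ∘ p = fun i => t (p i) := rfl
    rw [this, htp, list_ofFn_dite L hLd some none, ← Multiset.coe_add,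
      Multiset.coe_replicate, ← Multiset.map_coe, hLlen, hLdef, Multiset.coe_toList]
  -- compare with the key computation
  have hkey := key p
  rw [hms] at hkey
  have hcount := congrArg (Multiset.count (none : Option ℂ)) hkey
  simp only [Multiset.count_add, count_none_map_some, Multiset.count_replicate_self,
    zero_add] at hcount
  rw [← hcount] at hkey
  have hrootseq : (Pol (sp p)).roots = Q.roots := by
    have := add_right_cancel hkey
    exact Multiset.map_injective (Option.some_injective ℂ) this.symm
  -- factorizations
  have hPcard : (Pol (sp p)).roots.card = (Pol (sp p)).natDegree :=
    (Polynomial.splits_iff_card_roots).1 (IsAlgClosed.splits _)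
  have hPfac := Polynomial.C_leadingCoeff_mul_prod_multiset_X_sub_C hPcard
  have hQfac := Polynomial.C_leadingCoeff_mul_prod_multiset_X_sub_C hQcard
  rw [hrootseq] at hPfac
  have hP0 : Pol (sp p) ≠ 0 := Pol_ne_zero (sp_ne_zero p)
  have hlcP : (Pol (sp p)).leadingCoeff ≠ 0 := Polynomial.leadingCoeff_ne_zero.2 hP0
  have hlcQ : Q.leadingCoeff ≠ 0 := Polynomial.leadingCoeff_ne_zero.2 hQ0
  set M := (Multiset.map (fun a => X - C a) Q.roots).prod with hM
  set a := (Pol (sp p)).leadingCoeff with ha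
  set b := Q.leadingCoeff with hb
  refine ⟨p, Quot.sound ⟨Units.mk0 (b * a⁻¹) (mul_ne_zero hlcQ (inv_ne_zero hlcP)), ?_⟩⟩
  funext k
  show b * a⁻¹ * vec (sp p) k = w.1 k
  rw [vec, ← hQcoeff k, ← hPfac, ← hQfac, Polynomial.coeff_C_mul, Polynomial.coeff_C_mul]
  field_simp


/-! ### topology: T2 for CP -/

lemma relCP_iff_cross {n : ℕ} (v w : {v : Fin (n + 1) → ℂ // v ≠ 0}) :
    relCP n v w ↔ ∀ i j, v.1 i * w.1 j = v.1 j * w.1 i := by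
  constructor
  · rintro ⟨c, hc⟩ i j
    have hi : w.1 i = c * v.1 i := by rw [← hc]; rfl
    have hj : w.1 j = c * v.1 j := by rw [← hc]; rfl
    rw [hi, hj]; ring
  · intro h
    obtain ⟨j0, hj0⟩ := Function.ne_iff.1 v.2
    have hj0' : v.1 j0 ≠ 0 := by simpa using hj0
    have hcval : ∀ i, w.1 i = (w.1 j0 / v.1 j0) * v.1 i := by
      intro i
      have := h i j0
      field_simp
      linear_combination -this
    have hc0 : w.1 j0 / v.1 j0 ≠ 0 := by
      intro hc
      apply w.2
      funext i
      rw [hcval i, hc, zero_mul]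
      rfl
    exact ⟨Units.mk0 _ hc0, funext fun i => (hcval i).symm⟩

lemma isClosed_cross (n : ℕ) :
    IsClosed {q : {v : Fin (n + 1) → ℂ // v ≠ 0} × {v : Fin (n + 1) → ℂ // v ≠ 0} |
      ∀ i j, q.1.1 i * q.2.1 j = q.1.1 j * q.2.1 i} := by
  have : {q : {v : Fin (n + 1) → ℂ // v ≠ 0} × {v : Fin (n + 1) → ℂ // v ≠ 0} |
      ∀ i j, q.1.1 i * q.2.1 j = q.1.1 j * q.2.1 i}
      = ⋂ i, ⋂ j, {q | q.1.1 i * q.2.1 j = q.1.1 j * q.2.1 i} := by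
    ext q; simp
  rw [this]
  refine isClosed_iInter fun i => isClosed_iInter fun j => isClosed_eq ?_ ?_
  · exact ((continuous_apply i).comp (continuous_subtype_val.comp continuous_fst)).mul
      ((continuous_apply j).comp (continuous_subtype_val.comp continuous_snd))
  · exact ((continuous_apply j).comp (continuous_subtype_val.comp continuous_fst)).mul
      ((continuous_apply i).comp (continuous_subtype_val.comp continuous_snd))

/-- scaling as a self-map of the nonzero vectors -/
def smV (n : ℕ) (c : ℂˣ) (v : {v : Fin (n + 1) → ℂ // v ≠ 0}) : {v : Fin (n + 1) → ℂ // v ≠ 0} :=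
  ⟨(c : ℂ) • v.1, smul_ne_zero c.ne_zero v.2⟩

lemma continuous_smV (n : ℕ) (c : ℂˣ) : Continuous (smV n c) :=
  Continuous.subtype_mk (f := fun v : {v : Fin (n + 1) → ℂ // v ≠ 0} => (c : ℂ) • v.1)
    (continuous_subtype_val.const_smul (c : ℂ)) _

lemma smV_inv (n : ℕ) (c : ℂˣ) (v : {v : Fin (n + 1) → ℂ // v ≠ 0}) :
    smV n c⁻¹ (smV n c v) = v := by
  apply Subtype.ext
  show ((c⁻¹ : ℂˣ) : ℂ) • ((c : ℂ) • v.1) = v.1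
  rw [smul_smul]
  norm_cast
  simp

lemma mkCP_eq {n : ℕ} {v w : {v : Fin (n + 1) → ℂ // v ≠ 0}} :
    Quot.mk (relCP n) v = Quot.mk (relCP n) w ↔ relCP n v w := by
  rw [Quot.eq, (relCP_equivalence n).eqvGen_iff]

lemma isOpenMap_mkCP (n : ℕ) : IsOpenMap (Quot.mk (relCP n)) := by
  intro U hU
  rw [isOpen_coinduced]
  have hpre : Quot.mk (relCP n) ⁻¹' (Quot.mk (relCP n) '' U) = ⋃ c : ℂˣ, smV n c ⁻¹' U := by
    ext w
    simp only [Set.mem_preimage, Set.mem_image, Set.mem_iUnion]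
    constructor
    · rintro ⟨u, hu, hq⟩
      obtain ⟨c, hc⟩ := mkCP_eq.1 hq
      refine ⟨c⁻¹, ?_⟩
      have : smV n c⁻¹ w = u := by
        apply Subtype.ext
        show ((c⁻¹ : ℂˣ) : ℂ) • w.1 = u.1
        rw [← hc, smul_smul]
        norm_cast
        simp
      rwa [this]
    · rintro ⟨c, hc⟩
      refine ⟨smV n c w, hc, ?_⟩
      apply mkCP_eq.2
      exact (relCP_equivalence n).symm ⟨c, rfl⟩
  rw [hpre]
  exact isOpen_iUnion fun c => (continuous_smV n c).isOpen_preimage U hU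

instance (n : ℕ) : T2Space (CP n) := by
  constructor
  intro x y hxy
  induction x using Quot.ind with | _ v => ?_
  induction y using Quot.ind with | _ w => ?_
  have hvw : ¬ relCP n v w := fun h => hxy (Quot.sound h)
  rw [relCP_iff_cross] at hvw
  have hopen : IsOpen {q : {v : Fin (n + 1) → ℂ // v ≠ 0} × {v : Fin (n + 1) → ℂ // v ≠ 0} |
      ∀ i j, q.1.1 i * q.2.1 j = q.1.1 j * q.2.1 i}ᶜ := (isClosed_cross n).isOpen_compl
  obtain ⟨U1, U2, hU1, hU2, hv1, hw2, hsub⟩ := isOpen_prod_iff.1 hopen v w hvw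
  refine ⟨Quot.mk _ '' U1, Quot.mk _ '' U2, isOpenMap_mkCP n U1 hU1, isOpenMap_mkCP n U2 hU2,
    ⟨v, hv1, rfl⟩, ⟨w, hw2, rfl⟩, ?_⟩
  rw [Set.disjoint_left]
  rintro z ⟨u1, hu1, hz1⟩ ⟨u2, hu2, hz2⟩
  have : relCP n u1 u2 := mkCP_eq.1 (hz1.trans hz2.symm)
  rw [relCP_iff_cross] at this
  exact hsub (Set.mk_mem_prod hu1 hu2) this


/-! ### continuity of Phi -/

lemma continuous_coeff_prod {ι X : Type*} [TopologicalSpace X] (u : Finset ι)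
    (f : ι → X → Polynomial ℂ) (hf : ∀ i k, Continuous fun x => (f i x).coeff k) :
    ∀ k, Continuous fun x => (∏ i ∈ u, f i x).coeff k := by
  classical
  induction u using Finset.induction_on with
  | empty =>
    intro k
    simp only [Finset.prod_empty]
    exact continuous_const
  | insert _ _ h ih =>
    intro k
    rename_i a u2
    simp only [Finset.prod_insert h]
    have heq : (fun x => (f a x * ∏ i ∈ u2, f i x).coeff k)
        = fun x => ∑ q ∈ Finset.HasAntidiagonal.antidiagonal k, (f a x).coeff q.1 * (∏ i ∈ u2, f i x).coeff q.2 := by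
      funext x; rw [Polynomial.coeff_mul]
    rw [heq]
    exact continuous_finset_sum _ fun q _ => (hf a q.1).mul (ih q.2)

lemma continuous_fac_coeff (k : ℕ) : Continuous fun v : ℂ × ℂ => (fac v).coeff k := by
  have heq : (fun v : ℂ × ℂ => (fac v).coeff k)
      = fun v => v.2 * (X : Polynomial ℂ).coeff k - if k = 0 then v.1 else 0 := by
    funext v
    rw [fac, Polynomial.coeff_sub, Polynomial.coeff_C_mul, Polynomial.coeff_C]
  rw [heq]
  refine (continuous_snd.mul continuous_const).sub ?_
  split_ifs
  exacts [continuous_fst, continuous_const]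

lemma continuous_coord (i : Fin 3) : Continuous fun x : S2 => x.1 i :=
  (EuclideanSpace.proj i).continuous.comp continuous_subtype_val

lemma continuous_ht : Continuous ht := continuous_coord 2

lemma continuous_cx : Continuous cx := by
  have heq : cx = fun x : S2 => ((x.1 0 : ℝ) : ℂ) + ((x.1 1 : ℝ) : ℂ) * Complex.I := by
    funext x; rw [cx, Complex.mk_eq_add_mul_I]
  rw [heq]
  exact (Complex.continuous_ofReal.comp (continuous_coord 0)).add
    ((Complex.continuous_ofReal.comp (continuous_coord 1)).mul continuous_const)

lemma continuous_g1 : Continuous g1 :=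
  continuous_cx.prodMk (Complex.continuous_ofReal.comp (continuous_const.sub continuous_ht))

lemma continuous_g2 : Continuous g2 :=
  (Complex.continuous_ofReal.comp (continuous_const.add continuous_ht)).prodMk
    (RCLike.continuous_conj.comp continuous_cx)

lemma continuous_Phi {d : ℕ} : Continuous (Phi (d := d)) := by
  classical
  rw [continuous_iff_continuousAt]
  intro p0
  -- local sections determined by the reference point p0
  set σ : (Fin d → S2) → Fin d → ℂ × ℂ :=
    fun p i => if ht (p0 i) ≤ 0 then g1 (p i) else g2 (p i) with hσ
  set U : Set (Fin d → S2) :=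
    ⋂ i, (fun p : Fin d → S2 => p i) ⁻¹'
      (if ht (p0 i) ≤ 0 then {x : S2 | ht x < 1} else {x : S2 | -1 < ht x}) with hUdef
  have hUopen : IsOpen U := by
    refine isOpen_iInter_of_finite fun i => ?_
    refine (continuous_apply i).isOpen_preimage _ ?_
    split_ifs
    · exact isOpen_lt continuous_ht continuous_const
    · exact isOpen_lt continuous_const continuous_ht
  have hp0U : p0 ∈ U := by
    rw [hUdef]
    refine Set.mem_iInter.2 fun i => ?_
    by_cases h : ht (p0 i) ≤ 0
    · rw [if_pos h]
      show ht (p0 i) < 1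
      linarith
    · rw [if_neg h]
      show -1 < ht (p0 i)
      push_neg at h
      linarith
  have hσne : ∀ p ∈ U, ∀ i, σ p i ≠ 0 := by
    intro p hp i
    have hpi := Set.mem_iInter.1 hp i
    simp only [hσ]
    by_cases h : ht (p0 i) ≤ 0
    · rw [if_pos h]
      rw [if_pos h] at hpi
      exact g1_ne_zero (ne_of_lt hpi)
    · rw [if_neg h]
      rw [if_neg h] at hpi
      have hlt : -1 < ht (p i) := hpi
      exact g2_ne_zero (fun hc => absurd (hc ▸ hlt) (lt_irrefl _))
  have hσrel : ∀ p ∈ U, ∀ i, ∃ c : ℂˣ, (c : ℂ) • s (p i) = σ p i := by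
    intro p hp i
    have hpi := Set.mem_iInter.1 hp i
    simp only [hσ]
    by_cases h : ht (p0 i) ≤ 0
    · rw [if_pos h]
      rw [if_pos h] at hpi
      have hne : ht (p i) ≠ 1 := ne_of_lt hpi
      exact pair_prop (s_ne_zero _) (g1_ne_zero hne) (cross_s_g1 _ hne)
    · rw [if_neg h]
      rw [if_neg h] at hpi
      have hlt : -1 < ht (p i) := hpi
      exact pair_prop (s_ne_zero _) (g2_ne_zero (fun hc => absurd (hc ▸ hlt) (lt_irrefl _)))
        (cross_s_g2 _)
  have hFcont : Continuous fun p : Fin d → S2 => vec (σ p) := by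
    apply continuous_pi
    intro k
    show Continuous fun p => (∏ i, fac (σ p i)).coeff (k : ℕ)
    apply continuous_coeff_prod Finset.univ (fun i p => fac (σ p i))
    intro i k2
    apply (continuous_fac_coeff k2).comp
    show Continuous fun p : Fin d → S2 => σ p i
    simp only [hσ]
    split_ifs
    · exact continuous_g1.comp (continuous_apply i)
    · exact continuous_g2.comp (continuous_apply i)
  have hlift : ∀ (p : Fin d → S2) (hne : ∀ i, σ p i ≠ 0),
      (∀ i, ∃ c : ℂˣ, (c : ℂ) • s (p i) = σ p i) →
      Phi p = Quot.mk (relCP d) ⟨vec (σ p), vec_ne_zero hne⟩ := by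
    intro p hne hrel
    choose c hc using hrel
    apply Quot.sound
    refine ⟨∏ i, c i, ?_⟩
    funext k
    show ((∏ i, c i : ℂˣ) : ℂ) * vec (sp p) k = vec (σ p) k
    have hPol : Pol (σ p) = C ((∏ i, c i : ℂˣ) : ℂ) * Pol (sp p) := by
      rw [Pol, Pol]
      have hcc : ((∏ i, c i : ℂˣ) : ℂ) = ∏ i, ((c i : ℂˣ) : ℂ) :=
        map_prod (Units.coeHom ℂ) _ _
      calc ∏ i, fac (σ p i) = ∏ i, (C ((c i : ℂ)) * fac (s (p i))) :=
            Finset.prod_congr rfl (fun i _ => by rw [← hc i, fac_smul])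
        _ = (∏ i, C ((c i : ℂ))) * ∏ i, fac (s (p i)) := Finset.prod_mul_distrib
        _ = C ((∏ i, c i : ℂˣ) : ℂ) * ∏ i, fac (sp p i) := by rw [← map_prod, hcc]; rfl
    rw [vec, vec, hPol, Polynomial.coeff_C_mul]
  have hrestrict : ContinuousOn Phi U := by
    rw [continuousOn_iff_continuous_restrict]
    have hne : ∀ u : U, ∀ i, σ u.1 i ≠ 0 := fun u => hσne u.1 u.2
    have heq : (U.domRestrict Phi) = fun u : U =>
        Quot.mk (relCP d) ⟨vec (σ u.1), vec_ne_zero (hne u)⟩ := by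
      funext u
      exact hlift u.1 (hne u) (hσrel u.1 u.2)
    rw [heq]
    apply continuous_quot_mk.comp
    apply Continuous.subtype_mk
    exact hFcont.comp continuous_subtype_val
  exact hrestrict.continuousAt (hUopen.mem_nhds hp0U)


/-! ### compactness -/

instance : CompactSpace S2 := Metric.sphere.compactSpace _ _

end SPCP

/-- The quotient of `(S²)^d` by the coordinate-permutation action of the symmetric group `S_d`
is homeomorphic to complex projective `d`-space. -/
theorem quotient_sphere_pow_homeomorph_CP (d : ℕ) :
    Nonempty (Quot (permRel d) ≃ₜ CP d) := by
  have hsound : ∀ p q : Fin d → S2, permRel d p q → SPCP.Phi p = SPCP.Phi q :=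
    fun _ _ h => SPCP.Phi_sound h
  let F : Quot (permRel d) → CP d := Quot.lift SPCP.Phi hsound
  have hFbij : Function.Bijective F := by
    constructor
    · intro x y
      induction x using Quot.ind with | _ p => ?_
      induction y using Quot.ind with | _ q => ?_
      intro h
      exact Quot.sound (SPCP.Phi_inj h)
    · intro y
      induction y using Quot.ind with | _ w => ?_
      obtain ⟨p, hp⟩ := SPCP.Phi_surj w
      exact ⟨Quot.mk _ p, hp⟩
  have hFcont : Continuous F := continuous_quot_lift _ SPCP.continuous_Phi
  exact ⟨Continuous.homeoOfEquivCompactToT2 (f := Equiv.ofBijective F hFbij) hFcont⟩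
end
end

section
/- For d ≥ 1, let C_d = σ × [0,1] where σ is a (d−1)-simplex with vertices u_1,...,u_d. Up to isomorphism, there is a unique simplicial subdivision of C_d using only the 2d vertices of C_d: its facets are the d simplices a_1⋯a_i b_i⋯b_d for 1 ≤ i ≤ d, where a_j = (u_j,0) and b_j = (u_j,1). -/
open scoped Classical

/-- The ambient space of the prism `σ × [0,1]` over a `(d−1)`-simplex `σ`. -/
abbrev PrismSpace (d : ℕ) : Type := (Fin d → ℝ) × ℝ

/-- The bottom vertices `a_j = (u_j, 0)` of the prism (with `u_j` the standard basis points). -/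
def ptA (d : ℕ) (j : Fin d) : PrismSpace d := (Pi.single j 1, 0)

/-- The top vertices `b_j = (u_j, 1)` of the prism. -/
def ptB (d : ℕ) (j : Fin d) : PrismSpace d := (Pi.single j 1, 1)

/-- The prism `C_d = σ × [0,1]`, as the convex hull of its `2d` vertices. -/
def prism (d : ℕ) : Set (PrismSpace d) :=
  convexHull ℝ (Set.range (ptA d) ∪ Set.range (ptB d))

/-- The facet `a_{π(1)} ⋯ a_{π(i)} b_{π(i)} ⋯ b_{π(d)}` of the staircase triangulation of the
prism, relabelled by a permutation `π` of the vertices of `σ`. -/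
noncomputable def stairFacet (d : ℕ) (π : Equiv.Perm (Fin d)) (i : Fin d) :
    Finset (PrismSpace d) :=
  ((Finset.univ.filter fun j : Fin d => j ≤ i).image fun j => ptA d (π j)) ∪
    ((Finset.univ.filter fun j : Fin d => i ≤ j).image fun j => ptB d (π j))

/-- The faces of the (relabelled) staircase triangulation: all nonempty subsets of facets. -/
def stairFaces (d : ℕ) (π : Equiv.Perm (Fin d)) : Set (Finset (PrismSpace d)) :=
  {s | s.Nonempty ∧ ∃ i : Fin d, s ⊆ stairFacet d π i}

namespace PrismProof

open Finset

variable {d : ℕ}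

lemma single_inj : Function.Injective (fun j : Fin d => Pi.single j (1:ℝ)) := by
  intro j k h
  by_contra hjk
  have := congrFun h j
  simp [Pi.single_apply, Ne.symm hjk] at this

lemma ptA_inj : Function.Injective (ptA d) := by
  intro j k h
  exact single_inj (congrArg Prod.fst h)

lemma ptB_inj : Function.Injective (ptB d) := by
  intro j k h
  exact single_inj (congrArg Prod.fst h)

lemma ptA_ne_ptB {j k : Fin d} : ptA d j ≠ ptB d k := by
  intro h
  have := congrArg Prod.snd h
  simp [ptA, ptB] at this

/-- vertex set encoded by two finsets of columns -/
noncomputable def rep (A B : Finset (Fin d)) : Finset (PrismSpace d) :=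
  A.image (ptA d) ∪ B.image (ptB d)

lemma mem_rep_A {A B : Finset (Fin d)} {j : Fin d} : ptA d j ∈ rep A B ↔ j ∈ A := by
  simp only [rep, mem_union, mem_image]
  constructor
  · rintro (⟨k, hk, he⟩ | ⟨k, hk, he⟩)
    · rwa [← ptA_inj he]
    · exact absurd he.symm ptA_ne_ptB
  · exact fun h => Or.inl ⟨j, h, rfl⟩

lemma mem_rep_B {A B : Finset (Fin d)} {j : Fin d} : ptB d j ∈ rep A B ↔ j ∈ B := by
  simp only [rep, mem_union, mem_image]
  constructor
  · rintro (⟨k, hk, he⟩ | ⟨k, hk, he⟩)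
    · exact absurd he ptA_ne_ptB
    · rwa [← ptB_inj he]
  · exact fun h => Or.inr ⟨j, h, rfl⟩

lemma rep_mono {A B A' B' : Finset (Fin d)} (hA : A ⊆ A') (hB : B ⊆ B') :
    rep A B ⊆ rep A' B' :=
  Finset.union_subset_union (Finset.image_subset_image hA) (Finset.image_subset_image hB)

lemma rep_subset_iff {A B A' B' : Finset (Fin d)} :
    rep A B ⊆ rep A' B' ↔ A ⊆ A' ∧ B ⊆ B' := by
  refine ⟨fun h => ⟨fun j hj => ?_, fun j hj => ?_⟩, fun h => rep_mono h.1 h.2⟩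
  · exact mem_rep_A.1 (h (mem_rep_A.2 hj))
  · exact mem_rep_B.1 (h (mem_rep_B.2 hj))

lemma rep_inter {A B A' B' : Finset (Fin d)} :
    rep A B ∩ rep A' B' = rep (A ∩ A') (B ∩ B') := by
  ext p
  simp only [mem_inter, rep, mem_union, mem_image]
  constructor
  · rintro ⟨(⟨k, hk, rfl⟩ | ⟨k, hk, rfl⟩), (⟨l, hl, he⟩ | ⟨l, hl, he⟩)⟩
    · exact Or.inl ⟨k, ⟨hk, by rwa [← ptA_inj he]⟩, rfl⟩
    · exact absurd he ptA_ne_ptB.symm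
    · exact absurd he.symm ptA_ne_ptB.symm
    · exact Or.inr ⟨k, ⟨hk, by rwa [← ptB_inj he]⟩, rfl⟩
  · rintro (⟨k, hk, rfl⟩ | ⟨k, hk, rfl⟩)
    · exact ⟨Or.inl ⟨k, hk.1, rfl⟩, Or.inl ⟨k, hk.2, rfl⟩⟩
    · exact ⟨Or.inr ⟨k, hk.1, rfl⟩, Or.inr ⟨k, hk.2, rfl⟩⟩

lemma sum_rep {M : Type*} [AddCommMonoid M] (A B : Finset (Fin d)) (f : PrismSpace d → M) :
    ∑ p ∈ rep A B, f p = ∑ j ∈ A, f (ptA d j) + ∑ j ∈ B, f (ptB d j) := by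
  rw [rep, Finset.sum_union, Finset.sum_image (fun a _ b _ h => ptA_inj h),
    Finset.sum_image (fun a _ b _ h => ptB_inj h)]
  rw [Finset.disjoint_left]
  rintro p hp hp'
  obtain ⟨k, _, rfl⟩ := Finset.mem_image.1 hp
  obtain ⟨l, _, he⟩ := Finset.mem_image.1 hp'
  exact ptA_ne_ptB he.symm

lemma rep_univ_coe : (rep (univ : Finset (Fin d)) univ : Set (PrismSpace d)) =
    Set.range (ptA d) ∪ Set.range (ptB d) := by
  simp [rep, Finset.coe_union, Finset.coe_image, Set.image_univ]

lemma prism_eq : prism d = convexHull ℝ (rep (univ : Finset (Fin d)) univ : Set (PrismSpace d)) := by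
  rw [rep_univ_coe, prism]

lemma sum_single_apply (c : Fin d → ℝ) (C : Finset (Fin d)) (k : Fin d) :
    (∑ j ∈ C, c j • (Pi.single j (1:ℝ) : Fin d → ℝ)) k = if k ∈ C then c k else 0 := by
  rw [Finset.sum_apply]
  rw [← Finset.sum_ite_eq C k c]
  refine Finset.sum_congr rfl fun j hj => ?_
  rw [Pi.smul_apply, Pi.single_apply, smul_eq_mul, mul_ite, mul_one, mul_zero]

/-- The ambient weight function induced by column weights. -/
noncomputable def wt (α β : Fin d → ℝ) : PrismSpace d → ℝ := fun p =>
  (∑ j, (if p = ptA d j then α j else 0)) + (∑ j, (if p = ptB d j then β j else 0))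

lemma wt_ptA (α β : Fin d → ℝ) (k : Fin d) : wt α β (ptA d k) = α k := by
  unfold wt
  rw [Finset.sum_eq_single_of_mem k (mem_univ k)
      (fun j _ hj => if_neg (fun h => hj ((ptA_inj h).symm))), if_pos rfl,
    Finset.sum_eq_zero (fun j _ => if_neg ptA_ne_ptB), add_zero]

lemma wt_ptB (α β : Fin d → ℝ) (k : Fin d) : wt α β (ptB d k) = β k := by
  unfold wt
  rw [Finset.sum_eq_zero (fun j _ => if_neg (fun h => ptA_ne_ptB h.symm)),
    Finset.sum_eq_single_of_mem k (mem_univ k)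
      (fun j _ hj => if_neg (fun h => hj ((ptB_inj h).symm))), if_pos rfl, zero_add]

lemma wt_nonneg {α β : Fin d → ℝ} (hα : ∀ j, 0 ≤ α j) (hβ : ∀ j, 0 ≤ β j)
    (p : PrismSpace d) : 0 ≤ wt α β p := by
  refine add_nonneg (Finset.sum_nonneg fun j _ => ?_) (Finset.sum_nonneg fun j _ => ?_) <;>
    · split
      · first | exact hα j | exact hβ j
      · exact le_refl 0
  
lemma wt_sum {A B : Finset (Fin d)} {α β : Fin d → ℝ}
    (hA : ∀ j, j ∉ A → α j = 0) (hB : ∀ j, j ∉ B → β j = 0) :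
    ∑ p ∈ rep A B, wt α β p = ∑ j, (α j + β j) := by
  rw [sum_rep]
  simp only [wt_ptA, wt_ptB]
  rw [Finset.sum_add_distrib,
    Finset.sum_subset (Finset.subset_univ A) (fun j _ hj => hA j hj),
    Finset.sum_subset (Finset.subset_univ B) (fun j _ hj => hB j hj)]

lemma wt_sum_smul {A B : Finset (Fin d)} {α β : Fin d → ℝ}
    (hA : ∀ j, j ∉ A → α j = 0) (hB : ∀ j, j ∉ B → β j = 0) :
    ∑ p ∈ rep A B, wt α β p • p =
      ((fun k => α k + β k : Fin d → ℝ), ∑ j, β j) := by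
  rw [sum_rep]
  simp only [wt_ptA, wt_ptB]
  have hA' : ∑ j ∈ A, α j • ptA d j = ∑ j, α j • ptA d j :=
    Finset.sum_subset (Finset.subset_univ A) (fun j _ hj => by rw [hA j hj, zero_smul])
  have hB' : ∑ j ∈ B, β j • ptB d j = ∑ j, β j • ptB d j :=
    Finset.sum_subset (Finset.subset_univ B) (fun j _ hj => by rw [hB j hj, zero_smul])
  rw [hA', hB']
  refine Prod.ext ?_ ?_
  · rw [Prod.fst_add, Prod.fst_sum, Prod.fst_sum]
    funext k
    simp only [ptA, ptB, Prod.smul_mk]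
    rw [Pi.add_apply, sum_single_apply, sum_single_apply]
    simp
  · rw [Prod.snd_add, Prod.snd_sum, Prod.snd_sum]
    simp [ptA, ptB]

/-- Convex combination data for membership in the hull of `rep A B`. -/
structure IsRepWt (A B : Finset (Fin d)) (x : PrismSpace d) (α β : Fin d → ℝ) : Prop where
  nonnegA : ∀ j, 0 ≤ α j
  nonnegB : ∀ j, 0 ≤ β j
  suppA : ∀ j, j ∉ A → α j = 0
  suppB : ∀ j, j ∉ B → β j = 0
  col : ∀ j, x.1 j = α j + β j
  total : ∑ j, x.1 j = 1
  snd : x.2 = ∑ j, β j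

lemma IsRepWt.wt_sum_eq {A B : Finset (Fin d)} {x : PrismSpace d} {α β : Fin d → ℝ}
    (h : IsRepWt A B x α β) : ∑ p ∈ rep A B, wt α β p = 1 := by
  rw [wt_sum h.suppA h.suppB, ← h.total]
  exact Finset.sum_congr rfl fun j _ => (h.col j).symm

lemma IsRepWt.wt_sum_smul_eq {A B : Finset (Fin d)} {x : PrismSpace d} {α β : Fin d → ℝ}
    (h : IsRepWt A B x α β) : ∑ p ∈ rep A B, wt α β p • p = x := by
  rw [wt_sum_smul h.suppA h.suppB]
  refine Prod.ext ?_ h.snd.symm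
  funext k
  exact (h.col k).symm

lemma IsRepWt.mem {A B : Finset (Fin d)} {x : PrismSpace d} {α β : Fin d → ℝ}
    (h : IsRepWt A B x α β) : x ∈ convexHull ℝ (rep A B : Set (PrismSpace d)) := by
  rw [Finset.mem_convexHull']
  exact ⟨wt α β, fun y _ => wt_nonneg h.nonnegA h.nonnegB y, h.wt_sum_eq, h.wt_sum_smul_eq⟩

lemma mem_rep_iff {A B : Finset (Fin d)} {x : PrismSpace d} :
    x ∈ convexHull ℝ (rep A B : Set (PrismSpace d)) ↔ ∃ α β, IsRepWt A B x α β := by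
  constructor
  · intro hx
    obtain ⟨w, hw0, hw1, hwx⟩ := Finset.mem_convexHull'.1 hx
    set α : Fin d → ℝ := fun j => if j ∈ A then w (ptA d j) else 0 with hα
    set β : Fin d → ℝ := fun j => if j ∈ B then w (ptB d j) else 0 with hβ
    have hsuppA : ∀ j, j ∉ A → α j = 0 := fun j hj => if_neg hj
    have hsuppB : ∀ j, j ∉ B → β j = 0 := fun j hj => if_neg hj
    have hagree : ∀ p ∈ rep A B, w p = wt α β p := by
      intro p hp
      rcases Finset.mem_union.1 hp with hp' | hp'
      · obtain ⟨j, hj, rfl⟩ := Finset.mem_image.1 hp'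
        rw [wt_ptA, hα]
        simp [hj]
      · obtain ⟨j, hj, rfl⟩ := Finset.mem_image.1 hp'
        rw [wt_ptB, hβ]
        simp [hj]
    have hs1 : ∑ p ∈ rep A B, wt α β p = 1 := by
      rw [← Finset.sum_congr rfl hagree]
      exact hw1
    have hs2 : ∑ p ∈ rep A B, wt α β p • p = x := by
      rw [← hwx]
      exact Finset.sum_congr rfl (fun p hp => by rw [hagree p hp])
    rw [wt_sum hsuppA hsuppB] at hs1
    rw [wt_sum_smul hsuppA hsuppB] at hs2
    have hfst : ∀ k, x.1 k = α k + β k := fun k => by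
      rw [← hs2]
    have hsnd : x.2 = ∑ j, β j := by rw [← hs2]
    refine ⟨α, β, ?_, ?_, hsuppA, hsuppB, hfst, ?_, hsnd⟩
    · intro j
      by_cases hj : j ∈ A
      · rw [hα]; simp only [if_pos hj]; exact hw0 _ (mem_rep_A.2 hj)
      · rw [hsuppA j hj]
    · intro j
      by_cases hj : j ∈ B
      · rw [hβ]; simp only [if_pos hj]; exact hw0 _ (mem_rep_B.2 hj)
      · rw [hsuppB j hj]
    · rw [Finset.sum_congr rfl (fun j (_ : j ∈ univ) => hfst j)]
      exact hs1
  · rintro ⟨α, β, h⟩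
    exact h.mem

lemma support_subset {F t : Finset (PrismSpace d)}
    (hF : AffineIndependent ℝ ((↑) : F → PrismSpace d)) (ht : t ⊆ F)
    {w : PrismSpace d → ℝ} (hw1 : ∑ p ∈ F, w p = 1) {x : PrismSpace d}
    (hx : ∑ p ∈ F, w p • p = x)
    (hxt : x ∈ convexHull ℝ (t : Set (PrismSpace d))) :
    ∀ p ∈ F, w p ≠ 0 → p ∈ t := by
  obtain ⟨w', h0', h1', hx'⟩ := Finset.mem_convexHull'.1 hxt
  set w'' : PrismSpace d → ℝ := fun p => if p ∈ t then w' p else 0 with hw''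
  have hsum : ∑ p ∈ F, w'' p = 1 := by
    rw [hw'', Finset.sum_ite_mem, Finset.inter_eq_right.2 ht, h1']
  have hsmul : ∑ p ∈ F, w'' p • p = x := by
    rw [hw'']
    simp only [ite_smul, zero_smul]
    rw [Finset.sum_ite_mem, Finset.inter_eq_right.2 ht, hx']
  have key := hF.eq_of_sum_eq_sum_subtype (w₁ := w) (w₂ := w'')
    (by rw [hw1, hsum]) (by rw [hx, hsmul])
  intro p hp hne
  by_contra hpt
  rw [key p hp, hw''] at hne
  simp [hpt] at hne

lemma mem_of_support {F t : Finset (PrismSpace d)} (ht : t ⊆ F) {w : PrismSpace d → ℝ}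
    (h0 : ∀ p ∈ F, 0 ≤ w p) (h1 : ∑ p ∈ F, w p = 1)
    (hsupp : ∀ p ∈ F, w p ≠ 0 → p ∈ t) :
    ∑ p ∈ F, w p • p ∈ convexHull ℝ (t : Set (PrismSpace d)) := by
  have hz : ∀ p ∈ F, p ∉ t → w p = 0 := fun p hp hpt =>
    by_contra fun h => hpt (hsupp p hp h)
  rw [Finset.mem_convexHull']
  refine ⟨w, fun y hy => h0 y (ht hy), ?_, ?_⟩
  · rw [Finset.sum_subset ht hz, h1]
  · rw [Finset.sum_subset ht (fun p hp hpt => by rw [hz p hp hpt, zero_smul])]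

lemma affineIndependent_finset (F : Finset (PrismSpace d))
    (h : ∀ w : PrismSpace d → ℝ, ∑ p ∈ F, w p = 0 → ∑ p ∈ F, w p • p = 0 →
      ∀ p ∈ F, w p = 0) :
    AffineIndependent ℝ ((↑) : F → PrismSpace d) := by
  rw [affineIndependent_iff]
  intro s w hw0 hws e he
  set W : PrismSpace d → ℝ :=
    fun p => if hp : p ∈ F then (if (⟨p, hp⟩ : F) ∈ s then w ⟨p, hp⟩ else 0) else 0 with hW
  have hcoe : ∀ x : F, W ↑x = if x ∈ s then w x else 0 := by
    intro x
    rw [hW]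
    beta_reduce
    simp [x.coe_prop]
  have h1 : ∑ p ∈ F, W p = 0 := by
    rw [← Finset.sum_attach F W, Finset.sum_congr rfl (fun x _ => hcoe x),
      Finset.sum_ite_mem, ← Finset.univ_eq_attach, Finset.univ_inter, hw0]
  have h2 : ∑ p ∈ F, W p • p = 0 := by
    rw [← Finset.sum_attach F (fun p => W p • p),
      Finset.sum_congr rfl (fun x (_ : x ∈ F.attach) => by rw [hcoe x]),
      ← Finset.univ_eq_attach]
    simp only [ite_smul, zero_smul]
    rw [Finset.sum_ite_mem, Finset.univ_inter, hws]
  have := h W h1 h2 ↑e e.coe_prop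
  rw [hcoe e, if_pos he] at this
  exact this

lemma rep_zero_weights {A B : Finset (Fin d)} {m : Fin d} (hAB : A ∩ B ⊆ {m})
    (w : PrismSpace d → ℝ) (h1 : ∑ p ∈ rep A B, w p = 0)
    (h2 : ∑ p ∈ rep A B, w p • p = 0) :
    ∀ p ∈ rep A B, w p = 0 := by
  set α : Fin d → ℝ := fun j => if j ∈ A then w (ptA d j) else 0 with hα
  set β : Fin d → ℝ := fun j => if j ∈ B then w (ptB d j) else 0 with hβ
  have hsuppA : ∀ j, j ∉ A → α j = 0 := fun j hj => if_neg hj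
  have hsuppB : ∀ j, j ∉ B → β j = 0 := fun j hj => if_neg hj
  have hagree : ∀ p ∈ rep A B, w p = wt α β p := by
    intro p hp
    rcases Finset.mem_union.1 hp with hp' | hp'
    · obtain ⟨j, hj, rfl⟩ := Finset.mem_image.1 hp'
      rw [wt_ptA, hα]; simp [hj]
    · obtain ⟨j, hj, rfl⟩ := Finset.mem_image.1 hp'
      rw [wt_ptB, hβ]; simp [hj]
  have hs1 : ∑ j, (α j + β j) = 0 := by
    rw [← wt_sum hsuppA hsuppB, ← Finset.sum_congr rfl hagree, h1]
  have hs2' : ∑ p ∈ rep A B, wt α β p • p = 0 := by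
    rw [← h2]
    exact Finset.sum_congr rfl (fun p hp => by rw [hagree p hp])
  have hs2 : ((fun k => α k + β k : Fin d → ℝ), ∑ j, β j) = (0 : PrismSpace d) := by
    rw [← wt_sum_smul hsuppA hsuppB, hs2']
  have hcol : ∀ k, α k + β k = 0 := fun k => congrFun (congrArg Prod.fst hs2) k
  have hsB : ∑ j, β j = 0 := congrArg Prod.snd hs2
  have hβ0 : ∀ j, j ≠ m → β j = 0 := by
    intro j hj
    by_cases hjB : j ∈ B
    · by_cases hjA : j ∈ A
      · exact absurd (Finset.mem_singleton.1 (hAB (Finset.mem_inter.2 ⟨hjA, hjB⟩))) hj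
      · have := hcol j
        rw [hsuppA j hjA, zero_add] at this
        exact this
    · exact hsuppB j hjB
  have hβm : β m = 0 := by
    rw [← hsB, Finset.sum_eq_single m (fun j _ hj => hβ0 j hj) (by simp)]
  have hβall : ∀ j, β j = 0 := fun j => by
    by_cases hj : j = m
    · rw [hj, hβm]
    · exact hβ0 j hj
  have hαall : ∀ j, α j = 0 := fun j => by
    have := hcol j
    rw [hβall j, add_zero] at this
    exact this
  intro p hp
  rw [hagree p hp]
  rcases Finset.mem_union.1 hp with hp' | hp'
  · obtain ⟨j, hj, rfl⟩ := Finset.mem_image.1 hp'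
    rw [wt_ptA, hαall]
  · obtain ⟨j, hj, rfl⟩ := Finset.mem_image.1 hp'
    rw [wt_ptB, hβall]

lemma rep_indep_subset {A B : Finset (Fin d)} {m : Fin d} (hAB : A ∩ B ⊆ {m})
    {s : Finset (PrismSpace d)} (hs : s ⊆ rep A B) :
    AffineIndependent ℝ ((↑) : s → PrismSpace d) := by
  apply affineIndependent_finset
  intro w h1 h2 p hp
  set W : PrismSpace d → ℝ := fun p => if p ∈ s then w p else 0 with hW
  have e1 : ∑ q ∈ rep A B, W q = 0 := by
    rw [hW, Finset.sum_ite_mem, Finset.inter_eq_right.2 hs, h1]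
  have e2 : ∑ q ∈ rep A B, W q • q = 0 := by
    rw [hW]
    simp only [ite_smul, zero_smul]
    rw [Finset.sum_ite_mem, Finset.inter_eq_right.2 hs, h2]
  have := rep_zero_weights hAB W e1 e2 p (hs hp)
  rw [hW] at this
  simpa [hp] using this

lemma rep_indep {A B : Finset (Fin d)} {m : Fin d} (hAB : A ∩ B ⊆ {m}) :
    AffineIndependent ℝ ((↑) : rep A B → PrismSpace d) :=
  rep_indep_subset hAB (Finset.Subset.refl _)

lemma doubled_eq {F : Finset (PrismSpace d)}
    (hind : AffineIndependent ℝ ((↑) : F → PrismSpace d)) {m n : Fin d}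
    (ham : ptA d m ∈ F) (hbm : ptB d m ∈ F) (han : ptA d n ∈ F) (hbn : ptB d n ∈ F) :
    m = n := by
  by_contra hmn
  set w : PrismSpace d → ℝ := fun p =>
    (((if p = ptA d m then (1:ℝ) else 0) + (if p = ptB d m then (-1:ℝ) else 0)) +
      (if p = ptA d n then (-1:ℝ) else 0)) + (if p = ptB d n then (1:ℝ) else 0) with hw
  have habn : ptA d m ≠ ptA d n := fun h => hmn (ptA_inj h)
  have hbbn : ptB d m ≠ ptB d n := fun h => hmn (ptB_inj h)
  have hkey : ptA d m + ptB d n = ptA d n + ptB d m := by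
    refine Prod.ext ?_ ?_ <;> simp [ptA, ptB, add_comm]
  have hsum : ∑ p ∈ F, w p = 0 := by
    rw [hw]
    simp only [Finset.sum_add_distrib]
    rw [Finset.sum_ite_eq' F (ptA d m) (fun _ => (1:ℝ)),
      Finset.sum_ite_eq' F (ptB d m) (fun _ => (-1:ℝ)),
      Finset.sum_ite_eq' F (ptA d n) (fun _ => (-1:ℝ)),
      Finset.sum_ite_eq' F (ptB d n) (fun _ => (1:ℝ))]
    simp [ham, hbm, han, hbn]
  have hsmul : ∑ p ∈ F, w p • p = 0 := by
    rw [hw]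
    simp only [add_smul, Finset.sum_add_distrib, ite_smul, zero_smul]
    rw [Finset.sum_ite_eq' F (ptA d m) (fun p => (1:ℝ) • p),
      Finset.sum_ite_eq' F (ptB d m) (fun p => (-1:ℝ) • p),
      Finset.sum_ite_eq' F (ptA d n) (fun p => (-1:ℝ) • p),
      Finset.sum_ite_eq' F (ptB d n) (fun p => (1:ℝ) • p)]
    simp only [if_pos ham, if_pos hbm, if_pos han, if_pos hbn, one_smul, neg_one_smul]
    have : ptA d m + -ptB d m + -ptA d n + ptB d n
        = (ptA d m + ptB d n) - (ptA d n + ptB d m) := by abel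
    rw [this, hkey, sub_self]
  have := hind.eq_zero_of_sum_eq_zero_subtype hsum hsmul (ptA d m) ham
  rw [hw] at this
  simp only [if_pos rfl, if_neg ptA_ne_ptB, if_neg habn, if_neg ptA_ne_ptB] at this
  norm_num at this

lemma inter_of_facets {F G s t : Finset (PrismSpace d)}
    (hF : AffineIndependent ℝ ((↑) : F → PrismSpace d))
    (hG : AffineIndependent ℝ ((↑) : G → PrismSpace d))
    (hs : s ⊆ F) (ht : t ⊆ G)
    (hFG : convexHull ℝ (F : Set (PrismSpace d)) ∩ convexHull ℝ (G : Set (PrismSpace d)) ⊆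
      convexHull ℝ ((F : Set (PrismSpace d)) ∩ (G : Set (PrismSpace d)))) :
    convexHull ℝ (s : Set (PrismSpace d)) ∩ convexHull ℝ (t : Set (PrismSpace d)) ⊆
      convexHull ℝ ((s : Set (PrismSpace d)) ∩ (t : Set (PrismSpace d))) := by
  rintro x ⟨hxs, hxt⟩
  obtain ⟨w, hw0, hw1, hwx⟩ := Finset.mem_convexHull'.1 hxs
  set W : PrismSpace d → ℝ := fun p => if p ∈ s then w p else 0 with hW
  have hW1 : ∑ p ∈ F, W p = 1 := by
    rw [hW, Finset.sum_ite_mem, Finset.inter_eq_right.2 hs, hw1]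
  have hWx : ∑ p ∈ F, W p • p = x := by
    rw [hW]
    simp only [ite_smul, zero_smul]
    rw [Finset.sum_ite_mem, Finset.inter_eq_right.2 hs, hwx]
  have hxF : x ∈ convexHull ℝ (F : Set (PrismSpace d)) :=
    convexHull_mono (Finset.coe_subset.2 hs) hxs
  have hxG : x ∈ convexHull ℝ (G : Set (PrismSpace d)) :=
    convexHull_mono (Finset.coe_subset.2 ht) hxt
  have hxFG : x ∈ convexHull ℝ ((F ∩ G : Finset (PrismSpace d)) : Set (PrismSpace d)) := by
    rw [Finset.coe_inter]
    exact hFG ⟨hxF, hxG⟩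
  have h1 : ∀ p ∈ F, W p ≠ 0 → p ∈ F ∩ G :=
    support_subset hF Finset.inter_subset_left hW1 hWx hxFG
  have hWzG : ∀ p, W p ≠ 0 → p ∈ s ∩ G := by
    intro p hne
    have hps : p ∈ s := by
      by_contra hps
      rw [hW] at hne; simp [hps] at hne
    exact Finset.mem_inter.2 ⟨hps, (Finset.mem_inter.1 (h1 p (hs hps) hne)).2⟩
  have hsGsub : s ∩ G ⊆ F := Finset.Subset.trans Finset.inter_subset_left hs
  have hzero : ∀ p, p ∉ s ∩ G → W p = 0 := fun p hp =>
    by_contra fun h => hp (hWzG p h)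
  have e3 : ∑ p ∈ s ∩ G, W p = ∑ p ∈ G, W p :=
    Finset.sum_subset Finset.inter_subset_right (fun p _ hpn => hzero p hpn)
  have e4 : ∑ p ∈ s ∩ G, W p = ∑ p ∈ F, W p :=
    Finset.sum_subset hsGsub (fun p _ hpn => hzero p hpn)
  have e3' : ∑ p ∈ s ∩ G, W p • p = ∑ p ∈ G, W p • p :=
    Finset.sum_subset Finset.inter_subset_right
      (fun p _ hpn => by rw [hzero p hpn, zero_smul])
  have e4' : ∑ p ∈ s ∩ G, W p • p = ∑ p ∈ F, W p • p :=
    Finset.sum_subset hsGsub (fun p _ hpn => by rw [hzero p hpn, zero_smul])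
  have hWG1 : ∑ p ∈ G, W p = 1 := by rw [← e3, e4, hW1]
  have hWGx : ∑ p ∈ G, W p • p = x := by rw [← e3', e4', hWx]
  have h2 : ∀ p ∈ G, W p ≠ 0 → p ∈ t := support_subset hG ht hWG1 hWGx hxt
  have hsupp : ∀ p ∈ F, W p ≠ 0 → p ∈ s ∩ t := by
    intro p _ hne
    have hsG := Finset.mem_inter.1 (hWzG p hne)
    exact Finset.mem_inter.2 ⟨hsG.1, h2 p hsG.2 hne⟩
  have hfin := mem_of_support (F := F) (t := s ∩ t)
    (Finset.Subset.trans Finset.inter_subset_left hs)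
    (fun p _ => by
      by_cases hps : p ∈ s
      · rw [hW]; simpa [hps] using hw0 p hps
      · rw [hW]; simp [hps]) hW1 hsupp
  rw [← Finset.coe_inter, ← hWx]
  exact hfin

lemma stair_cols {B : Finset (Fin d)} {m : Fin d} : (Bᶜ ∪ {m}) ∩ B ⊆ {m} := by
  intro j hj
  rw [Finset.mem_inter, Finset.mem_union] at hj
  rcases hj.1 with h | h
  · exact absurd hj.2 (Finset.mem_compl.1 h)
  · exact h

lemma sum_sdiff_singleton {B : Finset (Fin d)} {m : Fin d} (hm : m ∈ B) (f : Fin d → ℝ) :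
    ∑ j ∈ B, f j = ∑ j ∈ B \ {m}, f j + f m := by
  rw [Finset.sdiff_singleton_eq_erase, Finset.sum_erase_add B f hm]

lemma mem_slab {B : Finset (Fin d)} {m : Fin d} (hm : m ∈ B) {y : Fin d → ℝ} {τ : ℝ}
    (hy : ∀ j, 0 ≤ y j) (hsum : ∑ j, y j = 1)
    (h1 : ∑ j ∈ B \ {m}, y j ≤ τ) (h2 : τ ≤ ∑ j ∈ B, y j) :
    ((y, τ) : PrismSpace d) ∈ convexHull ℝ (rep (Bᶜ ∪ {m}) B : Set (PrismSpace d)) := by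
  set S := ∑ j ∈ B \ {m}, y j with hS
  set β : Fin d → ℝ :=
    fun j => (if j ∈ B \ {m} then y j else 0) + (if j = m then τ - S else 0) with hβ
  set α : Fin d → ℝ := fun j => y j - β j with hα
  have hmnot : m ∉ B \ {m} := by simp
  have hβm : β m = τ - S := by rw [hβ]; simp [hmnot]
  have hβmem : ∀ j, j ∈ B \ {m} → β j = y j := by
    intro j hj
    have hjm : j ≠ m := by
      rw [Finset.mem_sdiff, Finset.mem_singleton] at hj
      exact hj.2
    rw [hβ]; simp [hj, hjm]
  have hβ0 : ∀ j, j ∉ B → β j = 0 := by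
    intro j hj
    have h1' : j ∉ B \ {m} := fun h => hj (Finset.mem_sdiff.1 h).1
    have h2' : j ≠ m := fun h => hj (h ▸ hm)
    rw [hβ]; simp [h1', h2']
  have hsumB : ∑ j ∈ B, y j = S + y m := by rw [hS, sum_sdiff_singleton hm]
  have hβmnonneg : 0 ≤ β m := by rw [hβm]; linarith
  have hβmle : β m ≤ y m := by rw [hβm]; linarith [hsumB ▸ h2]
  refine IsRepWt.mem (A := Bᶜ ∪ {m}) (B := B) (x := (y, τ)) (α := α) (β := β) ?_
  refine ⟨?_, ?_, ?_, hβ0, fun j => (sub_add_cancel (y j) (β j)).symm, hsum, ?_⟩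
  · intro j
    show 0 ≤ y j - β j
    by_cases hj : j ∈ B \ {m}
    · rw [hβmem j hj]; simp
    · by_cases hjm : j = m
      · subst hjm; linarith [hβmle]
      · rw [hβ0 j (fun h => hj (Finset.mem_sdiff.2 ⟨h, Finset.mem_singleton.not.2 hjm⟩))]
        simpa using hy j
  · intro j
    by_cases hj : j ∈ B \ {m}
    · rw [hβmem j hj]; exact hy j
    · by_cases hjm : j = m
      · subst hjm; exact hβmnonneg
      · rw [hβ0 j (fun h => hj (Finset.mem_sdiff.2 ⟨h, Finset.mem_singleton.not.2 hjm⟩))]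
  · intro j hj
    rw [Finset.mem_union, Finset.mem_compl, Finset.mem_singleton] at hj
    push_neg at hj
    have hjB : j ∈ B := not_not.1 (by simpa using hj.1)
    have hjm : j ∈ B \ {m} := Finset.mem_sdiff.2 ⟨hjB, Finset.mem_singleton.not.2 hj.2⟩
    show y j - β j = 0
    rw [hβmem j hjm, sub_self]
  · show τ = ∑ j, β j
    rw [hβ]
    rw [Finset.sum_add_distrib, Finset.sum_ite_mem, Finset.univ_inter,
      Finset.sum_ite_eq' Finset.univ m (fun _ => τ - S), if_pos (Finset.mem_univ m), ← hS]
    ring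

/-- the point on the vertical axis at height `t` -/
noncomputable def cpt (d : ℕ) (t : ℝ) : PrismSpace d := (fun _ => (d:ℝ)⁻¹, t)

lemma sum_const_inv (hd : 0 < d) : ∑ _j : Fin d, (d:ℝ)⁻¹ = 1 := by
  rw [Finset.sum_const, Finset.card_univ, Fintype.card_fin, nsmul_eq_mul]
  field_simp

lemma face_struct (hd : 0 < d) {s : Finset (PrismSpace d)}
    (hsub : (s : Set (PrismSpace d)) ⊆ Set.range (ptA d) ∪ Set.range (ptB d))
    (hindep : AffineIndependent ℝ ((↑) : s → PrismSpace d))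
    {i : ℕ} (hx : cpt d ((i + 2⁻¹) / d) ∈ convexHull ℝ (s : Set (PrismSpace d))) :
    ∃ (B : Finset (Fin d)) (m : Fin d), m ∈ B ∧ B.card = i + 1 ∧ s = rep (Bᶜ ∪ {m}) B := by
  have hd' : (0:ℝ) < d := Nat.cast_pos.2 hd
  set A : Finset (Fin d) := Finset.univ.filter (fun j => ptA d j ∈ s) with hA
  set B : Finset (Fin d) := Finset.univ.filter (fun j => ptB d j ∈ s) with hB
  have hs_eq : s = rep A B := by
    ext p
    constructor
    · intro hp
      rcases hsub hp with ⟨j, rfl⟩ | ⟨j, rfl⟩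
      · exact mem_rep_A.2 (by rw [hA]; exact Finset.mem_filter.2 ⟨Finset.mem_univ j, hp⟩)
      · exact mem_rep_B.2 (by rw [hB]; exact Finset.mem_filter.2 ⟨Finset.mem_univ j, hp⟩)
    · intro hp
      rcases Finset.mem_union.1 hp with hp' | hp'
      · obtain ⟨j, hj, rfl⟩ := Finset.mem_image.1 hp'
        rw [hA] at hj
        exact (Finset.mem_filter.1 hj).2
      · obtain ⟨j, hj, rfl⟩ := Finset.mem_image.1 hp'
        rw [hB] at hj
        exact (Finset.mem_filter.1 hj).2
  rw [hs_eq] at hx hindep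
  obtain ⟨α, β, hw⟩ := mem_rep_iff.1 hx
  have hcol : ∀ j, (d:ℝ)⁻¹ = α j + β j := fun j => hw.col j
  have hcover : ∀ j, j ∈ A ∨ j ∈ B := by
    intro j
    by_contra hj
    push_neg at hj
    have := hcol j
    rw [hw.suppA j hj.1, hw.suppB j hj.2, add_zero] at this
    exact absurd this.symm (by positivity)
  have hdoubled : ∀ m n : Fin d, m ∈ A ∩ B → n ∈ A ∩ B → m = n := by
    intro m n hm hn
    rw [Finset.mem_inter] at hm hn
    exact doubled_eq hindep (mem_rep_A.2 hm.1) (mem_rep_B.2 hm.2)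
      (mem_rep_A.2 hn.1) (mem_rep_B.2 hn.2)
  have hsnd : (i + 2⁻¹) / d = ∑ j, β j := hw.snd
  by_cases hne : (A ∩ B).Nonempty
  · obtain ⟨m, hm⟩ := hne
    have hsingle : A ∩ B = {m} := by
      ext j
      rw [Finset.mem_singleton]
      exact ⟨fun hj => hdoubled j m hj hm, fun hj => hj ▸ hm⟩
    rw [Finset.mem_inter] at hm
    have hβval : ∀ j, j ∈ B → j ≠ m → β j = (d:ℝ)⁻¹ := by
      intro j hj hjm
      have hjA : j ∉ A := fun hjA =>
        hjm (Finset.mem_singleton.1 (hsingle ▸ Finset.mem_inter.2 ⟨hjA, hj⟩))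
      have := hcol j
      rw [hw.suppA j hjA, zero_add] at this
      exact this.symm
    have hβ0 : ∀ j, j ∉ B → β j = 0 := hw.suppB
    have hβm_le : β m ≤ (d:ℝ)⁻¹ := by
      have := hcol m
      have := hw.nonnegA m
      linarith [hcol m, hw.nonnegA m]
    have hsumβ : ∑ j, β j = ((B.card : ℝ) - 1) * (d:ℝ)⁻¹ + β m := by
      rw [← Finset.sum_subset (Finset.subset_univ B) (fun j _ hj => hβ0 j hj),
        sum_sdiff_singleton hm.2 β]
      have : ∑ j ∈ B \ {m}, β j = ∑ j ∈ B \ {m}, (d:ℝ)⁻¹ := by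
        refine Finset.sum_congr rfl fun j hj => ?_
        rw [Finset.mem_sdiff, Finset.mem_singleton] at hj
        exact hβval j hj.1 hj.2
      rw [this, Finset.sum_const, nsmul_eq_mul, Finset.sdiff_singleton_eq_erase,
        Finset.card_erase_of_mem hm.2]
      congr 2
      have h1B : 1 ≤ B.card := Finset.card_pos.2 ⟨m, hm.2⟩
      push_cast [Nat.cast_sub h1B]
      ring
    have hcard : B.card = i + 1 := by
      have hdne : (d:ℝ) ≠ 0 := ne_of_gt hd'
      have heq : (i:ℝ) + 2⁻¹ = ((B.card:ℝ) - 1) + β m * d := by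
        have h' : (i:ℝ) + 2⁻¹ = (∑ j, β j) * d := by
          rw [← hsnd, div_mul_cancel₀ _ hdne]
        rw [h', hsumβ, add_mul, mul_assoc, inv_mul_cancel₀ hdne, mul_one]
      have hb0 : 0 ≤ β m * d := mul_nonneg (hw.nonnegB m) (le_of_lt hd')
      have hb1 : β m * d ≤ 1 := by
        calc β m * d ≤ (d:ℝ)⁻¹ * d := by nlinarith
        _ = 1 := by field_simp
      have hlow : (i:ℝ) < B.card := by linarith
      have hhigh : (B.card:ℝ) < i + 2 := by linarith
      have hlow' : i < B.card := by exact_mod_cast hlow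
      have hhigh' : B.card < i + 2 := by exact_mod_cast hhigh
      omega
    have hAeq : A = Bᶜ ∪ {m} := by
      ext j
      rw [Finset.mem_union, Finset.mem_compl, Finset.mem_singleton]
      constructor
      · intro hj
        by_cases hjB : j ∈ B
        · exact Or.inr (Finset.mem_singleton.1
            (hsingle ▸ Finset.mem_inter.2 ⟨hj, hjB⟩))
        · exact Or.inl hjB
      · rintro (hj | rfl)
        · rcases hcover j with h | h
          · exact h
          · exact absurd h hj
        · exact hm.1
    exact ⟨B, m, hm.2, hcard, by rw [hs_eq, hAeq]⟩
  · exfalso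
    rw [Finset.not_nonempty_iff_eq_empty] at hne
    have hβval : ∀ j, β j = if j ∈ B then (d:ℝ)⁻¹ else 0 := by
      intro j
      by_cases hj : j ∈ B
      · have hjA : j ∉ A := fun hjA => by
          have : j ∈ A ∩ B := Finset.mem_inter.2 ⟨hjA, hj⟩
          rw [hne] at this
          exact absurd this (Finset.notMem_empty j)
        have := hcol j
        rw [hw.suppA j hjA, zero_add] at this
        rw [if_pos hj]
        exact this.symm
      · rw [if_neg hj]
        exact hw.suppB j hj
    have : (i + 2⁻¹) / d = B.card * (d:ℝ)⁻¹ := by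
      rw [hsnd, Finset.sum_congr rfl (fun j _ => hβval j), Finset.sum_ite_mem,
        Finset.univ_inter, Finset.sum_const, nsmul_eq_mul]
    have hdne : (d:ℝ) ≠ 0 := ne_of_gt hd'
    have heq : (i:ℝ) + 2⁻¹ = B.card := by
      have h' : (i:ℝ) + 2⁻¹ = ((B.card:ℝ) * (d:ℝ)⁻¹) * d := by
        rw [← this, div_mul_cancel₀ _ hdne]
      rw [h', mul_assoc, inv_mul_cancel₀ hdne, mul_one]
    have : (2 * B.card : ℝ) = 2 * i + 1 := by push_cast; linarith
    have hnat : 2 * B.card = 2 * i + 1 := by exact_mod_cast this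
    omega

lemma cover (hd : 0 < d) (μ : ℕ → Fin d)
    (hinj : ∀ k l, k < l → l < d → μ k ≠ μ l)
    {y : Fin d → ℝ} (hy : ∀ j, 0 ≤ y j) (h1 : ∑ j, y j = 1)
    {τ : ℝ} (h0 : 0 ≤ τ) (hτ : τ ≤ 1) :
    ∃ i, i < d ∧ ((y, τ) : PrismSpace d) ∈
      convexHull ℝ (rep (((Finset.range (i+1)).image μ)ᶜ ∪ {μ i})
        ((Finset.range (i+1)).image μ) : Set (PrismSpace d)) := by
  have hinjOn : Set.InjOn μ (Finset.range d : Set ℕ) := by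
    intro k hk l hl he
    simp only [Finset.coe_range, Set.mem_Iio] at hk hl
    by_contra hne
    rcases lt_or_gt_of_ne hne with h | h
    · exact hinj k l h hl he
    · exact hinj l k h hk he.symm
  have huniv : (Finset.range d).image μ = Finset.univ := by
    apply Finset.eq_univ_of_card
    rw [Finset.card_image_of_injOn hinjOn, Finset.card_range, Fintype.card_fin]
  set T : ℕ → ℝ := fun k => ∑ j ∈ (Finset.range (k+1)).image μ, y j with hT
  have hTlast : T (d-1) = 1 := by
    rw [hT]
    simp only []
    rw [Nat.sub_add_cancel hd, huniv, h1]
  have hex : ∃ k, τ ≤ T k := ⟨d - 1, hTlast ▸ hτ⟩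
  set i := Nat.find hex with hi
  have hQi : τ ≤ T i := Nat.find_spec hex
  have hile : i ≤ d - 1 := Nat.find_min' hex (hTlast ▸ hτ)
  have hid : i < d := lt_of_le_of_lt hile (Nat.sub_lt hd one_pos)
  have hmem : μ i ∈ (Finset.range (i+1)).image μ :=
    Finset.mem_image.2 ⟨i, Finset.mem_range.2 (Nat.lt_succ_self i), rfl⟩
  have hnew : μ i ∉ (Finset.range i).image μ := by
    intro h
    obtain ⟨k, hk, he⟩ := Finset.mem_image.1 h
    exact hinj k i (Finset.mem_range.1 hk) hid he
  have hsdiff : ((Finset.range (i+1)).image μ) \ {μ i} = (Finset.range i).image μ := by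
    rw [Finset.sdiff_singleton_eq_erase, Finset.range_add_one, Finset.image_insert,
      Finset.erase_insert hnew]
  have hlow : ∑ j ∈ ((Finset.range (i+1)).image μ) \ {μ i}, y j ≤ τ := by
    rw [hsdiff]
    rcases Nat.eq_zero_or_pos i with h | h
    · rw [h]
      simpa using h0
    · have hmin : ¬ τ ≤ T (i - 1) := Nat.find_min hex (Nat.sub_lt h one_pos)
      have : T (i-1) ≤ τ := le_of_lt (not_le.1 hmin)
      rw [hT] at this
      simp only [] at this
      rwa [Nat.sub_add_cancel h] at this
  exact ⟨i, hid, mem_slab hmem hy h1 hlow hQi⟩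

lemma stairFacet_eq_rep (π : Equiv.Perm (Fin d)) (i : Fin d) :
    stairFacet d π i =
      rep ((Finset.univ.filter fun j : Fin d => j ≤ i).image π)
        ((Finset.univ.filter fun j : Fin d => i ≤ j).image π) := by
  rw [stairFacet, rep, Finset.image_image, Finset.image_image]
  rfl

lemma stairFacet_one (i : Fin d) :
    stairFacet d 1 i = rep (Finset.univ.filter fun j : Fin d => j ≤ i)
      (Finset.univ.filter fun j : Fin d => i ≤ j) := by
  rw [stairFacet_eq_rep]
  simp

lemma facet_inter_one_aux {i k : Fin d} (hik : i < k) {x : PrismSpace d}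
    (hxi : x ∈ convexHull ℝ (stairFacet d 1 i : Set (PrismSpace d)))
    (hxk : x ∈ convexHull ℝ (stairFacet d 1 k : Set (PrismSpace d))) :
    x ∈ convexHull ℝ (rep (Finset.univ.filter fun j : Fin d => j ≤ i)
      (Finset.univ.filter fun j : Fin d => k ≤ j) : Set (PrismSpace d)) := by
  rw [stairFacet_one] at hxi hxk
  obtain ⟨α, β, hw⟩ := mem_rep_iff.1 hxi
  obtain ⟨α', β', hw'⟩ := mem_rep_iff.1 hxk
  have hy : ∀ j, 0 ≤ x.1 j := fun j => by
    rw [hw.col j]; exact add_nonneg (hw.nonnegA j) (hw.nonnegB j)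
  have hβeq : ∀ j, i < j → β j = x.1 j := by
    intro j hj
    have : j ∉ Finset.univ.filter fun j : Fin d => j ≤ i := by
      simp [not_le.2 hj]
    rw [hw.col j, hw.suppA j this, zero_add]
  have c1 : ∑ j ∈ Finset.univ.filter (fun j : Fin d => i < j), x.1 j ≤ x.2 := by
    rw [hw.snd]
    calc ∑ j ∈ Finset.univ.filter (fun j : Fin d => i < j), x.1 j
        = ∑ j ∈ Finset.univ.filter (fun j : Fin d => i < j), β j :=
          Finset.sum_congr rfl fun j hj => (hβeq j (Finset.mem_filter.1 hj).2).symm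
      _ ≤ ∑ j, β j := Finset.sum_le_sum_of_subset_of_nonneg (Finset.subset_univ _)
          (fun j _ _ => hw.nonnegB j)
  have c2 : x.2 ≤ ∑ j ∈ Finset.univ.filter (fun j : Fin d => k ≤ j), x.1 j := by
    rw [hw'.snd]
    calc ∑ j, β' j = ∑ j ∈ Finset.univ.filter (fun j : Fin d => k ≤ j), β' j := by
          refine (Finset.sum_subset (Finset.subset_univ _) fun j _ hj => ?_).symm
          exact hw'.suppB j hj
      _ ≤ ∑ j ∈ Finset.univ.filter (fun j : Fin d => k ≤ j), x.1 j :=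
          Finset.sum_le_sum fun j _ => by rw [hw'.col j]; linarith [hw'.nonnegA j]
  have hsubz : (Finset.univ.filter fun j : Fin d => k ≤ j) ⊆
      (Finset.univ.filter fun j : Fin d => i < j) := by
    intro j hj
    rw [Finset.mem_filter] at hj ⊢
    exact ⟨hj.1, lt_of_lt_of_le hik hj.2⟩
  have c3 : ∑ j ∈ Finset.univ.filter (fun j : Fin d => k ≤ j), x.1 j ≤
      ∑ j ∈ Finset.univ.filter (fun j : Fin d => i < j), x.1 j :=
    Finset.sum_le_sum_of_subset_of_nonneg hsubz (fun j _ _ => hy j)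
  have eq1 : x.2 = ∑ j ∈ Finset.univ.filter (fun j : Fin d => k ≤ j), x.1 j :=
    le_antisymm c2 (by linarith)
  have eq2 : ∑ j ∈ Finset.univ.filter (fun j : Fin d => i < j), x.1 j =
      ∑ j ∈ Finset.univ.filter (fun j : Fin d => k ≤ j), x.1 j := by linarith
  have hzero : ∀ j : Fin d, i < j → ¬ k ≤ j → x.1 j = 0 := by
    have hdz : ∑ j ∈ (Finset.univ.filter fun j : Fin d => i < j) \
        (Finset.univ.filter fun j : Fin d => k ≤ j), x.1 j = 0 := by
      rw [Finset.sum_sdiff_eq_sub hsubz, eq2, sub_self]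
    intro j hj1 hj2
    refine (Finset.sum_eq_zero_iff_of_nonneg fun j _ => hy j).1 hdz j ?_
    rw [Finset.mem_sdiff, Finset.mem_filter, Finset.mem_filter]
    exact ⟨⟨Finset.mem_univ j, hj1⟩, fun h => hj2 h.2⟩
  refine IsRepWt.mem (α := fun j => if j ≤ i then x.1 j else 0)
    (β := fun j => if k ≤ j then x.1 j else 0) ?_
  refine ⟨?_, ?_, ?_, ?_, ?_, hw.total, ?_⟩
  · intro j; split
    · exact hy j
    · exact le_refl 0
  · intro j; split
    · exact hy j
    · exact le_refl 0
  · intro j hj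
    rw [Finset.mem_filter] at hj
    push_neg at hj
    rw [if_neg (not_le.2 (hj (Finset.mem_univ j)))]
  · intro j hj
    rw [Finset.mem_filter] at hj
    push_neg at hj
    rw [if_neg (not_le.2 (hj (Finset.mem_univ j)))]
  · intro j
    by_cases hji : j ≤ i
    · have hjk : ¬ k ≤ j := fun h => absurd (lt_of_lt_of_le hik h) (not_lt.2 hji)
      rw [if_pos hji, if_neg hjk, add_zero]
    · by_cases hjk : k ≤ j
      · rw [if_pos hjk, if_neg hji, zero_add]
      · rw [if_neg hji, if_neg hjk, add_zero]
        exact hzero j (not_le.1 hji) hjk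
  · rw [eq1, ← Finset.sum_filter]

lemma facet_inter_one (i k : Fin d) :
    convexHull ℝ (stairFacet d 1 i : Set (PrismSpace d)) ∩
      convexHull ℝ (stairFacet d 1 k : Set (PrismSpace d)) ⊆
    convexHull ℝ ((stairFacet d 1 i : Set (PrismSpace d)) ∩
      (stairFacet d 1 k : Set (PrismSpace d))) := by
  have key : ∀ i k : Fin d, i < k →
      convexHull ℝ (stairFacet d 1 i : Set (PrismSpace d)) ∩
        convexHull ℝ (stairFacet d 1 k : Set (PrismSpace d)) ⊆
      convexHull ℝ ((stairFacet d 1 i : Set (PrismSpace d)) ∩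
        (stairFacet d 1 k : Set (PrismSpace d))) := by
    intro i k hik
    rintro x ⟨hxi, hxk⟩
    have hmem := facet_inter_one_aux hik hxi hxk
    have hinter : (stairFacet d 1 i) ∩ (stairFacet d 1 k) =
        rep (Finset.univ.filter fun j : Fin d => j ≤ i)
          (Finset.univ.filter fun j : Fin d => k ≤ j) := by
      rw [stairFacet_one, stairFacet_one, rep_inter]
      congr 1
      · ext j
        simp only [Finset.mem_inter, Finset.mem_filter, Finset.mem_univ, true_and]
        exact ⟨fun h => h.1, fun h => ⟨h, le_trans h (le_of_lt hik)⟩⟩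
      · ext j
        simp only [Finset.mem_inter, Finset.mem_filter, Finset.mem_univ, true_and]
        exact ⟨fun h => h.2, fun h => ⟨le_trans (le_of_lt hik) h, h⟩⟩
    rw [← Finset.coe_inter, hinter]
    exact hmem
  rcases lt_trichotomy i k with h | h | h
  · exact key i k h
  · subst h
    rintro x ⟨hx, _⟩
    rw [Set.inter_self]
    exact hx
  · rintro x ⟨hxi, hxk⟩
    rw [Set.inter_comm]
    exact key k i h ⟨hxk, hxi⟩

lemma filter_cols (i : Fin d) :
    (Finset.univ.filter fun j : Fin d => j ≤ i) ∩ (Finset.univ.filter fun j : Fin d => i ≤ j)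
      ⊆ {i} := by
  intro j hj
  simp only [Finset.mem_inter, Finset.mem_filter, Finset.mem_univ, true_and] at hj
  simp [le_antisymm hj.1 hj.2]

lemma stairFacet_one_subset_rep_univ (i : Fin d) :
    stairFacet d 1 i ⊆ rep Finset.univ Finset.univ := by
  rw [stairFacet_one]
  exact rep_mono (Finset.subset_univ _) (Finset.subset_univ _)

lemma stairFaces_vertices {s : Finset (PrismSpace d)} (hs : s ∈ stairFaces d 1) :
    (s : Set (PrismSpace d)) ⊆ Set.range (ptA d) ∪ Set.range (ptB d) := by
  obtain ⟨_, i, hsub⟩ := hs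
  rw [← rep_univ_coe]
  exact Finset.coe_subset.2 (hsub.trans (stairFacet_one_subset_rep_univ i))

noncomputable def stairComplex (d : ℕ) : Geometry.SimplicialComplex ℝ (PrismSpace d) where
  faces := stairFaces d 1
  indep := by
    rintro s ⟨hne, i, hsub⟩
    rw [stairFacet_one] at hsub
    exact rep_indep_subset (filter_cols i) hsub
  isRelLowerSet_faces := by
    rintro s ⟨hne, i, hsub⟩
    refine ⟨hne, ?_⟩
    intro t hts htne
    exact ⟨htne, i, hts.trans hsub⟩
  inter_subset_convexHull := by
    rintro s t ⟨hsne, i, hsub⟩ ⟨htne, k, htsub⟩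
    have h := inter_of_facets (F := stairFacet d 1 i) (G := stairFacet d 1 k)
      (by rw [stairFacet_one]; exact rep_indep (filter_cols i))
      (by rw [stairFacet_one]; exact rep_indep (filter_cols k))
      hsub htsub (facet_inter_one i k)
    exact h

lemma stairFacet_mem_faces (i : Fin d) : stairFacet d 1 i ∈ stairFaces d 1 := by
  refine ⟨?_, i, Finset.Subset.refl _⟩
  rw [stairFacet_one]
  refine Finset.Nonempty.inr ?_
  exact ⟨ptB d i, Finset.mem_image.2 ⟨i, by simp, rfl⟩⟩

/-- reversed enumeration of `Fin d` -/
def rev (d : ℕ) (hd : 0 < d) : ℕ → Fin d := fun k => ⟨d - 1 - k, by omega⟩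

lemma rev_inj (hd : 0 < d) : ∀ k l, k < l → l < d → rev d hd k ≠ rev d hd l := by
  intro k l hkl hld he
  have := congrArg Fin.val he
  simp only [rev] at this
  omega

lemma rev_chain (hd : 0 < d) {i : ℕ} (hid : i < d) :
    (Finset.range (i+1)).image (rev d hd) =
      Finset.univ.filter (fun j : Fin d => rev d hd i ≤ j) := by
  ext j
  have hj := j.isLt
  simp only [Finset.mem_image, Finset.mem_range, Finset.mem_filter, Finset.mem_univ,
    true_and, Fin.le_def, rev]
  constructor
  · rintro ⟨k, hk, rfl⟩
    simp only []
    omega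
  · intro h
    refine ⟨d - 1 - j.val, by omega, ?_⟩
    apply Fin.ext
    simp only []
    omega

lemma rev_chain_compl (hd : 0 < d) {i : ℕ} (hid : i < d) :
    ((Finset.univ.filter (fun j : Fin d => rev d hd i ≤ j))ᶜ ∪ {rev d hd i}) =
      Finset.univ.filter (fun j : Fin d => j ≤ rev d hd i) := by
  ext j
  have hj := j.isLt
  simp only [Finset.mem_union, Finset.mem_compl, Finset.mem_filter, Finset.mem_univ, true_and,
    Finset.mem_singleton, Fin.le_def, rev, Fin.ext_iff]
  omega

lemma space_subset_prism : (stairComplex d).space ⊆ prism d := by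
  refine Set.iUnion₂_subset fun s hs => ?_
  obtain ⟨_, i, hsub⟩ := hs
  rw [prism_eq]
  exact convexHull_mono
    (Finset.coe_subset.2 (hsub.trans (stairFacet_one_subset_rep_univ i)))

lemma prism_subset_space (hd : 0 < d) : prism d ⊆ (stairComplex d).space := by
  intro x hx
  rw [prism_eq] at hx
  obtain ⟨α, β, hw⟩ := mem_rep_iff.1 hx
  have hy : ∀ j, 0 ≤ x.1 j := fun j => by
    rw [hw.col j]; exact add_nonneg (hw.nonnegA j) (hw.nonnegB j)
  have hτ0 : 0 ≤ x.2 := by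
    rw [hw.snd]; exact Finset.sum_nonneg fun j _ => hw.nonnegB j
  have hτ1 : x.2 ≤ 1 := by
    rw [hw.snd, ← hw.total]
    refine Finset.sum_le_sum fun j _ => ?_
    rw [hw.col j]; linarith [hw.nonnegA j]
  obtain ⟨i, hid, hmem⟩ := cover hd (rev d hd) (rev_inj hd) hy hw.total hτ0 hτ1
  rw [Geometry.SimplicialComplex.mem_space_iff]
  refine ⟨stairFacet d 1 (rev d hd i), stairFacet_mem_faces _, ?_⟩
  rw [stairFacet_one]
  rw [rev_chain hd hid, rev_chain_compl hd hid] at hmem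
  rwa [Prod.mk.eta] at hmem

lemma exists_stair (hd : 0 < d) : ∃ K : Geometry.SimplicialComplex ℝ (PrismSpace d),
    K.space = prism d ∧
    (∀ s ∈ K.faces, (s : Set (PrismSpace d)) ⊆ Set.range (ptA d) ∪ Set.range (ptB d)) ∧
    K.faces = stairFaces d 1 :=
  ⟨stairComplex d, Set.Subset.antisymm space_subset_prism (prism_subset_space hd),
    fun _ hs => stairFaces_vertices hs, rfl⟩

lemma rep_support {A B : Finset (Fin d)} {m : Fin d} (hAB : A ∩ B ⊆ {m})
    {x : PrismSpace d} {α β : Fin d → ℝ} (h : IsRepWt A B x α β)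
    {t : Finset (PrismSpace d)} (ht : t ⊆ rep A B)
    (hxt : x ∈ convexHull ℝ (t : Set (PrismSpace d))) :
    (∀ j, α j ≠ 0 → ptA d j ∈ t) ∧ (∀ j, β j ≠ 0 → ptB d j ∈ t) := by
  have hsupp := support_subset (rep_indep hAB) ht h.wt_sum_eq h.wt_sum_smul_eq hxt
  constructor
  · intro j hj
    have hjA : j ∈ A := by_contra fun h' => hj (h.suppA j h')
    exact hsupp (ptA d j) (mem_rep_A.2 hjA) (by rw [wt_ptA]; exact hj)
  · intro j hj
    have hjB : j ∈ B := by_contra fun h' => hj (h.suppB j h')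
    exact hsupp (ptB d j) (mem_rep_B.2 hjB) (by rw [wt_ptB]; exact hj)

lemma slab_top_mem (hd : 0 < d) {B : Finset (Fin d)} {m : Fin d} (hm : m ∈ B) :
    cpt d ((B.card : ℝ) * (d:ℝ)⁻¹) ∈
      convexHull ℝ (rep (Bᶜ ∪ {m}) B : Set (PrismSpace d)) := by
  have hd' : (0:ℝ) < d := Nat.cast_pos.2 hd
  have h1B : 1 ≤ B.card := Finset.card_pos.2 ⟨m, hm⟩
  have hsBm : ∑ _j ∈ B \ {m}, (d:ℝ)⁻¹ = ((B.card:ℝ) - 1) * (d:ℝ)⁻¹ := by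
    rw [Finset.sum_const, nsmul_eq_mul, Finset.sdiff_singleton_eq_erase,
      Finset.card_erase_of_mem hm, Nat.cast_sub h1B, Nat.cast_one]
  have hsB : ∑ _j ∈ B, (d:ℝ)⁻¹ = (B.card : ℝ) * (d:ℝ)⁻¹ := by
    rw [Finset.sum_const, nsmul_eq_mul]
  refine mem_slab hm (fun _ => by positivity) (sum_const_inv hd) ?_ (le_of_eq hsB.symm)
  rw [hsBm]
  have : (0:ℝ) < (d:ℝ)⁻¹ := by positivity
  nlinarith

lemma slab_bot_mem (hd : 0 < d) {B : Finset (Fin d)} {m : Fin d} (hm : m ∈ B) :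
    cpt d (((B.card : ℝ) - 1) * (d:ℝ)⁻¹) ∈
      convexHull ℝ (rep (Bᶜ ∪ {m}) B : Set (PrismSpace d)) := by
  have hd' : (0:ℝ) < d := Nat.cast_pos.2 hd
  have h1B : 1 ≤ B.card := Finset.card_pos.2 ⟨m, hm⟩
  have hsBm : ∑ _j ∈ B \ {m}, (d:ℝ)⁻¹ = ((B.card:ℝ) - 1) * (d:ℝ)⁻¹ := by
    rw [Finset.sum_const, nsmul_eq_mul, Finset.sdiff_singleton_eq_erase,
      Finset.card_erase_of_mem hm, Nat.cast_sub h1B, Nat.cast_one]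
  have hsB : ∑ _j ∈ B, (d:ℝ)⁻¹ = (B.card : ℝ) * (d:ℝ)⁻¹ := by
    rw [Finset.sum_const, nsmul_eq_mul]
  refine mem_slab hm (fun _ => by positivity) (sum_const_inv hd) (le_of_eq hsBm) ?_
  rw [hsB]
  have : (0:ℝ) < (d:ℝ)⁻¹ := by positivity
  nlinarith

lemma boundary_support (hd : 0 < d) {B : Finset (Fin d)} {m : Fin d} (hm : m ∈ B)
    {t : Finset (PrismSpace d)} (ht : t ⊆ rep (Bᶜ ∪ {m}) B)
    (hxt : cpt d ((B.card : ℝ) * (d:ℝ)⁻¹) ∈ convexHull ℝ (t : Set (PrismSpace d))) :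
    (∀ j ∈ B, ptB d j ∈ t) ∧ (∀ j, j ∉ B → ptA d j ∈ t) := by
  have hd' : (0:ℝ) < d := Nat.cast_pos.2 hd
  have hdpos : (0:ℝ) < (d:ℝ)⁻¹ := by positivity
  have h1B : 1 ≤ B.card := Finset.card_pos.2 ⟨m, hm⟩
  have hsBm : ∑ _j ∈ B \ {m}, (d:ℝ)⁻¹ = ((B.card:ℝ) - 1) * (d:ℝ)⁻¹ := by
    rw [Finset.sum_const, nsmul_eq_mul, Finset.sdiff_singleton_eq_erase,
      Finset.card_erase_of_mem hm, Nat.cast_sub h1B, Nat.cast_one]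
  obtain ⟨α, β, hw⟩ := mem_rep_iff.1 (slab_top_mem hd hm)
  have hβval : ∀ j, j ∈ B → j ≠ m → β j = (d:ℝ)⁻¹ := by
    intro j hjB hjm
    have hjA : j ∉ Bᶜ ∪ {m} := by
      rw [Finset.mem_union, Finset.mem_compl, Finset.mem_singleton]
      push_neg
      exact ⟨hjB, hjm⟩
    have := hw.col j
    rw [hw.suppA j hjA, zero_add] at this
    exact this.symm
  have hβm : β m = (d:ℝ)⁻¹ := by
    have hsnd := hw.snd
    have he : ∑ j, β j = ∑ j ∈ B, β j :=
      (Finset.sum_subset (Finset.subset_univ B) fun j _ hj => hw.suppB j hj).symm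
    rw [he, sum_sdiff_singleton hm] at hsnd
    have he2 : ∑ j ∈ B \ {m}, β j = ((B.card:ℝ) - 1) * (d:ℝ)⁻¹ := by
      rw [← hsBm]
      refine Finset.sum_congr rfl fun j hj => ?_
      rw [Finset.mem_sdiff, Finset.mem_singleton] at hj
      exact hβval j hj.1 hj.2
    rw [he2] at hsnd
    have : (cpt d ((B.card : ℝ) * (d:ℝ)⁻¹)).2 = (B.card : ℝ) * (d:ℝ)⁻¹ := rfl
    rw [this] at hsnd
    linarith
  have hαval : ∀ j, j ∉ B → α j = (d:ℝ)⁻¹ := by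
    intro j hj
    have := hw.col j
    rw [hw.suppB j hj, add_zero] at this
    exact this.symm
  have hsupp := rep_support stair_cols hw ht hxt
  constructor
  · intro j hj
    by_cases hjm : j = m
    · subst hjm
      exact hsupp.2 j (by rw [hβm]; exact ne_of_gt hdpos)
    · exact hsupp.2 j (by rw [hβval j hj hjm]; exact ne_of_gt hdpos)
  · intro j hj
    exact hsupp.1 j (by rw [hαval j hj]; exact ne_of_gt hdpos)

variable {K : Geometry.SimplicialComplex ℝ (PrismSpace d)}

lemma step_exists (hd : 0 < d) (hsp : K.space = prism d)
    (hver : ∀ s ∈ K.faces,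
      (s : Set (PrismSpace d)) ⊆ Set.range (ptA d) ∪ Set.range (ptB d)) :
    ∀ i : ℕ, i < d → ∃ (B : Finset (Fin d)) (m : Fin d),
      m ∈ B ∧ B.card = i + 1 ∧ rep (Bᶜ ∪ {m}) B ∈ K.faces := by
  intro i hid
  have hd' : (0:ℝ) < d := Nat.cast_pos.2 hd
  have ht1 : ((i:ℝ) + 2⁻¹)/d ≤ 1 := by
    rw [div_le_one hd']
    have : (i:ℝ) + 1 ≤ d := by exact_mod_cast hid
    linarith
  have ht0 : (0:ℝ) ≤ ((i:ℝ) + 2⁻¹)/d := by positivity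
  have hc : cpt d ((i + 2⁻¹)/d) ∈ prism d := by
    rw [prism_eq]
    refine IsRepWt.mem (A := Finset.univ) (B := Finset.univ)
      (α := fun _ => (1 - ((i:ℝ) + 2⁻¹)/d) * (d:ℝ)⁻¹)
      (β := fun _ => (((i:ℝ) + 2⁻¹)/d) * (d:ℝ)⁻¹) ?_
    refine ⟨fun j => mul_nonneg (by linarith) (by positivity),
      fun j => mul_nonneg ht0 (by positivity),
      fun j hj => absurd (Finset.mem_univ j) hj,
      fun j hj => absurd (Finset.mem_univ j) hj,
      fun j => by show (d:ℝ)⁻¹ = _; ring, sum_const_inv hd, ?_⟩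
    show ((i:ℝ) + 2⁻¹)/d = ∑ _j : Fin d, (((i:ℝ) + 2⁻¹)/d) * (d:ℝ)⁻¹
    rw [Finset.sum_const, Finset.card_univ, Fintype.card_fin, nsmul_eq_mul]
    field_simp
  rw [← hsp, Geometry.SimplicialComplex.mem_space_iff] at hc
  obtain ⟨s, hsf, hxs⟩ := hc
  obtain ⟨B, m, hm, hcard, hs_eq⟩ := face_struct hd (hver s hsf) (K.indep hsf) hxs
  exact ⟨B, m, hm, hcard, hs_eq ▸ hsf⟩

lemma chain_step (hd : 0 < d) {B B' : Finset (Fin d)} {m m' : Fin d}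
    (hm : m ∈ B) (hm' : m' ∈ B') {i : ℕ} (hcard : B.card = i + 1) (hcard' : B'.card = i + 2)
    (hF : rep (Bᶜ ∪ {m}) B ∈ K.faces) (hF' : rep (B'ᶜ ∪ {m'}) B' ∈ K.faces) :
    B' = insert m' B ∧ m' ∉ B := by
  have hτeq : ((B.card : ℝ)) * (d:ℝ)⁻¹ = ((B'.card:ℝ) - 1) * (d:ℝ)⁻¹ := by
    rw [hcard, hcard']; push_cast; ring
  have hx1 : cpt d ((B.card : ℝ) * (d:ℝ)⁻¹) ∈
      convexHull ℝ (rep (Bᶜ ∪ {m}) B : Set (PrismSpace d)) := slab_top_mem hd hm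
  have hx2 : cpt d ((B.card : ℝ) * (d:ℝ)⁻¹) ∈
      convexHull ℝ (rep (B'ᶜ ∪ {m'}) B' : Set (PrismSpace d)) := by
    rw [hτeq]; exact slab_bot_mem hd hm'
  have hxint := K.inter_subset_convexHull hF hF' ⟨hx1, hx2⟩
  rw [← Finset.coe_inter] at hxint
  have hbs := boundary_support hd hm Finset.inter_subset_left hxint
  have hBB' : B ⊆ B' := fun j hj => mem_rep_B.1 ((Finset.mem_inter.1 (hbs.1 j hj)).2)
  have hnotB : ∀ j, j ∉ B → j ∈ B'ᶜ ∪ {m'} := fun j hj =>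
    mem_rep_A.1 ((Finset.mem_inter.1 (hbs.2 j hj)).2)
  have hm'B : m' ∉ B := by
    intro hm'B
    have hss : B ⊂ B' := Finset.ssubset_iff_subset_ne.2 ⟨hBB', fun h => by
      rw [h] at hcard; omega⟩
    obtain ⟨n, hnB', hnB⟩ := Finset.exists_of_ssubset hss
    rcases Finset.mem_union.1 (hnotB n hnB) with h | h
    · exact (Finset.mem_compl.1 h) hnB'
    · rw [Finset.mem_singleton] at h
      subst h
      exact hnB hm'B
  have hsub2 : B' ⊆ insert m' B := by
    intro n hn
    by_cases hnB : n ∈ B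
    · exact Finset.mem_insert_of_mem hnB
    · rcases Finset.mem_union.1 (hnotB n hnB) with h | h
      · exact absurd hn (Finset.mem_compl.1 h)
      · rw [Finset.mem_singleton] at h
        exact h ▸ Finset.mem_insert_self m' B
  have hicard : (insert m' B).card = i + 2 := by
    rw [Finset.card_insert_of_notMem hm'B, hcard]
  exact ⟨Finset.eq_of_subset_of_card_le hsub2 (by rw [hicard, hcard']), hm'B⟩

lemma uniqueness (hd : 0 < d) (hsp : K.space = prism d)
    (hver : ∀ s ∈ K.faces,
      (s : Set (PrismSpace d)) ⊆ Set.range (ptA d) ∪ Set.range (ptB d)) :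
    ∃ π : Equiv.Perm (Fin d), K.faces = stairFaces d π := by
  classical
  choose Bn mn hmB hcardB hfB using step_exists hd hsp hver
  set Mh : ℕ → Fin d := fun k => if h : k < d then mn k h else ⟨0, hd⟩ with hMhdef
  set Bh : ℕ → Finset (Fin d) := fun k => if h : k < d then Bn k h else ∅ with hBhdef
  have hMh : ∀ k (h : k < d), Mh k = mn k h := fun k h => dif_pos h
  have hBh : ∀ k (h : k < d), Bh k = Bn k h := fun k h => dif_pos h
  have hmBh : ∀ k, k < d → Mh k ∈ Bh k := fun k h => by
    rw [hMh k h, hBh k h]; exact hmB k h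
  have hcardBh : ∀ k, k < d → (Bh k).card = k + 1 := fun k h => by
    rw [hBh k h]; exact hcardB k h
  have hfBh : ∀ k, (h : k < d) → rep ((Bh k)ᶜ ∪ {Mh k}) (Bh k) ∈ K.faces := fun k h => by
    rw [hMh k h, hBh k h]; exact hfB k h
  have hchain : ∀ k, k + 1 < d → Bh (k+1) = insert (Mh (k+1)) (Bh k) ∧ Mh (k+1) ∉ Bh k := by
    intro k h
    have h0 : k < d := by omega
    rw [hBh _ h, hBh _ h0, hMh _ h]
    exact chain_step hd (hmB k h0) (hmB (k+1) h) (hcardB k h0) (hcardB (k+1) h)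
      (hfB k h0) (hfB (k+1) h)
  have hrepr : ∀ k, k < d → Bh k = (Finset.range (k+1)).image Mh := by
    intro k
    induction k with
    | zero =>
      intro h
      obtain ⟨a, ha⟩ := Finset.card_eq_one.1 (hcardBh 0 h)
      have hma : Mh 0 = a := by
        have := hmBh 0 h
        rwa [ha, Finset.mem_singleton] at this
      rw [ha, ← hma]
      simp [Finset.range_one]
    | succ k ih =>
      intro h
      have h0 : k < d := by omega
      rw [(hchain k h).1, ih h0]
      rw [eq_comm, Finset.range_add_one, Finset.image_insert]
  have hinjM : ∀ k l, k < l → l < d → Mh k ≠ Mh l := by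
    intro k l hkl hld he
    have hl0 : l - 1 + 1 = l := by omega
    have hch := hchain (l-1) (by omega)
    have hk_mem : Mh k ∈ Bh (l-1) := by
      rw [hrepr (l-1) (by omega)]
      exact Finset.mem_image.2 ⟨k, Finset.mem_range.2 (by omega), rfl⟩
    rw [he] at hk_mem
    have hnot := hch.2
    rw [hl0] at hnot
    exact hnot hk_mem
  have hsurjM : ∀ x : Fin d, ∃ k, k < d ∧ Mh k = x := by
    intro x
    have huniv : Bh (d-1) = Finset.univ := by
      apply Finset.eq_univ_of_card
      rw [hcardBh (d-1) (by omega), Fintype.card_fin]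
      omega
    have : x ∈ Bh (d-1) := huniv ▸ Finset.mem_univ x
    rw [hrepr (d-1) (by omega)] at this
    obtain ⟨k, hk, he⟩ := Finset.mem_image.1 this
    exact ⟨k, by have := Finset.mem_range.1 hk; omega, he⟩
  have hginj : Function.Injective (fun j : Fin d => Mh (d - 1 - j.val)) := by
    intro a b he
    by_contra hab
    have hav := a.isLt
    have hbv := b.isLt
    have hne : d - 1 - a.val ≠ d - 1 - b.val := by
      intro h
      exact hab (Fin.ext (by omega))
    rcases Nat.lt_or_ge (d-1-a.val) (d-1-b.val) with h | h
    · exact hinjM _ _ h (by omega) he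
    · exact hinjM _ _ (by omega : d-1-b.val < d-1-a.val) (by omega) he.symm
  set π : Equiv.Perm (Fin d) :=
    Equiv.ofBijective _ (Finite.injective_iff_bijective.1 hginj) with hπ
  have hπval : ∀ j : Fin d, π j = Mh (d - 1 - j.val) := fun j => rfl
  have hfacet : ∀ i0 : Fin d, stairFacet d π i0 =
      rep ((Bh (d-1-i0.val))ᶜ ∪ {Mh (d-1-i0.val)}) (Bh (d-1-i0.val)) := by
    intro i0
    have hi0 := i0.isLt
    have hi'd : d - 1 - i0.val < d := by omega
    have hBeq : (Finset.univ.filter fun j : Fin d => i0 ≤ j).image π = Bh (d-1-i0.val) := by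
      rw [hrepr _ hi'd]
      ext x
      simp only [Finset.mem_image, Finset.mem_filter, Finset.mem_univ, true_and,
        Finset.mem_range, Fin.le_def]
      constructor
      · rintro ⟨j, hj, rfl⟩
        have hjv := j.isLt
        exact ⟨d - 1 - j.val, by omega, (hπval j).symm⟩
      · rintro ⟨k, hk, rfl⟩
        refine ⟨⟨d - 1 - k, by omega⟩, by simp; omega, ?_⟩
        rw [hπval]
        congr 1
        simp only []
        omega
    have hAeq : (Finset.univ.filter fun j : Fin d => j ≤ i0).image π =
        (Bh (d-1-i0.val))ᶜ ∪ {Mh (d-1-i0.val)} := by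
      ext x
      constructor
      · intro hx
        obtain ⟨j, hj, rfl⟩ := Finset.mem_image.1 hx
        have hjle : j.val ≤ i0.val := (Finset.mem_filter.1 hj).2
        have hjv := j.isLt
        by_cases hk : d - 1 - j.val = d - 1 - i0.val
        · rw [Finset.mem_union, Finset.mem_singleton, hπval, hk]
          exact Or.inr rfl
        · rw [Finset.mem_union, Finset.mem_compl]
          left
          rw [hrepr _ hi'd]
          intro hmem
          obtain ⟨l, hl, he⟩ := Finset.mem_image.1 hmem
          rw [hπval] at he
          have hl' := Finset.mem_range.1 hl
          exact hinjM l (d-1-j.val) (by omega) (by omega) he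
      · intro hx
        rcases Finset.mem_union.1 hx with hx | hx
        · obtain ⟨k, hkd, rfl⟩ := hsurjM x
          have hki' : d - 1 - i0.val < k := by
            by_contra h
            apply Finset.mem_compl.1 hx
            rw [hrepr _ hi'd]
            exact Finset.mem_image.2 ⟨k, Finset.mem_range.2 (by omega), rfl⟩
          refine Finset.mem_image.2 ⟨⟨d - 1 - k, by omega⟩,
            Finset.mem_filter.2 ⟨Finset.mem_univ _, ?_⟩, ?_⟩
          · rw [Fin.le_def]
            simp only []
            omega
          · rw [hπval]
            congr 1
            simp only []
            omega
        · rw [Finset.mem_singleton] at hx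
          subst hx
          exact Finset.mem_image.2 ⟨i0, Finset.mem_filter.2 ⟨Finset.mem_univ _, le_refl i0⟩,
            (hπval i0).symm⟩
    rw [stairFacet_eq_rep, hAeq, hBeq]
  refine ⟨π, Set.ext fun s => ⟨?_, ?_⟩⟩
  · intro hs
    have hsne : s.Nonempty := Finset.nonempty_iff_ne_empty.2
      (fun h => K.empty_notMem (h ▸ hs))
    have hcz : ((s.card : ℝ)) ≠ 0 := Nat.cast_ne_zero.2 hsne.card_pos.ne'
    set w : PrismSpace d → ℝ := fun _ => (s.card : ℝ)⁻¹ with hwdef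
    have hw1 : ∑ p ∈ s, w p = 1 := by
      rw [hwdef, Finset.sum_const, nsmul_eq_mul]
      field_simp
    set x : PrismSpace d := ∑ p ∈ s, w p • p with hxdef
    have hxs : x ∈ convexHull ℝ (s : Set (PrismSpace d)) :=
      Finset.mem_convexHull'.2 ⟨w, fun y _ => by rw [hwdef]; positivity, hw1, rfl⟩
    have hxprism : x ∈ prism d := by
      rw [← hsp]
      exact Geometry.SimplicialComplex.convexHull_subset_space hs hxs
    rw [prism_eq] at hxprism
    obtain ⟨α, β, hw'⟩ := mem_rep_iff.1 hxprism
    have hy : ∀ j, 0 ≤ x.1 j := fun j => by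
      rw [hw'.col j]; exact add_nonneg (hw'.nonnegA j) (hw'.nonnegB j)
    have hτ0 : 0 ≤ x.2 := by
      rw [hw'.snd]; exact Finset.sum_nonneg fun j _ => hw'.nonnegB j
    have hτ1 : x.2 ≤ 1 := by
      rw [hw'.snd, ← hw'.total]
      refine Finset.sum_le_sum fun j _ => ?_
      rw [hw'.col j]; linarith [hw'.nonnegA j]
    obtain ⟨i, hid, hmem⟩ := cover hd Mh (fun k l hkl hld => hinjM k l hkl hld)
      hy hw'.total hτ0 hτ1
    rw [← hrepr i hid, Prod.mk.eta] at hmem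
    set i0 : Fin d := ⟨d - 1 - i, by omega⟩ with hi0def
    have hival : d - 1 - i0.val = i := by
      rw [hi0def]
      simp only []
      omega
    have hfaceti0 : stairFacet d π i0 = rep ((Bh i)ᶜ ∪ {Mh i}) (Bh i) := by
      rw [hfacet i0, hival]
    have hFmem : stairFacet d π i0 ∈ K.faces := by
      rw [hfaceti0]
      exact hfBh i hid
    have hxF : x ∈ convexHull ℝ ((stairFacet d π i0 : Finset (PrismSpace d)) :
        Set (PrismSpace d)) := by
      rw [hfaceti0]
      exact hmem
    have hxint := K.inter_subset_convexHull hs hFmem ⟨hxs, hxF⟩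
    rw [← Finset.coe_inter] at hxint
    have hsupp := support_subset (K.indep hs) (Finset.inter_subset_left
      (s₂ := stairFacet d π i0)) hw1 rfl hxint
    refine ⟨hsne, i0, fun p hp => ?_⟩
    have := hsupp p hp (by rw [hwdef]; exact inv_ne_zero hcz)
    exact (Finset.mem_inter.1 this).2
  · rintro ⟨hne, i0, hsub⟩
    have hi0 := i0.isLt
    have hF : stairFacet d π i0 ∈ K.faces := by
      rw [hfacet i0]
      exact hfBh _ (by omega)
    exact K.down_closed hF hsub hne

end PrismProof

/-- For `d ≥ 1`, the staircase triangulation is a simplicial subdivision of the prism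
`C_d = σ × [0,1]` using only the `2d` vertices of `C_d`, and it is the unique such subdivision
up to isomorphism (i.e. up to relabelling the vertices of `σ` by a permutation). -/
theorem prism_subdivision_unique (d : ℕ) (hd : 1 ≤ d) :
    (∃ K : Geometry.SimplicialComplex ℝ (PrismSpace d),
      K.space = prism d ∧
      (∀ s ∈ K.faces, (s : Set (PrismSpace d)) ⊆ Set.range (ptA d) ∪ Set.range (ptB d)) ∧
      K.faces = stairFaces d 1) ∧
    (∀ K : Geometry.SimplicialComplex ℝ (PrismSpace d),
      K.space = prism d →
      (∀ s ∈ K.faces, (s : Set (PrismSpace d)) ⊆ Set.range (ptA d) ∪ Set.range (ptB d)) →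
      ∃ π : Equiv.Perm (Fin d), K.faces = stairFaces d π) := by
  refine ⟨PrismProof.exists_stair hd, fun K hsp hver => PrismProof.uniqueness hd hsp hver⟩
end

section
/- Let P be a d-polytope and x a point of P, with C the smallest face of P containing x, and let Ast_P(x) be the set of faces of P not containing C. Then the collection {x ∗ D : D ∈ Ast_P(x)} (cones with apex x) is a polytopal subdivision of P. -/
open Set

section AntistarAux


section Cone
variable {F : Type*} [NormedAddCommGroup F] [NormedSpace ℝ F]

/-- conic combinations of a finite indexed family -/
def coneF' {ι : Type*} (t : Finset ι) (v : ι → F) : Set F :=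
  {p | ∃ μ : ι → ℝ, (∀ i ∈ t, 0 ≤ μ i) ∧ p = ∑ i ∈ t, μ i • v i}

lemma coneF'_mono {ι : Type*} [DecidableEq ι] {T t : Finset ι} (h : T ⊆ t) (v : ι → F) :
    coneF' T v ⊆ coneF' t v := by
  rintro p ⟨μ, hμ, rfl⟩
  refine ⟨fun i => if i ∈ T then μ i else 0, fun i _ => ?_, ?_⟩
  · dsimp only; split
    · exact hμ i ‹_›
    · exact le_rfl
  · rw [← Finset.sum_subset h (fun i _ hiT => by simp [hiT])]
    exact Finset.sum_congr rfl fun i hi => by simp [hi]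

lemma coneF'_indep_closed {ι : Type*} (T : Finset ι) (v : ι → F)
    (h : LinearIndependent ℝ (fun i : T => v i)) : IsClosed (coneF' T v) := by
  classical
  let φ : (T → ℝ) →ₗ[ℝ] F :=
    { toFun := fun μ => ∑ i : T, μ i • v i
      map_add' := by intro a b; simp [add_smul, Finset.sum_add_distrib]
      map_smul' := by intro c a; simp [Finset.smul_sum, smul_smul] }
  have hker : LinearMap.ker φ = ⊥ := by
    rw [LinearMap.ker_eq_bot']
    intro m hm
    funext i
    exact (Fintype.linearIndependent_iff.mp h m hm) i
  have hemb := LinearMap.isClosedEmbedding_of_injective hker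
  have himg : coneF' T v = φ '' {μ : T → ℝ | ∀ i, 0 ≤ μ i} := by
    ext p
    constructor
    · rintro ⟨μ, hμ, rfl⟩
      refine ⟨fun i => μ i, fun i => hμ i i.2, ?_⟩
      show ∑ i : T, μ i • v i = _
      rw [Finset.sum_coe_sort T (fun i => μ i • v i)]
    · rintro ⟨ν, hν, rfl⟩
      refine ⟨fun i => if h : i ∈ T then ν ⟨i, h⟩ else 0, fun i hi => by simp [hi, hν ⟨i, hi⟩], ?_⟩
      show _ = ∑ i ∈ T, (if h : i ∈ T then ν ⟨i, h⟩ else 0) • v i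
      rw [← Finset.sum_coe_sort T (fun i => (if h : i ∈ T then ν ⟨i, h⟩ else 0) • v i)]
      exact Finset.sum_congr rfl fun i _ => by simp [i.2]
  rw [himg]
  refine hemb.isClosedMap _ ?_
  have : {μ : T → ℝ | ∀ i, 0 ≤ μ i} = ⋂ i : T, (fun μ : T → ℝ => μ i) ⁻¹' (Ici 0) := by
    ext; simp [mem_iInter, Set.mem_preimage]
  rw [this]
  exact isClosed_iInter fun i => (isClosed_Ici).preimage (continuous_apply i)


section Cone2







lemma coneF'_carath {ι : Type*} [DecidableEq ι] :
    ∀ (n : ℕ) (t : Finset ι), t.card ≤ n → ∀ (v : ι → F) (p : F), p ∈ coneF' t v →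
    ∃ T : Finset ι, T ⊆ t ∧ (LinearIndependent ℝ (fun i : T => v i)) ∧ p ∈ coneF' T v := by
  intro n
  induction n with
  | zero =>
    intro t ht v p hp
    refine ⟨t, Finset.Subset.refl t, ?_, hp⟩
    have : t = ∅ := Finset.card_eq_zero.mp (Nat.le_zero.mp ht)
    subst this
    exact linearIndependent_empty_type
  | succ n ih =>
    intro t ht v p hp
    by_cases hind : LinearIndependent ℝ (fun i : t => v i)
    · exact ⟨t, Finset.Subset.refl t, hind, hp⟩
    · obtain ⟨c, hc0, i₀, hi₀⟩ := Fintype.not_linearIndependent_iff.mp hind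
      obtain ⟨μ, hμ, rfl⟩ := hp
      -- extend c to ι, with a sign adjustment so that some coefficient is positive
      have key : ∀ c : t → ℝ, (∑ i : t, c i • v i = 0) → ∀ i₀ : t, 0 < c i₀ →
          ∃ T : Finset ι, T ⊆ t ∧ (LinearIndependent ℝ (fun i : T => v i)) ∧
            (∑ i ∈ t, μ i • v i) ∈ coneF' T v := by
        intro c hc i₀ hi₀
        classical
        set cc : ι → ℝ := fun i => if h : i ∈ t then c ⟨i, h⟩ else 0 with hcc
        have hcct : ∑ i ∈ t, cc i • v i = 0 := by
          rw [← Finset.sum_coe_sort t (fun i => cc i • v i)]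
          rw [← hc]
          exact Finset.sum_congr rfl fun i _ => by simp [hcc, i.2]
        set Q := t.filter (fun i => 0 < cc i) with hQ
        have hQne : Q.Nonempty := ⟨i₀, Finset.mem_filter.mpr ⟨i₀.2, by simpa [hcc, i₀.2] using hi₀⟩⟩
        obtain ⟨j, hjQ, hjmin⟩ := Finset.exists_min_image Q (fun i => μ i / cc i) hQne
        have hjt : j ∈ t := (Finset.mem_filter.mp hjQ).1
        have hccj : 0 < cc j := (Finset.mem_filter.mp hjQ).2
        set r := μ j / cc j with hr
        have hr0 : 0 ≤ r := div_nonneg (hμ j hjt) hccj.le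
        set mm : ι → ℝ := fun i => μ i - r * cc i with hmm
        have hmm0 : ∀ i ∈ t, 0 ≤ mm i := by
          intro i hit
          by_cases hci : 0 < cc i
          · have h1 : r ≤ μ i / cc i := hjmin i (Finset.mem_filter.mpr ⟨hit, hci⟩)
            have h2 : r * cc i ≤ μ i := (le_div_iff₀ hci).mp h1
            simp only [hmm]
            linarith
          · push_neg at hci
            have : r * cc i ≤ 0 := mul_nonpos_of_nonneg_of_nonpos hr0 hci
            simp only [hmm]
            linarith [hμ i hit]
        have hmmj : mm j = 0 := by
          simp only [hmm, hr]
          field_simp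
          ring
        have hsum : ∑ i ∈ t, mm i • v i = ∑ i ∈ t, μ i • v i := by
          simp only [hmm, sub_smul, mul_smul, Finset.sum_sub_distrib]
          rw [← Finset.smul_sum, hcct, smul_zero, sub_zero]
        have hsum' : ∑ i ∈ t.erase j, mm i • v i = ∑ i ∈ t, mm i • v i := by
          apply Finset.sum_erase
          rw [hmmj, zero_smul]
        obtain ⟨T, hT1, hT2, hT3⟩ := ih (t.erase j) (by
            have := Finset.card_erase_of_mem hjt
            omega) v (∑ i ∈ t, μ i • v i)
          ⟨mm, fun i hi => hmm0 i (Finset.mem_of_mem_erase hi), by rw [hsum', hsum]⟩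
        exact ⟨T, hT1.trans (Finset.erase_subset j t), hT2, hT3⟩
      rcases lt_or_gt_of_ne hi₀ with h | h
      · exact key (fun i => -c i) (by simpa using hc0) i₀ (by simpa using h)
      · exact key c hc0 i₀ h

lemma coneF'_closed {ι : Type*} (t : Finset ι) (v : ι → F)
    (hcl : ∀ T : Finset ι, T ⊆ t → LinearIndependent ℝ (fun i : T => v i) → IsClosed (coneF' T v))
    (hmono : ∀ T : Finset ι, T ⊆ t → coneF' T v ⊆ coneF' t v) :
    IsClosed (coneF' t v) := by
  classical
  have : coneF' t v = ⋃ T ∈ {T : Finset ι | T ⊆ t ∧ LinearIndependent ℝ (fun i : T => v i)},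
      coneF' T v := by
    apply Subset.antisymm
    · intro p hp
      obtain ⟨T, h1, h2, h3⟩ := coneF'_carath t.card t le_rfl v p hp
      exact mem_biUnion (show T ∈ _ from ⟨h1, h2⟩) h3
    · exact iUnion₂_subset fun T hT => hmono T hT.1
  rw [this]
  apply Set.Finite.isClosed_biUnion
  · apply Set.Finite.subset (Finset.finite_toSet t.powerset)
    intro T hT
    simpa using hT.1
  · exact fun T hT => hcl T hT.1 hT.2




variable {F : Type*} [NormedAddCommGroup F] [NormedSpace ℝ F]



lemma coneF'_zero {ι : Type*} (t : Finset ι) (v : ι → F) : (0 : F) ∈ coneF' t v :=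
  ⟨0, fun _ _ => le_rfl, by simp⟩

lemma coneF'_smul {ι : Type*} {t : Finset ι} {v : ι → F} {p : F} (hp : p ∈ coneF' t v)
    {a : ℝ} (ha : 0 ≤ a) : a • p ∈ coneF' t v := by
  obtain ⟨μ, hμ, rfl⟩ := hp
  exact ⟨fun i => a * μ i, fun i hi => mul_nonneg ha (hμ i hi),
    by rw [Finset.smul_sum]; exact Finset.sum_congr rfl fun i _ => by rw [mul_smul]⟩

lemma coneF'_convex {ι : Type*} (t : Finset ι) (v : ι → F) : Convex ℝ (coneF' t v) := by
  rintro p ⟨μ, hμ, rfl⟩ q ⟨ν, hν, rfl⟩ a b ha hb hab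
  refine ⟨fun i => a * μ i + b * ν i, fun i hi =>
    add_nonneg (mul_nonneg ha (hμ i hi)) (mul_nonneg hb (hν i hi)), ?_⟩
  rw [Finset.smul_sum, Finset.smul_sum, ← Finset.sum_add_distrib]
  exact Finset.sum_congr rfl fun i _ => by rw [add_smul, mul_smul, mul_smul]

/-- Farkas-type lemma: if `z ∈ conv s` and every convex representation of `z`
assigns weight `0` to `b ∈ s`, then some exposing functional of `conv s` at `z`
strictly separates `b`. -/
lemma farkas {E : Type*} [NormedAddCommGroup E] [NormedSpace ℝ E]
    (s : Finset E) (z b : E) (hb : b ∈ s) (hz : z ∈ convexHull ℝ (s : Set E))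
    (h : ∀ w : E → ℝ, (∀ a ∈ s, 0 ≤ w a) → ∑ a ∈ s, w a = 1 → ∑ a ∈ s, w a • a = z → w b = 0) :
    ∃ l : E →L[ℝ] ℝ, (∀ a ∈ s, l a ≤ l z) ∧ l b < l z := by
  classical
  set v : E → E × ℝ := fun a => (a - z, if a = b then (1:ℝ) else 0) with hv
  set C : Set (E × ℝ) := coneF' s v with hC
  have hCcl : IsClosed C := by
    apply coneF'_closed
    · exact fun T hT hind => coneF'_indep_closed T v hind
    · exact fun T hT => coneF'_mono hT v
  have hnot : ((0:E), (1:ℝ)) ∉ C := by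
    rintro ⟨μ, hμ0, hμeq⟩
    have h1 : (1:ℝ) = ∑ a ∈ s, μ a * (if a = b then (1:ℝ) else 0) := by
      have := congrArg Prod.snd hμeq
      simpa [Prod.snd_sum, hv] using this
    have h1' : (1:ℝ) = μ b := by
      rw [h1, Finset.sum_congr rfl (fun a _ => by rw [mul_ite, mul_one, mul_zero]),
        Finset.sum_ite_eq' s b μ, if_pos hb]
    have h2 : (0:E) = ∑ a ∈ s, μ a • (a - z) := by
      have := congrArg Prod.fst hμeq
      simpa [Prod.fst_sum, hv] using this
    have h2' : ∑ a ∈ s, μ a • a = (∑ a ∈ s, μ a) • z := by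
      have heach : ∑ a ∈ s, μ a • (a - z) = ∑ a ∈ s, (μ a • a - μ a • z) :=
        Finset.sum_congr rfl fun a _ => by rw [smul_sub]
      rw [heach, Finset.sum_sub_distrib, ← Finset.sum_smul] at h2
      linear_combination (norm := module) -h2
    set c : ℝ := ∑ a ∈ s, μ a with hc
    have hcpos : 0 < c := by
      have : μ b ≤ c := Finset.single_le_sum (fun a ha => hμ0 a ha) hb
      rw [← h1'] at this; linarith
    have hw := h (fun a => μ a / c) (fun a ha => div_nonneg (hμ0 a ha) hcpos.le)
      (by rw [← Finset.sum_div, ← hc]; field_simp)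
      (by
        have : ∑ a ∈ s, (μ a / c) • a = c⁻¹ • ∑ a ∈ s, μ a • a := by
          rw [Finset.smul_sum]
          exact Finset.sum_congr rfl fun a _ => by rw [div_eq_inv_mul, mul_smul]
        rw [this, h2', smul_smul, inv_mul_cancel₀ hcpos.ne', one_smul])
    rw [div_eq_zero_iff] at hw
    rcases hw with hw | hw
    · rw [← h1'] at hw; linarith
    · linarith
  obtain ⟨f, u, hfC, hfu⟩ := geometric_hahn_banach_closed_point
    (coneF'_convex s v) hCcl hnot
  have hu0 : 0 < u := by simpa using hfC 0 (coneF'_zero s v)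
  have hfC0 : ∀ c ∈ C, f c ≤ 0 := by
    intro c hc
    by_contra hpos
    push_neg at hpos
    have h2 : ((u+1)/f c) • c ∈ C := coneF'_smul hc (by positivity)
    have := hfC _ h2
    rw [map_smul, smul_eq_mul, div_mul_cancel₀ _ hpos.ne'] at this
    linarith
  set l : E →L[ℝ] ℝ := f.comp (ContinuousLinearMap.inl ℝ E ℝ) with hl
  have hkey : ∀ a ∈ s, l a - l z + (if a = b then (1:ℝ) else 0) * f (0,1) ≤ 0 := by
    intro a ha
    have hmem : v a ∈ C := ⟨fun i => if i = a then 1 else 0, fun i _ => by positivity, by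
      rw [Finset.sum_congr rfl (fun i _ => by rw [ite_smul, one_smul, zero_smul]),
        Finset.sum_ite_eq' s a, if_pos ha]⟩
    have := hfC0 _ hmem
    have hva : v a = ((a,0) : E × ℝ) - (z,0) + (if a = b then (1:ℝ) else 0) • ((0:E),(1:ℝ)) := by
      by_cases hab : a = b <;> simp [hv, hab, Prod.ext_iff]
    rw [hva, map_add, map_sub, map_smul, smul_eq_mul] at this
    simpa [hl] using this
  have hf01 : 0 < f (0,1) := lt_trans hu0 hfu
  constructor
  case w => exact l
  constructor
  · intro a ha
    have := hkey a ha
    split_ifs at this with hab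
    · nlinarith
    · linarith
  · have := hkey b hb
    rw [if_pos rfl, one_mul] at this
    linarith

end Cone2
end Cone

section Polytope
variable {E : Type*} [NormedAddCommGroup E] [NormedSpace ℝ E]




/-- if a linear functional is `≤ c` on `A` and `= c` at a point of the hull, the point is in the
hull of the contact set. -/
lemma ga {A : Set E} {l : E →L[ℝ] ℝ} {c : ℝ} (hA : ∀ a ∈ A, l a ≤ c) {p : E}
    (hp : p ∈ convexHull ℝ A) (hpc : l p = c) :
    p ∈ convexHull ℝ {a ∈ A | l a = c} := by
  classical
  rw [convexHull_eq] at hp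
  obtain ⟨ι, t, w, zf, hw0, hw1, hzA, hcm⟩ := hp
  have hrep : ∑ i ∈ t, w i • zf i = p := by
    rw [← hcm, Finset.centerMass_eq_of_sum_1 _ _ hw1]
  have hsum0 : ∑ i ∈ t, w i * (c - l (zf i)) = 0 := by
    have : ∑ i ∈ t, w i * (c - l (zf i)) = c * (∑ i ∈ t, w i) - l (∑ i ∈ t, w i • zf i) := by
      rw [map_sum, Finset.mul_sum, ← Finset.sum_sub_distrib]
      refine Finset.sum_congr rfl fun i _ => ?_
      rw [map_smul, smul_eq_mul]
      ring
    rw [this, hrep, hw1, hpc]; ring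
  have hterm : ∀ i ∈ t, w i * (c - l (zf i)) = 0 :=
    (Finset.sum_eq_zero_iff_of_nonneg
      (fun i hi => mul_nonneg (hw0 i hi) (by linarith [hA (zf i) (hzA i hi)]))).mp hsum0
  set t' := t.filter (fun i => w i ≠ 0) with ht'
  have hsum1' : ∑ i ∈ t', w i = 1 := by
    rw [← hw1]
    exact Finset.sum_filter_ne_zero t
  have hrep' : ∑ i ∈ t', w i • zf i = p := by
    rw [← hrep]
    apply Finset.sum_filter_of_ne
    intro i _ hne
    intro hwi
    exact hne (by rw [hwi, zero_smul])
  have hmem : ∀ i ∈ t', zf i ∈ {a ∈ A | l a = c} := by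
    intro i hi
    obtain ⟨hit, hwi⟩ := Finset.mem_filter.mp hi
    refine ⟨hzA i hit, ?_⟩
    have := hterm i hit
    rcases mul_eq_zero.mp this with h | h
    · exact absurd h hwi
    · linarith
  rw [← hrep']
  exact mem_convexHull_of_exists_fintype (fun i : t' => w i) (fun i : t' => zf i)
    (fun i => (Finset.mem_filter.mp i.2).1 |> fun hit => hw0 i hit)
    (by rw [Finset.sum_coe_sort t' w, hsum1'])
    (fun i => hmem i i.2)
    (by rw [Finset.sum_coe_sort t' (fun i => w i • zf i), hrep'])

/-- description of a nonempty exposed face -/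
lemma exposed_desc {P D : Set E} (hD : IsExposed ℝ P D) (hne : D.Nonempty) :
    ∃ (l : E →L[ℝ] ℝ) (M : ℝ), (∀ p ∈ P, l p ≤ M) ∧ (∀ d ∈ D, l d = M) ∧
      (∀ p ∈ P, l p = M → p ∈ D) := by
  obtain ⟨l, hl⟩ := hD hne
  obtain ⟨d₀, hd₀⟩ := hne
  have hd₀' := hd₀
  rw [hl] at hd₀'
  obtain ⟨hd₀P, hd₀max⟩ := hd₀'
  refine ⟨l, l d₀, fun p hp => hd₀max p hp, ?_, ?_⟩
  · intro d hd
    rw [hl] at hd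
    exact le_antisymm (hd₀max d hd.1) (hd.2 d₀ hd₀P)
  · intro p hp hpc
    rw [hl]
    exact ⟨hp, fun y hy => hpc ▸ hd₀max y hy⟩

/-- a functional bounded on a set is bounded on its hull -/
lemma hull_le {A : Set E} {l : E →L[ℝ] ℝ} {c : ℝ} (hA : ∀ a ∈ A, l a ≤ c) :
    ∀ p ∈ convexHull ℝ A, l p ≤ c := by
  intro p hp
  have : convexHull ℝ A ⊆ {w : E | l w ≤ c} :=
    convexHull_min hA (convex_halfSpace_le (l.toLinearMap.isLinear) c)
  exact this hp

lemma hull_ge {A : Set E} {l : E →L[ℝ] ℝ} {c : ℝ} (hA : ∀ a ∈ A, c ≤ l a) :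
    ∀ p ∈ convexHull ℝ A, c ≤ l p := by
  intro p hp
  have : convexHull ℝ A ⊆ {w : E | c ≤ l w} :=
    convexHull_min hA (convex_halfSpace_ge (l.toLinearMap.isLinear) c)
  exact this hp

/-- every exposed face of a polytope is the hull of a sub-finset -/
lemma face_eq (s : Finset E) {D : Set E} (hD : IsExposed ℝ (convexHull ℝ (s : Set E)) D) :
    ∃ t : Finset E, (t : Set E) ⊆ D ∧ (t : Set E) ⊆ (s : Set E) ∧
      D = convexHull ℝ (t : Set E) := by
  classical
  rcases D.eq_empty_or_nonempty with rfl | hne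
  · exact ⟨∅, by simp, by simp, by simp⟩
  obtain ⟨l, M, hle, heq, hmem⟩ := exposed_desc hD hne
  set t := s.filter (fun a => l a = M) with ht
  have hts : (t : Set E) ⊆ (s : Set E) := by
    intro a ha
    simp only [ht, Finset.coe_filter, mem_setOf_eq] at ha
    exact ha.1
  have htD : (t : Set E) ⊆ D := by
    intro a ha
    simp only [ht, Finset.coe_filter, mem_setOf_eq] at ha
    exact hmem a (subset_convexHull ℝ _ ha.1) ha.2
  refine ⟨t, htD, hts, Subset.antisymm ?_ ?_⟩
  · intro p hp
    have hpP := hD.subset hp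
    have hpc : l p = M := heq p hp
    have := ga (fun a ha => hle a (subset_convexHull ℝ _ ha)) hpP hpc
    refine (convexHull_mono ?_) this
    intro a ha
    simp only [ht, Finset.coe_filter, mem_setOf_eq]
    exact ⟨ha.1, ha.2⟩
  · exact convexHull_min htD (hD.convex (convex_convexHull ℝ _))

lemma exists_face_avoiding (s : Finset E) (z q : E) (hz : z ∈ convexHull ℝ (s : Set E))
    (hq : q ∈ convexHull ℝ (s : Set E))
    (hbey : ∀ ε : ℝ, 0 < ε → z + ε • (z - q) ∉ convexHull ℝ (s : Set E)) :
    ∃ D : Set E, IsExposed ℝ (convexHull ℝ (s : Set E)) D ∧ z ∈ D ∧ q ∉ D := by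
  classical
  set Rep : (E → ℝ) → Prop :=
    fun w => (∀ a ∈ s, 0 ≤ w a) ∧ ∑ a ∈ s, w a = 1 ∧ ∑ a ∈ s, w a • a = z with hRep
  set T := s.filter (fun a => ∃ w, Rep w ∧ 0 < w a) with hT
  have hTs : T ⊆ s := Finset.filter_subset _ _
  obtain ⟨w₀, hw₀0, hw₀1, hw₀s⟩ := Finset.mem_convexHull'.mp hz
  have hw₀Rep : Rep w₀ := ⟨hw₀0, hw₀1, hw₀s⟩
  have hTne : T.Nonempty := by
    obtain ⟨a, ha, hpos⟩ : ∃ a ∈ s, 0 < w₀ a := by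
      by_contra hcon
      push_neg at hcon
      have h0 : ∑ a ∈ s, w₀ a = 0 :=
        Finset.sum_eq_zero fun a ha => le_antisymm (hcon a ha) (hw₀0 a ha)
      rw [hw₀1] at h0; linarith
    exact ⟨a, Finset.mem_filter.mpr ⟨ha, w₀, hw₀Rep, hpos⟩⟩
  have hmemT : ∀ (w : E → ℝ), Rep w → ∀ a ∈ s, 0 < w a → a ∈ T :=
    fun w hw a ha hpos => Finset.mem_filter.mpr ⟨ha, w, hw, hpos⟩
  -- master representation, positive on all of T
  have hchoice : ∀ a : {y // y ∈ T}, ∃ w, Rep w ∧ 0 < w a.1 :=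
    fun a => (Finset.mem_filter.mp a.2).2
  choose wv hwvR hwvpos using hchoice
  set n : ℝ := (T.card : ℝ) with hn
  have hnpos : 0 < n := by
    rw [hn]; exact_mod_cast Finset.card_pos.mpr hTne
  set W : E → ℝ := fun c => n⁻¹ * ∑ a ∈ T.attach, wv a c with hW
  have hW0 : ∀ c ∈ s, 0 ≤ W c := fun c hc =>
    mul_nonneg (inv_nonneg.mpr hnpos.le)
      (Finset.sum_nonneg fun a _ => ((hwvR a).1 c hc))
  have hW1 : ∑ c ∈ s, W c = 1 := by
    rw [← Finset.mul_sum, Finset.sum_comm,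
      Finset.sum_congr rfl (fun (a : {y // y ∈ T}) (_ : a ∈ T.attach) => (hwvR a).2.1),
      Finset.sum_const, Finset.card_attach, nsmul_eq_mul, ← hn]
    field_simp
  have hWz : ∑ c ∈ s, W c • c = z := by
    calc ∑ c ∈ s, W c • c = n⁻¹ • ∑ c ∈ s, ∑ a ∈ T.attach, wv a c • c := by
          rw [Finset.smul_sum]
          refine Finset.sum_congr rfl fun c _ => ?_
          rw [hW, mul_smul, Finset.sum_smul]
      _ = n⁻¹ • ∑ a ∈ T.attach, ∑ c ∈ s, wv a c • c := by rw [Finset.sum_comm]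
      _ = n⁻¹ • ∑ a ∈ T.attach, z := by
          rw [Finset.sum_congr rfl fun (a : {y // y ∈ T}) (_ : a ∈ T.attach) => (hwvR a).2.2]
      _ = z := by
          rw [Finset.sum_const, Finset.card_attach, ← Nat.cast_smul_eq_nsmul ℝ, smul_smul,
            ← hn, inv_mul_cancel₀ hnpos.ne', one_smul]
  have hWRep : Rep W := ⟨hW0, hW1, hWz⟩
  have hWpos : ∀ a ∈ T, 0 < W a := by
    intro a haT
    have hsingle : wv ⟨a, haT⟩ a ≤ ∑ b ∈ T.attach, wv b a :=
      Finset.single_le_sum (fun b _ => (hwvR b).1 a (hTs haT)) (Finset.mem_attach T ⟨a, haT⟩)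
    exact mul_pos (inv_pos.mpr hnpos) (lt_of_lt_of_le (hwvpos ⟨a, haT⟩) hsingle)
  have hWout : ∀ a ∈ s, a ∉ T → W a = 0 := by
    intro a ha hnaT
    rcases (hW0 a ha).eq_or_lt with h | h
    · exact h.symm
    · exact absurd (hmemT W hWRep a ha h) hnaT
  -- q is not in the hull of T
  have hqT : q ∉ convexHull ℝ (T : Set E) := by
    intro hqT
    obtain ⟨μ, hμ0, hμ1, hμq⟩ := Finset.mem_convexHull'.mp hqT
    obtain ⟨a₀, ha₀T, hmin⟩ := Finset.exists_min_image T W hTne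
    set ε := W a₀ with hε
    have hεpos : 0 < ε := hWpos a₀ ha₀T
    set μ' : E → ℝ := fun a => if a ∈ T then μ a else 0 with hμ'
    have hμ'0 : ∀ a, 0 ≤ μ' a := by
      intro a
      by_cases haT : a ∈ T
      · simpa [hμ', haT] using hμ0 a haT
      · simp [hμ', haT]
    have hμ'sum : ∑ a ∈ s, μ' a = 1 := by
      rw [← Finset.sum_subset hTs (fun a _ hnaT => by simp [hμ', hnaT]), ← hμ1]
      exact Finset.sum_congr rfl fun a haT => by simp [hμ', haT]
    have hμ'q : ∑ a ∈ s, μ' a • a = q := by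
      rw [← Finset.sum_subset hTs (fun a _ hnaT => by simp [hμ', hnaT]), ← hμq]
      exact Finset.sum_congr rfl fun a haT => by simp [hμ', haT]
    have hμ'le1 : ∀ a, μ' a ≤ 1 := by
      intro a
      by_cases haT : a ∈ T
      · calc μ' a = μ a := by simp [hμ', haT]
          _ ≤ ∑ b ∈ T, μ b := Finset.single_le_sum (fun b hb => hμ0 b hb) haT
          _ = 1 := hμ1
      · simp [hμ', haT]
    apply hbey ε hεpos
    rw [Finset.mem_convexHull']
    refine ⟨fun a => (1 + ε) * W a - ε * μ' a, ?_, ?_, ?_⟩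
    · intro a ha
      show 0 ≤ (1 + ε) * W a - ε * μ' a
      by_cases haT : a ∈ T
      · have h1 : ε ≤ W a := hmin a haT
        have h2 : μ' a ≤ 1 := hμ'le1 a
        have h3 : 0 ≤ W a := hW0 a ha
        have h4 : 0 ≤ μ' a := hμ'0 a
        nlinarith
      · rw [hWout a ha haT]
        simp [hμ', haT]
    · show ∑ a ∈ s, ((1 + ε) * W a - ε * μ' a) = 1
      have hrw : ∑ a ∈ s, ((1 + ε) * W a - ε * μ' a)
          = (1 + ε) * (∑ a ∈ s, W a) - ε * (∑ a ∈ s, μ' a) := by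
        rw [Finset.sum_sub_distrib, Finset.mul_sum, Finset.mul_sum]
      rw [hrw, hW1, hμ'sum]
      ring
    · show ∑ a ∈ s, ((1 + ε) * W a - ε * μ' a) • a = z + ε • (z - q)
      have hsplit : ∀ a ∈ s, ((1 + ε) * W a - ε * μ' a) • a
          = (1 + ε) • (W a • a) - ε • (μ' a • a) := by
        intro a _
        module
      rw [Finset.sum_congr rfl hsplit, Finset.sum_sub_distrib, ← Finset.smul_sum,
        ← Finset.smul_sum, hWz, hμ'q]
      module
  -- not every element of s lies in T
  have hBne : (s.filter (fun a => a ∉ T)).Nonempty := by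
    by_contra hcon
    rw [Finset.not_nonempty_iff_eq_empty, Finset.filter_eq_empty_iff] at hcon
    push_neg at hcon
    have hsub : (s : Set E) ⊆ (T : Set E) := by
      intro a ha
      have : a ∈ s := by exact_mod_cast ha
      exact_mod_cast hcon this
    exact hqT (convexHull_mono hsub hq)
  set B := s.filter (fun a => a ∉ T) with hB
  have hfark : ∀ b : {y // y ∈ B}, ∃ l : E →L[ℝ] ℝ,
      (∀ a ∈ s, l a ≤ l z) ∧ l b.1 < l z := by
    intro b
    obtain ⟨hbs, hbT⟩ := Finset.mem_filter.mp b.2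
    apply farkas s z b.1 hbs hz
    intro w hw0 hw1 hwz
    rcases (hw0 b.1 hbs).eq_or_lt with h | h
    · exact h.symm
    · exact absurd (hmemT w ⟨hw0, hw1, hwz⟩ b.1 hbs h) hbT
  choose lb hlble hlblt using hfark
  set l : E →L[ℝ] ℝ := ∑ b ∈ B.attach, lb b with hl
  have hlapp : ∀ p : E, l p = ∑ b ∈ B.attach, lb b p := by
    intro p
    rw [hl]
    simp [ContinuousLinearMap.sum_apply]
  have hlz : ∀ a ∈ s, l a ≤ l z := by
    intro a ha
    rw [hlapp, hlapp]
    exact Finset.sum_le_sum fun b _ => hlble b a ha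
  refine ⟨{p ∈ convexHull ℝ (s : Set E) | ∀ y ∈ convexHull ℝ (s : Set E), l y ≤ l p},
    fun _ => ⟨l, rfl⟩, ⟨hz, fun y hy => hull_le hlz y hy⟩, ?_⟩
  rintro ⟨hqP, hqmax⟩
  have hql : l q = l z := le_antisymm (hull_le hlz q hq) (hqmax z hz)
  have := ga hlz hq hql
  apply hqT
  refine convexHull_mono ?_ this
  rintro a ⟨has, hal⟩
  by_contra haT
  have haB : a ∈ B := Finset.mem_filter.mpr ⟨by exact_mod_cast has, haT⟩
  have hstrict : l a < l z := by
    rw [hlapp, hlapp]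
    exact Finset.sum_lt_sum (fun b _ => hlble b a (by exact_mod_cast has))
      ⟨⟨a, haB⟩, Finset.mem_attach _ _, hlblt ⟨a, haB⟩⟩
  rw [hal] at hstrict
  exact lt_irrefl _ hstrict

lemma cone_face (s : Finset E) (x : E) (D₁ D₂ : Set E)
    (hD₁ : IsExposed ℝ (convexHull ℝ (s : Set E)) D₁)
    (hD₂ : IsExposed ℝ (convexHull ℝ (s : Set E)) D₂)
    (hx : x ∈ convexHull ℝ (s : Set E)) (hx1 : x ∉ D₁) (hx2 : x ∉ D₂) :
    IsExposed ℝ (convexHull ℝ (insert x D₁))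
      (convexHull ℝ (insert x D₁) ∩ convexHull ℝ (insert x D₂)) := by
  classical
  set P := convexHull ℝ (s : Set E) with hP
  have hxQ1 : x ∈ convexHull ℝ (insert x D₁) := subset_convexHull ℝ _ (mem_insert x D₁)
  have hxQ2 : x ∈ convexHull ℝ (insert x D₂) := subset_convexHull ℝ _ (mem_insert x D₂)
  have hsingle : convexHull ℝ (insert x (∅ : Set E)) = {x} := by
    rw [insert_empty_eq, convexHull_singleton]
  have hexp_self : IsExposed ℝ ({x} : Set E) ({x} : Set E) := by
    intro _
    refine ⟨0, ?_⟩
    ext p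
    simp
  rcases eq_empty_or_nonempty D₁ with rfl | hne₁
  · have hQR : convexHull ℝ (insert x (∅ : Set E)) ∩ convexHull ℝ (insert x D₂)
        = ({x} : Set E) := by
      rw [hsingle]
      exact inter_eq_self_of_subset_left (singleton_subset_iff.mpr hxQ2)
    rw [hQR]
    rw [hsingle]
  obtain ⟨l₁, M₁, hle₁, heq₁, hmem₁⟩ := exposed_desc hD₁ hne₁
  have hD₁P : D₁ ⊆ P := hD₁.subset
  have hD₁conv : Convex ℝ D₁ := hD₁.convex (convex_convexHull ℝ _)
  have hl₁x : l₁ x < M₁ :=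
    lt_of_le_of_ne (hle₁ x hx) (fun h => hx1 (hmem₁ x hx h))
  -- the bound for -l₁ over the generators of the cone
  have hgenx : ∀ a ∈ insert x D₁, (-l₁) a ≤ (-l₁) x := by
    rintro a (rfl | ha)
    · exact le_rfl
    · have := heq₁ a ha
      simp only [ContinuousLinearMap.neg_apply]
      linarith
  have hexp_x : IsExposed ℝ (convexHull ℝ (insert x D₁)) ({x} : Set E) := by
    intro _
    refine ⟨-l₁, ?_⟩
    apply Subset.antisymm
    · rintro p rfl
      exact ⟨hxQ1, fun y hy => hull_le hgenx y hy⟩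
    · rintro p ⟨hpQ, hpmax⟩
      have hpc : (-l₁) p = (-l₁) x :=
        le_antisymm (hull_le hgenx p hpQ) (hpmax x hxQ1)
      have := ga hgenx hpQ hpc
      have hsub : {a ∈ insert x D₁ | (-l₁) a = (-l₁) x} ⊆ ({x} : Set E) := by
        rintro a ⟨(rfl | haD), hac⟩
        · exact rfl
        · exfalso
          have := heq₁ a haD
          simp only [ContinuousLinearMap.neg_apply] at hac
          apply absurd hac
          intro h
          rw [this] at h
          linarith
      have := convexHull_mono hsub this
      rwa [convexHull_singleton] at this
  rcases eq_empty_or_nonempty D₂ with rfl | hne₂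
  · have hQR : convexHull ℝ (insert x D₁) ∩ convexHull ℝ (insert x (∅ : Set E))
        = ({x} : Set E) := by
      rw [hsingle]
      exact inter_eq_self_of_subset_right (singleton_subset_iff.mpr hxQ1)
    rw [hQR]
    exact hexp_x
  obtain ⟨l₂, M₂, hle₂, heq₂, hmem₂⟩ := exposed_desc hD₂ hne₂
  have hD₂P : D₂ ⊆ P := hD₂.subset
  have hD₂conv : Convex ℝ D₂ := hD₂.convex (convex_convexHull ℝ _)
  have hl₂x : l₂ x < M₂ :=
    lt_of_le_of_ne (hle₂ x hx) (fun h => hx2 (hmem₂ x hx h))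
  -- the key intersection formula
  have hQR : convexHull ℝ (insert x D₁) ∩ convexHull ℝ (insert x D₂)
      = convexHull ℝ (insert x (D₁ ∩ D₂)) := by
    apply Subset.antisymm
    · rintro p ⟨hp1, hp2⟩
      rw [convexHull_insert hne₁, mem_convexJoin] at hp1
      rw [convexHull_insert hne₂, mem_convexJoin] at hp2
      obtain ⟨x', hx', d₁, hd₁, hpseg₁⟩ := hp1
      obtain ⟨x'', hx'', d₂, hd₂, hpseg₂⟩ := hp2
      rw [mem_singleton_iff] at hx' hx''
      rw [hx'] at hpseg₁
      rw [hx''] at hpseg₂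
      rw [hD₁conv.convexHull_eq] at hd₁
      rw [hD₂conv.convexHull_eq] at hd₂
      obtain ⟨u₁, v₁, hu₁, hv₁, huv₁, hp₁⟩ := hpseg₁
      obtain ⟨u₂, v₂, hu₂, hv₂, huv₂, hp₂⟩ := hpseg₂
      have hl₂d₁ : l₂ d₁ ≤ M₂ := hle₂ d₁ (hD₁P hd₁)
      have hl₁d₂ : l₁ d₂ ≤ M₁ := hle₁ d₂ (hD₂P hd₂)
      have hl₂p : u₁ * l₂ x + v₁ * l₂ d₁ = u₂ * l₂ x + v₂ * M₂ := by
        have e1 : l₂ p = u₁ * l₂ x + v₁ * l₂ d₁ := by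
          rw [← hp₁]; simp [map_add, map_smul]
        have e2 : l₂ p = u₂ * l₂ x + v₂ * l₂ d₂ := by
          rw [← hp₂]; simp [map_add, map_smul]
        rw [← e1, e2, heq₂ d₂ hd₂]
      have hl₁p : u₂ * l₁ x + v₂ * l₁ d₂ = u₁ * l₁ x + v₁ * M₁ := by
        have e1 : l₁ p = u₂ * l₁ x + v₂ * l₁ d₂ := by
          rw [← hp₂]; simp [map_add, map_smul]
        have e2 : l₁ p = u₁ * l₁ x + v₁ * l₁ d₁ := by
          rw [← hp₁]; simp [map_add, map_smul]
        rw [← e1, e2, heq₁ d₁ hd₁]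
      have hv21 : v₂ ≤ v₁ := by
        have hu1 : u₁ = 1 - v₁ := by linarith
        have hu2 : u₂ = 1 - v₂ := by linarith
        rw [hu1, hu2] at hl₂p
        nlinarith
      have hv12 : v₁ ≤ v₂ := by
        have hu1 : u₁ = 1 - v₁ := by linarith
        have hu2 : u₂ = 1 - v₂ := by linarith
        rw [hu1, hu2] at hl₁p
        nlinarith
      have hveq : v₁ = v₂ := le_antisymm hv12 hv21
      rcases hv₁.eq_or_lt with hv0 | hv0
      · -- p = x
        have : p = x := by
          rw [← hp₁, ← hv0, zero_smul, add_zero]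
          have : u₁ = 1 := by linarith
          rw [this, one_smul]
        rw [this]
        exact subset_convexHull ℝ _ (mem_insert _ _)
      · -- d₁ ∈ D₂
        have heqd : l₂ d₁ = M₂ := by
          rw [← hveq] at hl₂p
          have hu1 : u₁ = 1 - v₁ := by linarith
          have hu2 : u₂ = 1 - v₁ := by linarith
          rw [hu1, hu2] at hl₂p
          nlinarith
        have hd₁D₂ : d₁ ∈ D₂ := hmem₂ d₁ (hD₁P hd₁) heqd
        have hseg : segment ℝ x d₁ ⊆ convexHull ℝ (insert x (D₁ ∩ D₂)) :=
          segment_subset_convexHull (mem_insert _ _) (mem_insert_of_mem _ ⟨hd₁, hd₁D₂⟩)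
        exact hseg ⟨u₁, v₁, hu₁, hv₁, huv₁, hp₁⟩
    · apply subset_inter
      · exact convexHull_mono (insert_subset_insert inter_subset_left)
      · exact convexHull_mono (insert_subset_insert inter_subset_right)
  rw [hQR]
  rcases eq_empty_or_nonempty (D₁ ∩ D₂) with hD₃ | hne₃
  · rw [hD₃, hsingle]
    exact hexp_x
  -- D₁ ∩ D₂ nonempty : build the exposing functional
  obtain ⟨l₃, hl₃app⟩ : ∃ l₃ : E →L[ℝ] ℝ, ∀ p, l₃ p = l₁ p + l₂ p :=
    ⟨l₁ + l₂, fun p => rfl⟩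
  set M₃ : ℝ := M₁ + M₂ with hM₃
  have hle₃ : ∀ p ∈ P, l₃ p ≤ M₃ := by
    intro p hp
    have := hle₁ p hp
    have := hle₂ p hp
    rw [hl₃app, hM₃]
    linarith
  have heq₃ : ∀ d ∈ D₁ ∩ D₂, l₃ d = M₃ := by
    rintro d ⟨h1, h2⟩
    rw [hl₃app, hM₃, heq₁ d h1, heq₂ d h2]
  have hmem₃ : ∀ p ∈ P, l₃ p = M₃ → p ∈ D₁ ∩ D₂ := by
    intro p hp hpc
    rw [hl₃app, hM₃] at hpc
    have h1 := hle₁ p hp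
    have h2 := hle₂ p hp
    exact ⟨hmem₁ p hp (by linarith), hmem₂ p hp (by linarith)⟩
  have hl₃x : l₃ x < M₃ := by
    rw [hl₃app, hM₃]
    linarith
  set c : ℝ := (M₃ - l₃ x) / (M₁ - l₁ x) with hc
  have hcpos : 0 < c := div_pos (by linarith) (by linarith)
  have hBne : M₁ - l₁ x ≠ 0 := by linarith
  have hkey : c * (M₁ - l₁ x) = M₃ - l₃ x := by
    rw [hc, div_mul_cancel₀ _ hBne]
  obtain ⟨g, hgapp⟩ : ∃ g : E →L[ℝ] ℝ, ∀ p, g p = l₃ p - c * l₁ p :=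
    ⟨l₃ - c • l₁, fun p => rfl⟩
  have hgen : ∀ a ∈ insert x D₁, g a ≤ g x := by
    rintro a (rfl | ha)
    · exact le_rfl
    · rw [hgapp, hgapp, heq₁ a ha]
      have := hle₃ a (hD₁P ha)
      nlinarith
  have hcontact : {a ∈ insert x D₁ | g a = g x} = insert x (D₁ ∩ D₂) := by
    apply Subset.antisymm
    · rintro a ⟨(rfl | haD), hac⟩
      · exact mem_insert _ _
      · rw [hgapp, hgapp, heq₁ a haD] at hac
        have hl₃a : l₃ a = M₃ := by nlinarith
        exact mem_insert_of_mem _ (hmem₃ a (hD₁P haD) hl₃a)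
    · rintro a (rfl | haD)
      · exact ⟨mem_insert _ _, rfl⟩
      · refine ⟨mem_insert_of_mem _ haD.1, ?_⟩
        rw [hgapp, hgapp, heq₃ a haD, heq₁ a haD.1]
        nlinarith
  have hG : ∀ p ∈ convexHull ℝ (insert x D₁), g p ≤ g x := hull_le hgen
  have hGeqgen : ∀ a ∈ insert x (D₁ ∩ D₂), g x ≤ g a := by
    intro a ha
    rw [← hcontact] at ha
    rw [ha.2]
  intro _
  refine ⟨g, ?_⟩
  apply Subset.antisymm
  · intro p hp
    have hpQ : p ∈ convexHull ℝ (insert x D₁) :=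
      convexHull_mono (insert_subset_insert inter_subset_left) hp
    have hpge : g x ≤ g p := hull_ge hGeqgen p hp
    exact ⟨hpQ, fun y hy => le_trans (hG y hy) hpge⟩
  · rintro p ⟨hpQ, hpmax⟩
    have hpc : g p = g x := le_antisymm (hG p hpQ) (hpmax x hxQ1)
    have := ga hgen hpQ hpc
    rwa [hcontact] at this

end Polytope
end AntistarAux

/-- A collection `𝒞` of sets is a polytopal subdivision of `P` if every member is a polytope
(the convex hull of a finite set), their union is `P`, and any two members meet in a common
(exposed) face of each. -/
def IsPolytopalSubdivision {E : Type*} [NormedAddCommGroup E] [NormedSpace ℝ E]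
    (P : Set E) (𝒞 : Set (Set E)) : Prop :=
  (∀ Q ∈ 𝒞, ∃ s : Finset E, Q = convexHull ℝ (s : Set E)) ∧
  ⋃₀ 𝒞 = P ∧
  (∀ Q ∈ 𝒞, ∀ R ∈ 𝒞, IsExposed ℝ Q (Q ∩ R) ∧ IsExposed ℝ R (Q ∩ R))

/-- The antistar lemma: if `P` is a polytope, `x ∈ P`, and `C` is the smallest face of `P`
containing `x`, then the cones `x ∗ D` over the faces `D` of `P` not containing `C` (the
antistar of `x` in `P`) form a polytopal subdivision of `P`. -/
theorem antistar_polytopal_subdivision {E : Type*} [NormedAddCommGroup E] [NormedSpace ℝ E]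
    (s : Finset E) (P : Set E) (hP : P = convexHull ℝ (s : Set E))
    (x : E) (hx : x ∈ P)
    (C : Set E) (hC : IsExposed ℝ P C) (hxC : x ∈ C)
    (hmin : ∀ F : Set E, IsExposed ℝ P F → x ∈ F → C ⊆ F) :
    IsPolytopalSubdivision P
      {Q | ∃ D : Set E, IsExposed ℝ P D ∧ ¬ C ⊆ D ∧ Q = convexHull ℝ ({x} ∪ D)} := by
  classical
  subst hP
  refine ⟨?_, ?_, ?_⟩
  · -- each member is a polytope
    rintro Q ⟨D, hD, hCD, rfl⟩
    obtain ⟨t, htD, hts, hDt⟩ := face_eq s hD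
    refine ⟨insert x t, ?_⟩
    rw [hDt, convexHull_convexHull_union_right, Finset.coe_insert, Set.singleton_union]
  · -- the union is P
    apply Subset.antisymm
    · rintro p hp
      rw [mem_sUnion] at hp
      obtain ⟨Q, ⟨D, hD, hCD, rfl⟩, hpQ⟩ := hp
      have hsub : {x} ∪ D ⊆ convexHull ℝ (s : Set E) :=
        union_subset (singleton_subset_iff.mpr hx) hD.subset
      exact convexHull_min hsub (convex_convexHull ℝ _) hpQ
    · intro y hy
      rw [mem_sUnion]
      by_cases hyx : y = x
      · refine ⟨convexHull ℝ ({x} ∪ (∅ : Set E)), ⟨∅, isExposed_empty, fun h => h hxC, rfl⟩, ?_⟩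
        rw [union_empty, convexHull_singleton, hyx]
        rfl
      · -- shoot a ray from x through y
        set d := y - x with hd
        have hdne : d ≠ 0 := sub_ne_zero_of_ne hyx
        set Tt : Set ℝ := {t : ℝ | x + t • d ∈ convexHull ℝ (s : Set E)} with hTt
        have h1T : (1 : ℝ) ∈ Tt := by
          show x + (1 : ℝ) • d ∈ convexHull ℝ (s : Set E)
          rw [one_smul, hd, add_sub_cancel]
          exact hy
        have hTne : Tt.Nonempty := ⟨1, h1T⟩
        have hbdd : BddAbove Tt := by
          obtain ⟨R0, hR0⟩ := (isBounded_iff_forall_norm_le).mp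
            (s.finite_toSet.isCompact_convexHull ℝ).isBounded
          refine ⟨(R0 + ‖x‖) / ‖d‖, fun t ht => ?_⟩
          have h2 : ‖x + t • d‖ ≤ R0 := hR0 _ ht
          have h3 : ‖t • d‖ ≤ R0 + ‖x‖ := by
            have : ‖t • d‖ = ‖(x + t • d) - x‖ := by rw [add_sub_cancel_left]
            rw [this]
            calc ‖(x + t • d) - x‖ ≤ ‖x + t • d‖ + ‖x‖ := norm_sub_le _ _
              _ ≤ R0 + ‖x‖ := by linarith
          rw [norm_smul] at h3
          have hdpos : 0 < ‖d‖ := norm_pos_iff.mpr hdne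
          rw [le_div_iff₀ hdpos]
          calc t * ‖d‖ ≤ |t| * ‖d‖ := by
                apply mul_le_mul_of_nonneg_right (le_abs_self t) hdpos.le
            _ ≤ R0 + ‖x‖ := by simpa [Real.norm_eq_abs] using h3
        have hclosed : IsClosed Tt := by
          have : Tt = (fun t : ℝ => x + t • d) ⁻¹' (convexHull ℝ (s : Set E)) := rfl
          rw [this]
          exact (s.finite_toSet.isClosed_convexHull ℝ).preimage
            (by continuity)
        set t0 := sSup Tt with ht0
        have ht0mem : t0 ∈ Tt := hclosed.csSup_mem hTne hbdd
        have ht01 : (1 : ℝ) ≤ t0 := le_csSup hbdd h1T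
        have ht0pos : 0 < t0 := lt_of_lt_of_le one_pos ht01
        set zz := x + t0 • d with hzz
        have hzzP : zz ∈ convexHull ℝ (s : Set E) := ht0mem
        have hbey : ∀ ε : ℝ, 0 < ε → zz + ε • (zz - x) ∉ convexHull ℝ (s : Set E) := by
          intro ε hε hmem
          have hzx : zz - x = t0 • d := by rw [hzz]; abel
          have hrwt : zz + ε • (zz - x) = x + (t0 + ε * t0) • d := by
            rw [hzz, hzx]; module
          rw [hrwt] at hmem
          have hin : t0 + ε * t0 ∈ Tt := hmem
          have hle : t0 + ε * t0 ≤ t0 := le_csSup hbdd hin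
          nlinarith
        obtain ⟨D, hD, hzD, hxD⟩ := exists_face_avoiding s zz x hzzP hx hbey
        refine ⟨convexHull ℝ ({x} ∪ D), ⟨D, hD, fun h => hxD (h hxC), rfl⟩, ?_⟩
        have hyseg : y ∈ segment ℝ x zz := by
          refine ⟨1 - t0⁻¹, t0⁻¹, ?_, ?_, by ring, ?_⟩
          · have : t0⁻¹ ≤ 1 := by
              rw [inv_le_one_iff₀]
              right; exact ht01
            linarith
          · positivity
          · rw [hzz, smul_add, smul_smul, inv_mul_cancel₀ ht0pos.ne']
            rw [hd]
            module
        have hsegsub : segment ℝ x zz ⊆ convexHull ℝ ({x} ∪ D) := by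
          rw [← convexHull_pair]
          apply convexHull_mono
          intro w hw
          rcases hw with rfl | hw
          · exact Or.inl rfl
          · rw [mem_singleton_iff] at hw
            subst hw
            exact Or.inr hzD
        exact hsegsub hyseg
  · rintro Q ⟨D₁, hD₁, hCD₁, rfl⟩ R ⟨D₂, hD₂, hCD₂, rfl⟩
    have hx1 : x ∉ D₁ := fun h => hCD₁ (hmin D₁ hD₁ h)
    have hx2 : x ∉ D₂ := fun h => hCD₂ (hmin D₂ hD₂ h)
    rw [Set.singleton_union, Set.singleton_union]
    constructor
    · exact cone_face s x D₁ D₂ hD₁ hD₂ hx hx1 hx2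
    · rw [Set.inter_comm]
      exact cone_face s x D₂ D₁ hD₂ hD₁ hx hx2 hx1
end

section
/- Under the hypotheses that α and β are simplices of dimensions i,j ≥ 1 whose relative interiors meet and whose union spans an affine space of dimension i+j, the intersection of the affine spans of α and β is a single point, and that point is the unique point in the intersection of their relative interiors. -/
/-- If `α` and `β` are simplices (with affinely independent vertex sets `A`, `B`) of dimensions
`i, j ≥ 1` whose relative interiors meet and whose union affinely spans a space of dimension
`i + j`, then the affine spans of `α` and `β` meet in a single point, which is the unique point
of the intersection of their relative interiors. -/
theorem affineSpan_inter_singleton {E : Type*} [NormedAddCommGroup E] [NormedSpace ℝ E]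
    [DecidableEq E] (A B : Finset E)
    (hA : AffineIndependent ℝ ((↑) : A → E))
    (hB : AffineIndependent ℝ ((↑) : B → E))
    (hAcard : 2 ≤ A.card) (hBcard : 2 ≤ B.card)
    (hint : (intrinsicInterior ℝ (convexHull ℝ (A : Set E)) ∩
      intrinsicInterior ℝ (convexHull ℝ (B : Set E))).Nonempty)
    (hdim : Module.finrank ℝ (affineSpan ℝ ((A ∪ B : Finset E) : Set E)).direction =
      (A.card - 1) + (B.card - 1)) :
    ∃ p : E,
      (affineSpan ℝ (A : Set E) : Set E) ∩ (affineSpan ℝ (B : Set E) : Set E) = {p} ∧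
      intrinsicInterior ℝ (convexHull ℝ (A : Set E)) ∩
        intrinsicInterior ℝ (convexHull ℝ (B : Set E)) = {p} := by
  obtain ⟨p, hpA, hpB⟩ := hint
  -- p lies in both affine spans
  have hmemA : ∀ {S : Finset E}, ∀ {x : E},
      x ∈ intrinsicInterior ℝ (convexHull ℝ (S : Set E)) → x ∈ affineSpan ℝ (S : Set E) := by
    intro S x hx
    have h1 : x ∈ convexHull ℝ (S : Set E) := intrinsicInterior_subset hx
    have h2 : convexHull ℝ (S : Set E) ⊆ affineSpan ℝ (S : Set E) :=
      convexHull_subset_affineSpan _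
    exact h2 h1
  have hpA' : p ∈ affineSpan ℝ (A : Set E) := hmemA hpA
  have hpB' : p ∈ affineSpan ℝ (B : Set E) := hmemA hpB
  -- finranks of the directions
  have hrA : Module.finrank ℝ (affineSpan ℝ (A : Set E)).direction = A.card - 1 := by
    rw [direction_affineSpan]
    have heq : vectorSpan ℝ (Set.range ((↑) : A → E)) = vectorSpan ℝ (A : Set E) := by
      congr 1; ext x; simp
    have := hA.finrank_vectorSpan (n := A.card - 1) (by rw [Fintype.card_coe]; omega)
    rwa [heq] at this
  have hrB : Module.finrank ℝ (affineSpan ℝ (B : Set E)).direction = B.card - 1 := by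
    rw [direction_affineSpan]
    have heq : vectorSpan ℝ (Set.range ((↑) : B → E)) = vectorSpan ℝ (B : Set E) := by
      congr 1; ext x; simp
    have := hB.finrank_vectorSpan (n := B.card - 1) (by rw [Fintype.card_coe]; omega)
    rwa [heq] at this
  -- direction of the span of the union
  have hsup : (affineSpan ℝ ((A ∪ B : Finset E) : Set E)).direction =
      (affineSpan ℝ (A : Set E)).direction ⊔ (affineSpan ℝ (B : Set E)).direction := by
    rw [Finset.coe_union, AffineSubspace.span_union,
      AffineSubspace.direction_sup hpA' hpB']
    simp
  have hdim' : Module.finrank ℝ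
      ((affineSpan ℝ (A : Set E)).direction ⊔ (affineSpan ℝ (B : Set E)).direction : Submodule ℝ E)
      = (A.card - 1) + (B.card - 1) := by rw [← hsup]; exact hdim
  -- the directions intersect trivially
  haveI : FiniteDimensional ℝ (affineSpan ℝ (A : Set E)).direction := by
    rw [direction_affineSpan]; exact finiteDimensional_vectorSpan_of_finite ℝ A.finite_toSet
  haveI : FiniteDimensional ℝ (affineSpan ℝ (B : Set E)).direction := by
    rw [direction_affineSpan]; exact finiteDimensional_vectorSpan_of_finite ℝ B.finite_toSet
  have hinf : (affineSpan ℝ (A : Set E)).direction ⊓ (affineSpan ℝ (B : Set E)).direction = ⊥ := by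
    have h := Submodule.finrank_sup_add_finrank_inf_eq
      (affineSpan ℝ (A : Set E)).direction (affineSpan ℝ (B : Set E)).direction
    rw [hdim', hrA, hrB] at h
    have : Module.finrank ℝ
        ((affineSpan ℝ (A : Set E)).direction ⊓ (affineSpan ℝ (B : Set E)).direction :
          Submodule ℝ E) = 0 := by omega
    exact Submodule.finrank_eq_zero.mp this
  -- the affine spans meet exactly in p
  have hspan : (affineSpan ℝ (A : Set E) : Set E) ∩ (affineSpan ℝ (B : Set E) : Set E) = {p} := by
    apply Set.eq_singleton_iff_unique_mem.mpr
    refine ⟨⟨hpA', hpB'⟩, ?_⟩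
    rintro x ⟨hxA, hxB⟩
    have hv : x -ᵥ p ∈ (affineSpan ℝ (A : Set E)).direction ⊓
        (affineSpan ℝ (B : Set E)).direction :=
      ⟨AffineSubspace.vsub_mem_direction hxA hpA', AffineSubspace.vsub_mem_direction hxB hpB'⟩
    rw [hinf, Submodule.mem_bot, vsub_eq_sub, sub_eq_zero] at hv
    exact hv
  refine ⟨p, hspan, ?_⟩
  apply Set.eq_singleton_iff_unique_mem.mpr
  refine ⟨⟨hpA, hpB⟩, ?_⟩
  rintro x ⟨hxA, hxB⟩
  have : x ∈ ({p} : Set E) := hspan ▸ ⟨hmemA hxA, hmemA hxB⟩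
  exact this
end

section
/- Let G be a group of simplicial automorphisms of a finite simplicial complex X whose action is pure. Then the fibres of the induced quotient simplicial map q : X → X/G are exactly the G-orbits on the simplices of X; that is, if q(α) = q(α') for faces α, α' of X, then α' = g(α) for some g ∈ G. -/
open scoped Classical

/-- `u` and `v` lie in a common orbit of the group `G` of permutations of the vertices. -/
def SameOrbit {V : Type*} (G : Subgroup (Equiv.Perm V)) (u v : V) : Prop :=
  ∃ g ∈ G, g u = v

/-- The action of `G` on the simplicial complex `X` (given by its set of faces) is pure:
(a) distinct vertices in a common `G`-orbit are never adjacent; (b) for each `G`-orbit and each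
face `α`, the stabiliser of `α` acts transitively on the orbit's vertices in the link of `α`. -/
def IsPureAction {V : Type*} [DecidableEq V] (G : Subgroup (Equiv.Perm V))
    (X : Set (Finset V)) : Prop :=
  (∀ u v : V, u ≠ v → SameOrbit G u v → ({u, v} : Finset V) ∉ X) ∧
  (∀ α ∈ X, ∀ u v : V, SameOrbit G u v →
    u ∉ α → insert u α ∈ X → v ∉ α → insert v α ∈ X →
    ∃ g ∈ G, α.image g = α ∧ g u = v)

/-- If a group `G` of simplicial automorphisms of a finite simplicial complex `X` acts purely,
then the fibres of the induced quotient simplicial map are exactly the `G`-orbits on faces: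
two faces with the same image in the vertex quotient differ by an element of `G`. -/
theorem pure_action_fibres_eq_orbits {V : Type*} [Fintype V] [DecidableEq V]
    (G : Subgroup (Equiv.Perm V)) (X : Set (Finset V))
    (hdown : ∀ s ∈ X, ∀ t ⊆ s, t ∈ X)
    (hinv : ∀ g ∈ G, ∀ s ∈ X, s.image g ∈ X)
    (hpure : IsPureAction G X) :
    ∀ α ∈ X, ∀ β ∈ X,
      α.image (Quot.mk (SameOrbit G)) = β.image (Quot.mk (SameOrbit G)) →
      ∃ g ∈ G, α.image g = β := by
  have hequiv : Equivalence (SameOrbit G) := by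
    constructor
    · intro x; exact ⟨1, G.one_mem, rfl⟩
    · rintro x y ⟨g, hg, rfl⟩
      exact ⟨g⁻¹, G.inv_mem hg, Equiv.symm_apply_apply g x⟩
    · rintro x y z ⟨g, hg, rfl⟩ ⟨h, hh, rfl⟩
      exact ⟨h * g, G.mul_mem hh hg, rfl⟩
  have hmk : ∀ u v : V, Quot.mk (SameOrbit G) u = Quot.mk (SameOrbit G) v ↔ SameOrbit G u v :=
    fun u v => Quot.eq.trans hequiv.eqvGen_iff
  have hinj : ∀ α ∈ X, ∀ u ∈ α, ∀ v ∈ α, SameOrbit G u v → u = v := by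
    intro α hα u hu v hv huv
    by_contra hne
    refine hpure.1 u v hne huv (hdown α hα {u, v} ?_)
    intro x hx
    simp only [Finset.mem_insert, Finset.mem_singleton] at hx
    rcases hx with rfl | rfl <;> assumption
  intro α hα β hβ him
  suffices h : ∀ n : ℕ, ∀ α ∈ X, (β \ α).card = n →
      α.image (Quot.mk (SameOrbit G)) = β.image (Quot.mk (SameOrbit G)) →
      ∃ g ∈ G, α.image g = β from h _ α hα rfl him
  clear hα him
  intro n
  induction n using Nat.strong_induction_on with
  | _ n ih =>
    intro α hα hn him
    have hcard : α.card = β.card := by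
      rw [← Finset.card_image_of_injOn
            (fun u hu v hv h => hinj α hα u hu v hv ((hmk u v).1 h)), him,
          Finset.card_image_of_injOn
            (fun u hu v hv h => hinj β hβ u hu v hv ((hmk u v).1 h))]
    by_cases hsub : β ⊆ α
    · have heq : α = β := (Finset.eq_of_subset_of_card_le hsub hcard.le).symm
      exact ⟨1, G.one_mem, by simp [heq]⟩
    · obtain ⟨v, hvβ, hvα⟩ := Finset.not_subset.mp hsub
      have hvmem : Quot.mk (SameOrbit G) v ∈ α.image (Quot.mk (SameOrbit G)) := by
        rw [him]; exact Finset.mem_image_of_mem _ hvβ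
      obtain ⟨u, huα, hquv⟩ := Finset.mem_image.mp hvmem
      have huv : SameOrbit G u v := (hmk u v).1 hquv
      set γ := α ∩ β with hγdef
      have hγX : γ ∈ X := hdown α hα γ Finset.inter_subset_left
      have huγ : u ∉ γ := by
        intro h
        have huβ : u ∈ β := (Finset.mem_inter.mp h).2
        exact hvα (hinj β hβ u huβ v hvβ huv ▸ huα)
      have hvγ : v ∉ γ := fun h => hvα (Finset.mem_inter.mp h).1
      have h1 : insert u γ ∈ X :=
        hdown α hα _ (Finset.insert_subset huα Finset.inter_subset_left)
      have h2 : insert v γ ∈ X :=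
        hdown β hβ _ (Finset.insert_subset hvβ Finset.inter_subset_right)
      obtain ⟨g, hg, hgγ, hgu⟩ := hpure.2 γ hγX u v huv huγ h1 hvγ h2
      set α' := α.image g with hα'def
      have hα'X : α' ∈ X := hinv g hg α hα
      have hγα' : γ ⊆ α' := by
        rw [← hgγ]; exact Finset.image_subset_image Finset.inter_subset_left
      have hvα' : v ∈ α' := hgu ▸ Finset.mem_image_of_mem _ huα
      have him' : α'.image (Quot.mk (SameOrbit G)) = β.image (Quot.mk (SameOrbit G)) := by
        rw [← him, hα'def, Finset.image_image]
        refine Finset.image_congr ?_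
        intro x hx
        exact ((hmk (g x) x).2 ⟨g⁻¹, G.inv_mem hg, Equiv.symm_apply_apply g x⟩)
      have hsubd : β \ α' ⊆ (β \ α).erase v := by
        intro x hx
        obtain ⟨hxβ, hxα'⟩ := Finset.mem_sdiff.mp hx
        have hxα : x ∉ α := fun hxα => hxα' (hγα' (Finset.mem_inter.mpr ⟨hxα, hxβ⟩))
        exact Finset.mem_erase.mpr ⟨fun h => hxα' (h ▸ hvα'), Finset.mem_sdiff.mpr ⟨hxβ, hxα⟩⟩
      have hlt : (β \ α').card < n := by
        have h1 : (β \ α').card ≤ ((β \ α).erase v).card := Finset.card_le_card hsubd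
        have h2 : ((β \ α).erase v).card < (β \ α).card :=
          Finset.card_erase_lt_of_mem (Finset.mem_sdiff.mpr ⟨hvβ, hvα⟩)
        omega
      obtain ⟨h, hh, hhβ⟩ := ih _ hlt α' hα'X rfl him'
      refine ⟨h * g, G.mul_mem hh hg, ?_⟩
      rw [← hhβ, hα'def, Finset.image_image]
      rfl
end

section
/- If a group G of simplicial automorphisms of a finite simplicial complex X acts goodly, then the action is pure. -/
/-- The action of `G` on the simplicial complex `X` is good: for any two distinct vertices
`u ≠ v` in a common `G`-orbit, `uv` is a non-edge and some `g ∈ G` maps `u` to `v` while fixing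
every vertex in `lk(u) ∩ lk(v)`. -/
def IsGoodAction {V : Type*} [DecidableEq V] (G : Subgroup (Equiv.Perm V))
    (X : Set (Finset V)) : Prop :=
  ∀ u v : V, u ≠ v → SameOrbit G u v →
    ({u, v} : Finset V) ∉ X ∧
    ∃ g ∈ G, g u = v ∧
      ∀ w : V, ({u, w} : Finset V) ∈ X → ({v, w} : Finset V) ∈ X → g w = w

/-- A good action of a group of simplicial automorphisms on a finite simplicial complex is
pure. -/
theorem good_action_is_pure {V : Type*} [Fintype V] [DecidableEq V]
    (G : Subgroup (Equiv.Perm V)) (X : Set (Finset V))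
    (hdown : ∀ s ∈ X, ∀ t ⊆ s, t ∈ X)
    (hinv : ∀ g ∈ G, ∀ s ∈ X, s.image g ∈ X)
    (hgood : IsGoodAction G X) :
    IsPureAction G X := by
  constructor
  · intro u v huv hso
    exact (hgood u v huv hso).1
  · intro α hα u v hso hu hαu hv hαv
    by_cases huv : u = v
    · refine ⟨1, G.one_mem, ?_, by simp [huv]⟩
      simp
    · obtain ⟨-, g, hg, hgu, hfix⟩ := hgood u v huv hso
      have hαfix : ∀ w ∈ α, g w = w := by
        intro w hw
        refine hfix w (hdown _ hαu _ ?_) (hdown _ hαv _ ?_) <;>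
        · intro x hx
          simp only [Finset.mem_insert] at hx ⊢
          rcases hx with h | h
          · simp [h]
          · simp only [Finset.mem_singleton] at h
            exact Or.inr (h ▸ hw)
      refine ⟨g, hg, ?_, hgu⟩
      ext x
      simp only [Finset.mem_image]
      constructor
      · rintro ⟨w, hw, rfl⟩
        rwa [hαfix w hw]
      · intro hx
        exact ⟨x, hx, hαfix x hx⟩
end

section
/- Let X be a simplicial complex all of whose maximal faces are d-dimensional, let A be a (d−i)-face whose link in X is the standard (i−1)-sphere ∂B̄ for some set B with B ∉ X. Then the complex X̂ = (X \ (Ā ∗ ∂B̄)) ∪ (∂Ā ∗ B̄) obtained by the bistellar i-move has geometric carrier homeomorphic to that of X. -/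
open scoped Classical

/-- The geometric carrier of an abstract simplicial complex with vertex set `V`, in the
standard realization sending the vertex `v` to the basis point `e_v` of `V → ℝ`. -/
def carrier {V : Type*} [DecidableEq V] (Y : Set (Finset V)) : Set (V → ℝ) :=
  ⋃ s ∈ Y, convexHull ℝ ((s.image fun v => (Pi.single v 1 : V → ℝ)) : Set (V → ℝ))

lemma mem_face_iff {V : Type*} [Fintype V] [DecidableEq V] (s : Finset V) (x : V → ℝ) :
    x ∈ convexHull ℝ ((s.image fun v => (Pi.single v 1 : V → ℝ)) : Set (V → ℝ)) ↔
      (∀ v, 0 ≤ x v) ∧ (∀ v ∉ s, x v = 0) ∧ ∑ v, x v = 1 := by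
  constructor
  · intro hx
    suffices h : convexHull ℝ ((s.image fun v => (Pi.single v 1 : V → ℝ)) : Set (V → ℝ)) ⊆
        {y : V → ℝ | (∀ v, 0 ≤ y v) ∧ (∀ v ∉ s, y v = 0) ∧ ∑ v, y v = 1} from h hx
    refine convexHull_min ?_ ?_
    · intro p hp
      simp only [Finset.coe_image, Set.mem_image, Finset.mem_coe] at hp
      obtain ⟨v, hv, rfl⟩ := hp
      refine ⟨fun u => ?_, fun u hu => ?_, ?_⟩
      · simp [Pi.single_apply]; positivity
      · simp [Pi.single_apply]; intro h; exact absurd (h ▸ hv) hu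
      · simp [Pi.single_apply]
    · intro x hx y hy a b ha hb hab
      refine ⟨fun v => ?_, fun v hv => ?_, ?_⟩
      · have := hx.1 v; have := hy.1 v
        simp only [Pi.add_apply, Pi.smul_apply, smul_eq_mul]
        positivity
      · simp only [Pi.add_apply, Pi.smul_apply, smul_eq_mul, hx.2.1 v hv, hy.2.1 v hv,
          mul_zero, add_zero]
      · simp only [Pi.add_apply, Pi.smul_apply, smul_eq_mul, Finset.sum_add_distrib,
          ← Finset.mul_sum, hx.2.2, hy.2.2, mul_one, hab]
  · rintro ⟨h0, hsupp, hsum⟩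
    have hws : ∑ v ∈ s, x v = 1 := by
      rw [← hsum]
      exact Finset.sum_subset (Finset.subset_univ s) (fun v _ hv => hsupp v hv)
    have hx : x = s.centerMass x (fun v => (Pi.single v 1 : V → ℝ)) := by
      rw [Finset.centerMass_eq_of_sum_1 _ _ hws]
      funext u
      simp only [Finset.sum_apply, Pi.smul_apply, Pi.single_apply, smul_eq_mul, mul_ite,
        mul_one, mul_zero]
      by_cases hu : u ∈ s
      · simp [Finset.sum_ite_eq, hu]
      · simp [Finset.sum_ite_eq, hu, hsupp u hu]
    rw [hx]
    refine Finset.centerMass_mem_convexHull s (fun v _ => h0 v) (by rw [hws]; norm_num) ?_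
    intro v hv
    simp only [Finset.coe_image, Set.mem_image, Finset.mem_coe]
    exact ⟨v, hv, rfl⟩

lemma mem_carrier_iff {V : Type*} [Fintype V] [DecidableEq V] (Y : Set (Finset V)) (x : V → ℝ) :
    x ∈ carrier Y ↔ ∃ s ∈ Y, (∀ v, 0 ≤ x v) ∧ (∀ v ∉ s, x v = 0) ∧ ∑ v, x v = 1 := by
  simp only [carrier, Set.mem_iUnion₂, exists_prop]
  refine exists_congr fun s => and_congr Iff.rfl ?_
  convert mem_face_iff s x using 5

lemma inf'_add_const {ι : Type*} (s : Finset ι) (hs : s.Nonempty) (f : ι → ℝ) (c : ℝ) :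
    s.inf' hs (fun i => f i + c) = s.inf' hs f + c := by
  apply le_antisymm
  · obtain ⟨i, hi, hie⟩ := Finset.exists_mem_eq_inf' hs f
    calc s.inf' hs (fun i => f i + c) ≤ f i + c := Finset.inf'_le _ hi
    _ = _ := by rw [hie]
  · obtain ⟨j, hj, hje⟩ := Finset.exists_mem_eq_inf' hs (fun i => f i + c)
    rw [hje]
    exact by linarith [Finset.inf'_le f hj]

lemma continuous_finset_inf' {ι V : Type*} [Fintype V] (s : Finset ι) (hs : s.Nonempty)
    (g : ι → V) : Continuous fun x : V → ℝ => s.inf' hs (fun i => x (g i)) := by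
  induction hs using Finset.Nonempty.cons_induction with
  | singleton i => simpa using continuous_apply (g i)
  | cons i s hi hs ih =>
      have : ∀ x : V → ℝ, (Finset.cons i s hi).inf' (Finset.cons_nonempty hi)
          (fun j => x (g j)) = min (x (g i)) (s.inf' hs fun j => x (g j)) := by
        intro x
        rw [Finset.inf'_cons (H := hs)]
      simp only [this]
      exact Continuous.min (continuous_apply (g i)) ih



/-- Bistellar moves preserve the topological type: let `X` be a simplicial complex all of whose
maximal faces are `d`-dimensional, `A` a `(d−i)`-face whose link is the boundary `∂B̄` of a
simplex on an `(i+1)`-set `B` with `B ∉ X`.  Then the complex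
`X̂ = (X \ (Ā ∗ ∂B̄)) ∪ (∂Ā ∗ B̄)` obtained by the bistellar `i`-move has geometric carrier
homeomorphic to that of `X`. -/
theorem bistellar_move_homeomorph {V : Type*} [Fintype V] [DecidableEq V]
    (d i : ℕ) (hi : i ≤ d) (X : Set (Finset V))
    (hdown : ∀ s ∈ X, ∀ t ⊆ s, t ∈ X)
    (hpure : ∀ s ∈ X, ∃ t ∈ X, s ⊆ t ∧ t.card = d + 1)
    (A B : Finset V) (hA : A ∈ X)
    (hAcard : A.card = d - i + 1) (hBcard : B.card = i + 1) (hB : B ∉ X)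
    (hlink : {τ : Finset V | τ ∩ A = ∅ ∧ τ ∪ A ∈ X} = {τ : Finset V | τ ⊂ B}) :
    Nonempty
      ((carrier X : Set (V → ℝ)) ≃ₜ
        (carrier ((X \ {s | ∃ a b, a ⊆ A ∧ b ⊂ B ∧ s = a ∪ b}) ∪
          {s | ∃ a b, a ⊂ A ∧ b ⊆ B ∧ s = a ∪ b}) : Set (V → ℝ))) := by
  have hAne : A.Nonempty := by rw [← Finset.card_pos, hAcard]; omega
  have hBne : B.Nonempty := by rw [← Finset.card_pos, hBcard]; omega
  have hAc0 : (A.card : ℝ) ≠ 0 := by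
    have : A.card ≠ 0 := by rw [hAcard]; omega
    exact_mod_cast this
  have hBc0 : (B.card : ℝ) ≠ 0 := by
    have : B.card ≠ 0 := by rw [hBcard]; omega
    exact_mod_cast this
  have hlinkfwd : ∀ τ : Finset V, τ ∩ A = ∅ → τ ∪ A ∈ X → τ ⊂ B := fun τ h1 h2 =>
    (Set.ext_iff.mp hlink τ).mp ⟨h1, h2⟩
  have hlinkbwd : ∀ τ : Finset V, τ ⊂ B → τ ∪ A ∈ X := fun τ h =>
    ((Set.ext_iff.mp hlink τ).mpr h).2
  have hdisj : Disjoint A B := by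
    rw [Finset.disjoint_left]
    intro v hvA hvB
    by_cases hBv : {v} = B
    · exact hB (hdown A hA B (hBv ▸ Finset.singleton_subset_iff.mpr hvA))
    · have h1 : ({v} : Finset V) ⊂ B :=
        Finset.ssubset_iff_subset_ne.mpr ⟨Finset.singleton_subset_iff.mpr hvB, hBv⟩
      have h2 := ((Set.ext_iff.mp hlink {v}).mpr h1).1
      have h3 : v ∈ ({v} : Finset V) ∩ A :=
        Finset.mem_inter.mpr ⟨Finset.mem_singleton_self v, hvA⟩
      rw [h2] at h3
      exact absurd h3 (Finset.notMem_empty v)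
  have K1 : ∀ s ∈ X, A ⊆ s → s ⊆ A ∪ B := by
    intro s hs hAs
    have h1 : (s \ A) ∩ A = ∅ := Finset.sdiff_inter_self A s
    have h2 : (s \ A) ∪ A = s := Finset.sdiff_union_of_subset hAs
    have h3 := hlinkfwd (s \ A) h1 (by rw [h2]; exact hs)
    intro v hv
    by_cases hvA : v ∈ A
    · exact Finset.mem_union_left _ hvA
    · exact Finset.mem_union_right _ (h3.1 (Finset.mem_sdiff.mpr ⟨hv, hvA⟩))
  have K2 : ∀ a b : Finset V, a ⊆ A → b ⊂ B → a ∪ b ∈ X := by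
    intro a b ha hb
    refine hdown _ (hlinkbwd b hb) _ ?_
    exact Finset.union_subset (ha.trans Finset.subset_union_right) Finset.subset_union_left
  -- definitions
  set Rem : Set (Finset V) := {s | ∃ a b, a ⊆ A ∧ b ⊂ B ∧ s = a ∪ b} with hRem
  set Add : Set (Finset V) := {s | ∃ a b, a ⊂ A ∧ b ⊆ B ∧ s = a ∪ b} with hAdd
  set c₁ : ℝ := (A.card : ℝ) / (B.card : ℝ) with hc₁def
  set c₂ : ℝ := (B.card : ℝ) / (A.card : ℝ) with hc₂def
  have hc₁₂ : c₁ * c₂ = 1 := by rw [hc₁def, hc₂def]; field_simp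
  have hc₁0 : 0 ≤ c₁ := by rw [hc₁def]; positivity
  have hc₂0 : 0 ≤ c₂ := by rw [hc₂def]; positivity
  set f₁ : V → ℝ := fun v => if v ∈ A then (-1 : ℝ) else if v ∈ B then c₁ else 0 with hf₁def
  set f₂ : V → ℝ := fun v => if v ∈ A then c₂ else if v ∈ B then (-1 : ℝ) else 0 with hf₂def
  have hf₁A : ∀ v ∈ A, f₁ v = -1 := fun v hv => by simp only [hf₁def, if_pos hv]
  have hf₁B : ∀ v ∈ B, f₁ v = c₁ := fun v hv => by
    have hvA : v ∉ A := Finset.disjoint_right.mp hdisj hv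
    simp only [hf₁def, if_neg hvA, if_pos hv]
  have hf₁0 : ∀ v, v ∉ A → v ∉ B → f₁ v = 0 := fun v h1 h2 => by
    simp only [hf₁def, if_neg h1, if_neg h2]
  have hf₂A : ∀ v ∈ A, f₂ v = c₂ := fun v hv => by simp only [hf₂def, if_pos hv]
  have hf₂B : ∀ v ∈ B, f₂ v = -1 := fun v hv => by
    have hvA : v ∉ A := Finset.disjoint_right.mp hdisj hv
    simp only [hf₂def, if_neg hvA, if_pos hv]
  have hf₂0 : ∀ v, v ∉ A → v ∉ B → f₂ v = 0 := fun v h1 h2 => by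
    simp only [hf₂def, if_neg h1, if_neg h2]
  have hsum_aux : ∀ f : V → ℝ, (∀ v, v ∉ A → v ∉ B → f v = 0) →
      ∑ v, f v = ∑ v ∈ A, f v + ∑ v ∈ B, f v := by
    intro f hf
    rw [← Finset.sum_union hdisj]
    refine (Finset.sum_subset (Finset.subset_univ _) ?_).symm
    intro v _ hv
    exact hf v (fun h => hv (Finset.mem_union_left _ h)) (fun h => hv (Finset.mem_union_right _ h))
  have hsumf₁ : ∑ v, f₁ v = 0 := by
    rw [hsum_aux f₁ hf₁0, Finset.sum_congr rfl hf₁A, Finset.sum_congr rfl hf₁B,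
      Finset.sum_const, Finset.sum_const, nsmul_eq_mul, nsmul_eq_mul, hc₁def]
    field_simp
    ring
  have hsumf₂ : ∑ v, f₂ v = 0 := by
    rw [hsum_aux f₂ hf₂0, Finset.sum_congr rfl hf₂A, Finset.sum_congr rfl hf₂B,
      Finset.sum_const, Finset.sum_const, nsmul_eq_mul, nsmul_eq_mul, hc₂def]
    field_simp
    ring
  set m₁ : (V → ℝ) → ℝ := fun x => A.inf' hAne x with hm₁def
  set m₂ : (V → ℝ) → ℝ := fun x => B.inf' hBne x with hm₂def
  set Φ : (V → ℝ) → V → ℝ := fun x v => x v + m₁ x * f₁ v with hΦdef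
  set Ψ : (V → ℝ) → V → ℝ := fun x v => x v + m₂ x * f₂ v with hΨdef
  have hm₁cont : Continuous m₁ := by
    have := continuous_finset_inf' (V := V) A hAne id
    simpa [hm₁def] using this
  have hm₂cont : Continuous m₂ := by
    have := continuous_finset_inf' (V := V) B hBne id
    simpa [hm₂def] using this
  have hΦcont : Continuous Φ :=
    continuous_pi fun v => ((continuous_apply v).add (hm₁cont.mul continuous_const))
  have hΨcont : Continuous Ψ :=
    continuous_pi fun v => ((continuous_apply v).add (hm₂cont.mul continuous_const))
  have hm₁nonneg : ∀ x : V → ℝ, (∀ v, 0 ≤ x v) → 0 ≤ m₁ x := fun x hx =>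
    Finset.le_inf' hAne x (fun a _ => hx a)
  have hm₂nonneg : ∀ x : V → ℝ, (∀ v, 0 ≤ x v) → 0 ≤ m₂ x := fun x hx =>
    Finset.le_inf' hBne x (fun b _ => hx b)
  -- vanishing of the opposite min on each carrier
  have hm₂zero : ∀ s ∈ X, ∀ x : V → ℝ, (∀ v, 0 ≤ x v) → (∀ v ∉ s, x v = 0) → m₂ x = 0 := by
    intro s hs x h0 hsupp
    rcases eq_or_lt_of_le (hm₂nonneg x h0) with h | h
    · exact h.symm
    · exfalso
      have hBs : B ⊆ s := by
        intro b hb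
        by_contra hbs
        have h1 := hsupp b hbs
        have h2 := lt_of_lt_of_le h (Finset.inf'_le x hb)
        rw [h1] at h2
        exact lt_irrefl 0 h2
      exact hB (hdown s hs B hBs)
  have hm₁zero : ∀ s ∈ (X \ Rem) ∪ Add, ∀ x : V → ℝ,
      (∀ v, 0 ≤ x v) → (∀ v ∉ s, x v = 0) → m₁ x = 0 := by
    intro s hsY x h0 hsupp
    rcases eq_or_lt_of_le (hm₁nonneg x h0) with h | h
    · exact h.symm
    · exfalso
      have hAs : A ⊆ s := by
        intro a ha
        by_contra has
        have h1 := hsupp a has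
        have h2 := lt_of_lt_of_le h (Finset.inf'_le x ha)
        rw [h1] at h2
        exact lt_irrefl 0 h2
      rcases hsY with ⟨hsX, hsrem⟩ | ⟨a, b, haA, hbB, rfl⟩
      · have hsAB := K1 s hsX hAs
        apply hsrem
        refine ⟨A, s ∩ B, subset_rfl, ?_, ?_⟩
        · refine Finset.ssubset_iff_subset_ne.mpr ⟨Finset.inter_subset_right, fun hEq => ?_⟩
          have : B ⊆ s := by
            intro b hb
            rw [← hEq] at hb
            exact (Finset.mem_inter.mp hb).1
          exact hB (hdown s hsX B this)
        · ext v
          simp only [Finset.mem_union, Finset.mem_inter]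
          constructor
          · intro hv
            rcases Finset.mem_union.mp (hsAB hv) with h' | h'
            · exact Or.inl h'
            · exact Or.inr ⟨hv, h'⟩
          · rintro (h' | ⟨h', _⟩)
            · exact hAs h'
            · exact h'
      · have : A ⊆ a := by
          intro v hv
          rcases Finset.mem_union.mp (hAs hv) with h' | h'
          · exact h'
          · exact absurd (hbB h') (Finset.disjoint_left.mp hdisj hv)
        exact haA.2 this
  -- the forward map sends carrier X into the new carrier
  have hΦmem : ∀ x ∈ carrier X, Φ x ∈ carrier ((X \ Rem) ∪ Add) := by
    intro x hx
    rw [mem_carrier_iff] at hx ⊢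
    obtain ⟨s, hs, h0, hsupp, hsum⟩ := hx
    obtain ⟨a0, ha0, ha0e⟩ := Finset.exists_mem_eq_inf' hAne x
    rcases eq_or_lt_of_le (hm₁nonneg x h0) with hm | hm
    · -- min over A is zero, Φ is the identity here
      have hΦx : Φ x = x := by
        funext v
        simp only [hΦdef]
        rw [← hm]
        ring
      rw [hΦx]
      by_cases hsAB : s ⊆ A ∪ B
      · refine ⟨(s \ {a0}) ∩ A ∪ (s \ {a0}) ∩ B,
          Or.inr ⟨(s \ {a0}) ∩ A, (s \ {a0}) ∩ B, ?_, Finset.inter_subset_right, rfl⟩,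
          h0, ?_, hsum⟩
        · refine Finset.ssubset_iff_subset_ne.mpr ⟨Finset.inter_subset_right, fun hEq => ?_⟩
          have : a0 ∈ (s \ {a0}) ∩ A := by rw [hEq]; exact ha0
          simp at this
        · intro v hv
          by_cases hva : v = a0
          · rw [hva]
            have : m₁ x = x a0 := ha0e
            rw [← this, ← hm]
          · apply hsupp
            intro hvs
            apply hv
            have hv' : v ∈ s \ {a0} := Finset.mem_sdiff.mpr ⟨hvs, by simp [hva]⟩
            rcases Finset.mem_union.mp (hsAB hvs) with h' | h'
            · exact Finset.mem_union_left _ (Finset.mem_inter.mpr ⟨hv', h'⟩)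
            · exact Finset.mem_union_right _ (Finset.mem_inter.mpr ⟨hv', h'⟩)
      · refine ⟨s, Or.inl ⟨hs, ?_⟩, h0, hsupp, hsum⟩
        rintro ⟨a, b, haA, hbB, hse⟩
        exact hsAB (hse ▸ Finset.union_subset (haA.trans Finset.subset_union_left)
          ((hbB.subset).trans Finset.subset_union_right))
    · -- positive min : push across the simplex
      have hAs : A ⊆ s := by
        intro v hv
        by_contra hvs
        have h1 := hsupp v hvs
        have h2 := lt_of_lt_of_le hm (Finset.inf'_le x hv)
        rw [h1] at h2
        exact lt_irrefl 0 h2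
      have hsAB := K1 s hs hAs
      refine ⟨A.erase a0 ∪ B,
        Or.inr ⟨A.erase a0, B, Finset.erase_ssubset ha0, subset_rfl, rfl⟩, ?_, ?_, ?_⟩
      · intro v
        by_cases hvA : v ∈ A
        · have h1 : Φ x v = x v - m₁ x := by simp only [hΦdef]; rw [hf₁A v hvA]; ring
          rw [h1]
          have h2 : m₁ x ≤ x v := Finset.inf'_le x hvA
          linarith
        · by_cases hvB : v ∈ B
          · have : Φ x v = x v + m₁ x * c₁ := by simp only [hΦdef]; rw [hf₁B v hvB]
            rw [this]
            have := h0 v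
            have := mul_nonneg (le_of_lt hm) hc₁0
            linarith
          · have : Φ x v = x v := by simp only [hΦdef]; rw [hf₁0 v hvA hvB]; ring
            rw [this]; exact h0 v
      · intro v hv
        by_cases hvA : v ∈ A
        · have hva0 : v = a0 := by
            by_contra hne
            exact hv (Finset.mem_union_left _ (Finset.mem_erase.mpr ⟨hne, hvA⟩))
          rw [hva0, hΦdef]
          simp only [hf₁A a0 ha0]
          rw [← ha0e]
          ring
        · have hvB : v ∉ B := fun h => hv (Finset.mem_union_right _ h)
          rw [hΦdef]
          simp only [hf₁0 v hvA hvB, mul_zero, add_zero]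
          apply hsupp
          intro hvs
          rcases Finset.mem_union.mp (hsAB hvs) with h' | h'
          · exact hvA h'
          · exact hvB h'
      · have : ∑ v, Φ x v = ∑ v, x v + m₁ x * ∑ v, f₁ v := by
          rw [hΦdef]
          simp only
          rw [Finset.sum_add_distrib, ← Finset.mul_sum]
        rw [this, hsumf₁, hsum]
        ring
  -- the backward map sends the new carrier into carrier X
  have hΨmem : ∀ x ∈ carrier ((X \ Rem) ∪ Add), Ψ x ∈ carrier X := by
    intro x hx
    rw [mem_carrier_iff] at hx ⊢
    obtain ⟨s, hsY, h0, hsupp, hsum⟩ := hx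
    obtain ⟨b0, hb0, hb0e⟩ := Finset.exists_mem_eq_inf' hBne x
    rcases eq_or_lt_of_le (hm₂nonneg x h0) with hm | hm
    · have hΨx : Ψ x = x := by
        funext v
        simp only [hΨdef, hm₂def] at *
        rw [← hm]
        ring
      rw [hΨx]
      rcases hsY with ⟨hsX, _⟩ | ⟨a, b, haA, hbB, rfl⟩
      · exact ⟨s, hsX, h0, hsupp, hsum⟩
      · have hsAB : a ∪ b ⊆ A ∪ B :=
          Finset.union_subset ((haA.subset).trans Finset.subset_union_left)
            (hbB.trans Finset.subset_union_right)
        refine ⟨((a ∪ b) \ {b0}) ∩ A ∪ ((a ∪ b) \ {b0}) ∩ B,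
          K2 _ _ Finset.inter_subset_right ?_, h0, ?_, hsum⟩
        · refine Finset.ssubset_iff_subset_ne.mpr ⟨Finset.inter_subset_right, fun hEq => ?_⟩
          have : b0 ∈ ((a ∪ b) \ {b0}) ∩ B := by rw [hEq]; exact hb0
          simp at this
        · intro v hv
          by_cases hvb : v = b0
          · rw [hvb]
            have : m₂ x = x b0 := hb0e
            rw [← this, ← hm]
          · apply hsupp
            intro hvs
            apply hv
            have hv' : v ∈ (a ∪ b) \ {b0} := Finset.mem_sdiff.mpr ⟨hvs, by simp [hvb]⟩
            rcases Finset.mem_union.mp (hsAB hvs) with h' | h'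
            · exact Finset.mem_union_left _ (Finset.mem_inter.mpr ⟨hv', h'⟩)
            · exact Finset.mem_union_right _ (Finset.mem_inter.mpr ⟨hv', h'⟩)
    · have hBs : B ⊆ s := by
        intro v hv
        by_contra hvs
        have h1 := hsupp v hvs
        have h2 := lt_of_lt_of_le hm (Finset.inf'_le x hv)
        rw [h1] at h2
        exact lt_irrefl 0 h2
      rcases hsY with ⟨hsX, _⟩ | ⟨a, b, haA, hbB, rfl⟩
      · exact absurd (hdown s hsX B hBs) hB
      · have hsAB : a ∪ b ⊆ A ∪ B :=
          Finset.union_subset ((haA.subset).trans Finset.subset_union_left)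
            (hbB.trans Finset.subset_union_right)
        refine ⟨A ∪ B.erase b0, K2 A (B.erase b0) subset_rfl (Finset.erase_ssubset hb0),
          ?_, ?_, ?_⟩
        · intro v
          by_cases hvA : v ∈ A
          · have : Ψ x v = x v + m₂ x * c₂ := by simp only [hΨdef]; rw [hf₂A v hvA]
            rw [this]
            have := h0 v
            have := mul_nonneg (le_of_lt hm) hc₂0
            linarith
          · by_cases hvB : v ∈ B
            · have h1 : Ψ x v = x v - m₂ x := by simp only [hΨdef]; rw [hf₂B v hvB]; ring
              rw [h1]
              have h2 : m₂ x ≤ x v := Finset.inf'_le x hvB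
              linarith
            · have : Ψ x v = x v := by simp only [hΨdef]; rw [hf₂0 v hvA hvB]; ring
              rw [this]; exact h0 v
        · intro v hv
          by_cases hvB : v ∈ B
          · have hvb0 : v = b0 := by
              by_contra hne
              exact hv (Finset.mem_union_right _ (Finset.mem_erase.mpr ⟨hne, hvB⟩))
            have hvA : v ∉ A := Finset.disjoint_right.mp hdisj hvB
            rw [hvb0, hΨdef]
            simp only [hf₂B b0 hb0]
            rw [← hb0e]
            ring
          · have hvA : v ∉ A := fun h => hv (Finset.mem_union_left _ h)
            rw [hΨdef]
            simp only [hf₂0 v hvA hvB, mul_zero, add_zero]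
            apply hsupp
            intro hvs
            rcases Finset.mem_union.mp (hsAB hvs) with h' | h'
            · exact hvA h'
            · exact hvB h'
        · have : ∑ v, Ψ x v = ∑ v, x v + m₂ x * ∑ v, f₂ v := by
            rw [hΨdef]
            simp only
            rw [Finset.sum_add_distrib, ← Finset.mul_sum]
          rw [this, hsumf₂, hsum]
          ring
  -- left inverse
  have hΨΦ : ∀ x ∈ carrier X, Ψ (Φ x) = x := by
    intro x hx
    rw [mem_carrier_iff] at hx
    obtain ⟨s, hs, h0, hsupp, hsum⟩ := hx
    have hm2 : m₂ x = 0 := hm₂zero s hs x h0 hsupp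
    have hstep : m₂ (Φ x) = m₁ x * c₁ := by
      have hcong : B.inf' hBne (Φ x) = B.inf' hBne (fun b => x b + m₁ x * c₁) :=
        Finset.inf'_congr (H := hBne) rfl (fun b hb => by simp only [hΦdef]; rw [hf₁B b hb])
      simp only [hm₂def]
      rw [hcong, inf'_add_const B hBne x (m₁ x * c₁)]
      simp only [hm₂def] at hm2
      rw [hm2, zero_add]
    funext v
    by_cases hvA : v ∈ A
    · have h1 : Ψ (Φ x) v = Φ x v + m₂ (Φ x) * c₂ := by simp only [hΨdef]; rw [hf₂A v hvA]
      have h2 : Φ x v = x v - m₁ x := by simp only [hΦdef]; rw [hf₁A v hvA]; ring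
      rw [h1, h2, hstep]
      have : m₁ x * c₁ * c₂ = m₁ x := by
        rw [mul_assoc, hc₁₂, mul_one]
      linarith
    · by_cases hvB : v ∈ B
      · have h1 : Ψ (Φ x) v = Φ x v - m₂ (Φ x) := by simp only [hΨdef]; rw [hf₂B v hvB]; ring
        have h2 : Φ x v = x v + m₁ x * c₁ := by simp only [hΦdef]; rw [hf₁B v hvB]
        rw [h1, h2, hstep]
        ring
      · have h1 : Ψ (Φ x) v = Φ x v := by simp only [hΨdef]; rw [hf₂0 v hvA hvB]; ring
        have h2 : Φ x v = x v := by simp only [hΦdef]; rw [hf₁0 v hvA hvB]; ring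
        rw [h1, h2]
  -- right inverse
  have hΦΨ : ∀ x ∈ carrier ((X \ Rem) ∪ Add), Φ (Ψ x) = x := by
    intro x hx
    rw [mem_carrier_iff] at hx
    obtain ⟨s, hsY, h0, hsupp, hsum⟩ := hx
    have hm1 : m₁ x = 0 := hm₁zero s hsY x h0 hsupp
    have hstep : m₁ (Ψ x) = m₂ x * c₂ := by
      have hcong : A.inf' hAne (Ψ x) = A.inf' hAne (fun a => x a + m₂ x * c₂) :=
        Finset.inf'_congr (H := hAne) rfl (fun a ha => by simp only [hΨdef]; rw [hf₂A a ha])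
      simp only [hm₁def]
      rw [hcong, inf'_add_const A hAne x (m₂ x * c₂)]
      simp only [hm₁def] at hm1
      rw [hm1, zero_add]
    funext v
    by_cases hvA : v ∈ A
    · have h1 : Φ (Ψ x) v = Ψ x v - m₁ (Ψ x) := by simp only [hΦdef]; rw [hf₁A v hvA]; ring
      have h2 : Ψ x v = x v + m₂ x * c₂ := by simp only [hΨdef]; rw [hf₂A v hvA]
      rw [h1, h2, hstep]
      ring
    · by_cases hvB : v ∈ B
      · have h1 : Φ (Ψ x) v = Ψ x v + m₁ (Ψ x) * c₁ := by simp only [hΦdef]; rw [hf₁B v hvB]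
        have h2 : Ψ x v = x v - m₂ x := by simp only [hΨdef]; rw [hf₂B v hvB]; ring
        rw [h1, h2, hstep]
        have : m₂ x * c₂ * c₁ = m₂ x := by
          rw [mul_assoc, mul_comm c₂ c₁, hc₁₂, mul_one]
        linarith
      · have h1 : Φ (Ψ x) v = Ψ x v := by simp only [hΦdef]; rw [hf₁0 v hvA hvB]; ring
        have h2 : Ψ x v = x v := by simp only [hΨdef]; rw [hf₂0 v hvA hvB]; ring
        rw [h1, h2]
  exact ⟨{ toFun := fun p => ⟨Φ p.1, hΦmem p.1 p.2⟩
           invFun := fun p => ⟨Ψ p.1, hΨmem p.1 p.2⟩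
           left_inv := fun p => Subtype.ext (hΨΦ p.1 p.2)
           right_inv := fun p => Subtype.ext (hΦΨ p.1 p.2)
           continuous_toFun := (hΦcont.comp continuous_subtype_val).subtype_mk _
           continuous_invFun := (hΨcont.comp continuous_subtype_val).subtype_mk _ }⟩
end
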